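/- arXiv:2210.16576 — 15 statements merged into one kernel-verified Lean document; each statement's English description precedes it below -/
import Mathlib

section
/- Let M be an idempotent distributive ℓ-monoid with identity e. Then for all a, b ∈ M: (i) a ⊓ b ≤ a·b and a·b ≤ a ⊔ b; (ii) if e ≤ a·b then a·b = a ⊔ b; (iii) if a·b ≤ e then a·b = a ⊓ b. -/
/-- An idempotent distributive ℓ-monoid: for all `a b : M`,
`a ⊓ b ≤ a * b ≤ a ⊔ b`; if `1 ≤ a * b` then `a * b = a ⊔ b`;
if `a * b ≤ 1` then `a * b = a ⊓ b`. -/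
theorem stmt_0 {M : Type*} [Monoid M] [DistribLattice M]
    (hjoin : ∀ a b c d : M, a * (b ⊔ c) * d = a * b * d ⊔ a * c * d)
    (hmeet : ∀ a b c d : M, a * (b ⊓ c) * d = a * b * d ⊓ a * c * d)
    (hidem : ∀ a : M, a * a = a) :
    ∀ a b : M,
      (a ⊓ b ≤ a * b ∧ a * b ≤ a ⊔ b) ∧
      ((1 : M) ≤ a * b → a * b = a ⊔ b) ∧
      (a * b ≤ (1 : M) → a * b = a ⊓ b) := by
  -- multiplication is monotone
  have monoL : ∀ a x y : M, x ≤ y → a * x ≤ a * y := by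
    intro a x y h
    have := hjoin a x y 1
    rw [sup_eq_right.mpr h] at this
    simp only [mul_one] at this
    rw [this]; exact le_sup_left
  have monoR : ∀ x y d : M, x ≤ y → x * d ≤ y * d := by
    intro x y d h
    have := hjoin 1 x y d
    rw [sup_eq_right.mpr h] at this
    simp only [one_mul] at this
    rw [this]; exact le_sup_left
  intro a b
  have h1 : a * b ≤ a ⊔ b := by
    have : (a ⊔ b) * (a ⊔ b) = a ⊔ b := hidem _
    calc a * b ≤ (a ⊔ b) * b := monoR a (a ⊔ b) b le_sup_left
    _ ≤ (a ⊔ b) * (a ⊔ b) := monoL _ b (a ⊔ b) le_sup_right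
    _ = a ⊔ b := hidem _
  have h2 : a ⊓ b ≤ a * b := by
    calc a ⊓ b = (a ⊓ b) * (a ⊓ b) := (hidem _).symm
    _ ≤ a * (a ⊓ b) := monoR _ a _ inf_le_left
    _ ≤ a * b := monoL a _ b inf_le_right
  refine ⟨⟨h2, h1⟩, ?_, ?_⟩
  · intro h
    refine le_antisymm h1 (sup_le ?_ ?_)
    · calc a = a * 1 := (mul_one a).symm
      _ ≤ a * (a * b) := monoL a 1 (a * b) h
      _ = a * a * b := (mul_assoc a a b).symm
      _ = a * b := by rw [hidem]
    · calc b = 1 * b := (one_mul b).symm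
      _ ≤ a * b * b := monoR 1 (a * b) b h
      _ = a * (b * b) := mul_assoc a b b
      _ = a * b := by rw [hidem]
  · intro h
    refine le_antisymm (le_inf ?_ ?_) h2
    · calc a * b = a * a * b := by rw [hidem]
      _ = a * (a * b) := mul_assoc a a b
      _ ≤ a * 1 := monoL a (a * b) 1 h
      _ = a := mul_one a
    · calc a * b = a * (b * b) := by rw [hidem]
      _ = a * b * b := (mul_assoc a b b).symm
      _ ≤ 1 * b := monoR (a * b) 1 b h
      _ = b := one_mul b
end

section
/- Let M be a non-trivial (i.e., having at least two elements) idempotent linearly ordered monoid with a bottom element ⊥ and a top element ⊤. Then exactly one of the following holds: (1) for all a ∈ M, ⊥·a = a·⊥ = ⊥; (2) for all a ∈ M, ⊤·a = a·⊤ = ⊤; (3) for all a ∈ M \ {⊥, ⊤}, ⊥·a = a·⊥ = ⊥ and ⊤·a = a·⊤ = ⊤, and moreover ⊥·⊤ = ⊥ and ⊤·⊥ = ⊤; (4) for all a ∈ M \ {⊥, ⊤}, ⊥·a = a·⊥ = ⊥ and ⊤·a = a·⊤ = ⊤, and moreover ⊥·⊤ = ⊤ and ⊤·⊥ = ⊥.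 -/
section

variable {M : Type*} [Monoid M] [LinearOrder M]

/-- Case (1): the bottom element is absorbing. -/
def Case1 (bot top : M) : Prop := ∀ a : M, bot * a = bot ∧ a * bot = bot

/-- Case (2): the top element is absorbing. -/
def Case2 (bot top : M) : Prop := ∀ a : M, top * a = top ∧ a * top = top

/-- Case (3): `⊥` and `⊤` absorb all other elements, `⊥ * ⊤ = ⊥` and `⊤ * ⊥ = ⊤`. -/
def Case3 (bot top : M) : Prop :=
  (∀ a : M, a ≠ top → a ≠ bot →
      bot * a = bot ∧ a * bot = bot ∧ top * a = top ∧ a * top = top) ∧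
    bot * top = bot ∧ top * bot = top

/-- Case (4): `⊥` and `⊤` absorb all other elements, `⊥ * ⊤ = ⊤` and `⊤ * ⊥ = ⊥`. -/
def Case4 (bot top : M) : Prop :=
  (∀ a : M, a ≠ top → a ≠ bot →
      bot * a = bot ∧ a * bot = bot ∧ top * a = top ∧ a * top = top) ∧
    bot * top = top ∧ top * bot = bot

/-- In a non-trivial idempotent linearly ordered monoid with bottom and top,
exactly one of the four cases holds. -/
theorem stmt_2 (hmono : ∀ a b c d : M, a ≤ b → c * a * d ≤ c * b * d)
    (hidem : ∀ a : M, a * a = a) (hnt : Nontrivial M)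
    (bot top : M) (hbot : ∀ a : M, bot ≤ a) (htop : ∀ a : M, a ≤ top) :
    (Case1 bot top ∧ ¬ Case2 bot top ∧ ¬ Case3 bot top ∧ ¬ Case4 bot top) ∨
    (¬ Case1 bot top ∧ Case2 bot top ∧ ¬ Case3 bot top ∧ ¬ Case4 bot top) ∨
    (¬ Case1 bot top ∧ ¬ Case2 bot top ∧ Case3 bot top ∧ ¬ Case4 bot top) ∨
    (¬ Case1 bot top ∧ ¬ Case2 bot top ∧ ¬ Case3 bot top ∧ Case4 bot top) := by
  have hml : ∀ a b c : M, a ≤ b → c * a ≤ c * b := by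
    intro a b c h
    have := hmono a b c 1 h
    simpa using this
  have hmr : ∀ a b c : M, a ≤ b → a * c ≤ b * c := by
    intro a b c h
    have := hmono a b 1 c h
    simpa using this
  have hbt : bot ≠ top := by
    obtain ⟨x, y, hxy⟩ := hnt
    intro h
    apply hxy
    have hx : x = top := le_antisymm (htop x) (h ▸ hbot x)
    have hy : y = top := le_antisymm (htop y) (h ▸ hbot y)
    rw [hx, hy]
  have hu : bot * top = bot ∨ bot * top = top := by
    rcases le_total (bot * top) 1 with h | h
    · left
      refine le_antisymm ?_ (hbot _)
      calc bot * top = bot * (bot * top) := by rw [← mul_assoc, hidem]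
        _ ≤ bot * 1 := hml _ _ _ h
        _ = bot := mul_one bot
    · right
      refine le_antisymm (htop _) ?_
      calc top = 1 * top := (one_mul top).symm
        _ ≤ (bot * top) * top := hmr _ _ _ h
        _ = bot * top := by rw [mul_assoc, hidem]
  have ht : top * bot = bot ∨ top * bot = top := by
    rcases le_total (top * bot) 1 with h | h
    · left
      refine le_antisymm ?_ (hbot _)
      calc top * bot = (top * bot) * bot := by rw [mul_assoc, hidem]
        _ ≤ 1 * bot := hmr _ _ _ h
        _ = bot := one_mul bot
    · right
      refine le_antisymm (htop _) ?_
      calc top = top * 1 := (mul_one top).symm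
        _ ≤ top * (top * bot) := hml _ _ _ h
        _ = top * bot := by rw [← mul_assoc, hidem]
  rcases hu with hu | hu <;> rcases ht with ht | ht
  · -- bot*top = bot, top*bot = bot : Case1
    left
    refine ⟨?_, ?_, ?_, ?_⟩
    · intro a
      constructor
      · exact le_antisymm ((hml a top bot (htop a)).trans_eq hu) (hbot _)
      · exact le_antisymm ((hmr a top bot (htop a)).trans_eq ht) (hbot _)
    · intro h; exact hbt (ht.symm.trans (h bot).1)
    · intro h; exact hbt (ht.symm.trans h.2.2)
    · intro h; exact hbt (hu.symm.trans h.2.1)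
  · -- bot*top = bot, top*bot = top : Case3
    right; right; left
    have habot : ∀ a : M, a ≠ top → a * bot = bot := by
      intro a hne
      rcases le_total (a * bot) 1 with h | h
      · refine le_antisymm ?_ (hbot _)
        calc a * bot = (a * bot) * bot := by rw [mul_assoc, hidem]
          _ ≤ 1 * bot := hmr _ _ _ h
          _ = bot := one_mul bot
      · exfalso
        have h1 : top ≤ a * bot := by
          calc top = 1 * top := (one_mul top).symm
            _ ≤ (a * bot) * top := hmr _ _ _ h
            _ = a * bot := by rw [mul_assoc, hu]
        have h2 : a * bot ≤ a := by
          calc a * bot ≤ a * 1 := hml _ _ _ (hbot 1)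
            _ = a := mul_one a
        exact hne (le_antisymm (htop a) (h1.trans h2))
    have hatop : ∀ a : M, a ≠ bot → a * top = top := by
      intro a hne
      rcases le_total (a * top) 1 with h | h
      · exfalso
        have h1 : a * top ≤ bot := by
          calc a * top = (a * top) * bot := by rw [mul_assoc, ht]
            _ ≤ 1 * bot := hmr _ _ _ h
            _ = bot := one_mul bot
        have h2 : a ≤ a * top := by
          calc a = a * 1 := (mul_one a).symm
            _ ≤ a * top := hml _ _ _ (htop 1)
        exact hne (le_antisymm (h2.trans h1) (hbot a))
      · refine le_antisymm (htop _) ?_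
        calc top = 1 * top := (one_mul top).symm
          _ ≤ (a * top) * top := hmr _ _ _ h
          _ = a * top := by rw [mul_assoc, hidem]
    refine ⟨?_, ?_, ⟨fun a hat hab => ?_, hu, ht⟩, ?_⟩
    · intro h; exact hbt ((h top).2.symm.trans ht)
    · intro h; exact hbt (hu.symm.trans (h bot).2)
    · refine ⟨le_antisymm ((hml a top bot (htop a)).trans_eq hu) (hbot _),
        habot a hat, le_antisymm (htop _) ?_, hatop a hab⟩
      calc top = top * bot := ht.symm
        _ ≤ top * a := hml _ _ _ (hbot a)
    · intro h; exact hbt (hu.symm.trans h.2.1)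
  · -- bot*top = top, top*bot = bot : Case4
    right; right; right
    have hbota : ∀ a : M, a ≠ top → bot * a = bot := by
      intro a hne
      rcases le_total (bot * a) 1 with h | h
      · refine le_antisymm ?_ (hbot _)
        calc bot * a = bot * (bot * a) := by rw [← mul_assoc, hidem]
          _ ≤ bot * 1 := hml _ _ _ h
          _ = bot := mul_one bot
      · exfalso
        have h1 : top ≤ bot * a := by
          calc top = top * 1 := (mul_one top).symm
            _ ≤ top * (bot * a) := hml _ _ _ h
            _ = bot * a := by rw [← mul_assoc, ht]
        have h2 : bot * a ≤ a := by
          calc bot * a ≤ 1 * a := hmr _ _ _ (hbot 1)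
            _ = a := one_mul a
        exact hne (le_antisymm (htop a) (h1.trans h2))
    have htopa : ∀ a : M, a ≠ bot → top * a = top := by
      intro a hne
      have hy : bot * (top * a) = top * a := by rw [← mul_assoc, hu]
      have hya : a ≤ top * a := by
        calc a = 1 * a := (one_mul a).symm
          _ ≤ top * a := hmr _ _ _ (htop 1)
      rcases eq_or_ne (top * a) top with h | h
      · exact h
      · exfalso
        have : top * a = bot := hy ▸ hbota (top * a) h
        exact hne (le_antisymm (this ▸ hya) (hbot a))
    refine ⟨?_, ?_, ?_, fun a hat hab => ?_, hu, ht⟩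
    · intro h; exact hbt ((h top).1.symm.trans hu)
    · intro h; exact hbt (ht.symm.trans (h bot).1)
    · intro h; exact hbt (h.2.1.symm.trans hu)
    · refine ⟨hbota a hat, le_antisymm ((hmr a top bot (htop a)).trans_eq ht) (hbot _),
        htopa a hab, le_antisymm (htop _) ?_⟩
      calc top = bot * top := hu.symm
        _ ≤ a * top := hmr _ _ _ (hbot a)
  · -- bot*top = top, top*bot = top : Case2
    right; left
    refine ⟨?_, ?_, ?_, ?_⟩
    · intro h; exact hbt ((h top).1.symm.trans hu)
    · intro a
      constructor
      · refine le_antisymm (htop _) ?_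
        calc top = top * bot := ht.symm
          _ ≤ top * a := hml _ _ _ (hbot a)
      · refine le_antisymm (htop _) ?_
        calc top = bot * top := hu.symm
          _ ≤ a * top := hmr _ _ _ (hbot a)
    · intro h; exact hbt (h.2.1.symm.trans hu)
    · intro h; exact hbt (h.2.2.symm.trans ht)
end
end

section
/- Let M be an idempotent linearly ordered monoid with identity e, and let a, b ∈ M be two distinct elements. Then the following are equivalent: (1) a·b·a = a and b·a·b = b; (2) a·b ≠ b·a; (3) (a < e < b or b < e < a) and either (a·b = a and b·a = b) or (a·b = b and b·a = a) (i.e., the submonoid {e, a, b} is isomorphic to G₃ or D₃). -/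
private lemma low_mul {M : Type*} [Monoid M] [LinearOrder M]
    (hmono : ∀ a b c d : M, a ≤ b → c * a * d ≤ c * b * d)
    (hidem : ∀ a : M, a * a = a) {x y : M} (hx : x ≤ 1) (hy : y ≤ 1) :
    x * y = min x y := by
  rcases le_total x y with h | h
  · rw [min_eq_left h]
    refine le_antisymm ?_ ?_
    · have := hmono y 1 x 1 hy; simpa using this
    · have := hmono x y x 1 h; simpa [hidem] using this
  · rw [min_eq_right h]
    refine le_antisymm ?_ ?_
    · have := hmono x 1 1 y hx; simpa using this
    · have := hmono y x 1 y h; simpa [hidem] using this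

private lemma high_mul {M : Type*} [Monoid M] [LinearOrder M]
    (hmono : ∀ a b c d : M, a ≤ b → c * a * d ≤ c * b * d)
    (hidem : ∀ a : M, a * a = a) {x y : M} (hx : 1 ≤ x) (hy : 1 ≤ y) :
    x * y = max x y := by
  rcases le_total x y with h | h
  · rw [max_eq_right h]
    refine le_antisymm ?_ ?_
    · have := hmono x y 1 y h; simpa [hidem] using this
    · have := hmono 1 x 1 y hx; simpa using this
  · rw [max_eq_left h]
    refine le_antisymm ?_ ?_
    · have := hmono y x x 1 h; simpa [hidem] using this
    · have := hmono 1 y x 1 hy; simpa using this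

private lemma key_lem {M : Type*} [Monoid M] [LinearOrder M]
    (hmono : ∀ a b c d : M, a ≤ b → c * a * d ≤ c * b * d)
    (hidem : ∀ a : M, a * a = a) {a b : M} (ha : a < 1) (hb : 1 < b)
    (hne : a * b ≠ b * a) :
    (a * b = a ∧ b * a = b) ∨ (a * b = b ∧ b * a = a) := by
  have hidem' : ∀ x y : M, x * (x * y) = x * y := by
    intro x y; rw [← mul_assoc, hidem]
  have hidem'' : ∀ x y : M, (x * y) * y = x * y := by
    intro x y; rw [mul_assoc, hidem]
  have hac : a ≤ a * b := by have := hmono 1 b a 1 hb.le; simpa using this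
  have hcb : a * b ≤ b := by have := hmono a 1 1 b ha.le; simpa using this
  have had : a ≤ b * a := by have := hmono 1 b 1 a hb.le; simpa using this
  have hdb : b * a ≤ b := by have := hmono a 1 b 1 ha.le; simpa using this
  -- (a*b)*(b*a) = a*b*a  and (b*a)*(a*b) = b*a*b
  have ecd : (a * b) * (b * a) = a * b * a := by
    simp only [mul_assoc, hidem, hidem']
  have edc : (b * a) * (a * b) = b * a * b := by
    simp only [mul_assoc, hidem, hidem']
  have hno_ge : ¬(1 ≤ a * b ∧ 1 ≤ b * a) := by
    rintro ⟨h₁, h₂⟩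
    have e1 : (a * b) * (b * a) = max (a * b) (b * a) := high_mul hmono hidem h₁ h₂
    -- a*b*a ≤ a*b and a*b*a ≤ b*a
    have p1 : a * b * a ≤ a * b := by
      have := hmono a 1 (a * b) 1 ha.le; simpa using this
    have p2 : a * b * a ≤ b * a := by
      have := hmono a 1 1 (b * a) ha.le
      simpa [mul_assoc] using this
    rw [ecd] at e1
    have : max (a * b) (b * a) ≤ min (a * b) (b * a) := by
      rw [← e1]; exact le_min p1 p2
    exact hne (le_antisymm (le_trans (le_max_left _ _) (this.trans (min_le_right _ _)))
      (le_trans (le_max_right _ _) (this.trans (min_le_left _ _))))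
  have hno_le : ¬(a * b ≤ 1 ∧ b * a ≤ 1) := by
    rintro ⟨h₁, h₂⟩
    have e1 : (b * a) * (a * b) = min (b * a) (a * b) := low_mul hmono hidem h₂ h₁
    have q1 : a * b ≤ b * a * b := by
      have := hmono 1 b 1 (a * b) hb.le
      simpa [mul_assoc] using this
    have q2 : b * a ≤ b * a * b := by
      have := hmono 1 b (b * a) 1 hb.le; simpa using this
    rw [edc] at e1
    have : max (a * b) (b * a) ≤ min (b * a) (a * b) := by
      rw [← e1]; exact max_le q1 q2
    exact hne (le_antisymm (le_trans (le_max_left _ _) (this.trans (min_le_left _ _)))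
      (le_trans (le_max_right _ _) (this.trans (min_le_right _ _))))
  rcases lt_trichotomy (a * b) 1 with h | h | h
  · have hd : 1 < b * a := lt_of_not_ge fun h' => hno_le ⟨h.le, h'⟩
    left
    constructor
    · have := low_mul hmono hidem ha.le h.le
      rw [hidem', min_eq_left hac] at this
      exact this
    · have := high_mul hmono hidem hb.le hd.le
      rw [hidem', max_eq_left hdb] at this
      exact this
  · exact absurd (fun h' => hno_ge ⟨h.ge, h'⟩) (fun hh =>
      (lt_of_not_ge fun h' => hno_le ⟨h.le, h'⟩).not_ge (le_of_not_gt
        (fun hlt => hh hlt.le)))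
  · have hd : b * a < 1 := lt_of_not_ge fun h' => hno_ge ⟨h.le, h'⟩
    right
    constructor
    · have := high_mul hmono hidem h.le hb.le
      rw [hidem'', max_eq_right hcb] at this
      exact this
    · have := low_mul hmono hidem hd.le ha.le
      rw [hidem'', min_eq_right had] at this
      exact this

/-- For distinct elements `a, b` of an idempotent linearly ordered monoid the
following are equivalent: (1) `a*b*a = a` and `b*a*b = b`; (2) `a*b ≠ b*a`;
(3) `a` and `b` lie strictly on opposite sides of the identity and
`{1, a, b}` is isomorphic to `G₃` or `D₃`. -/
theorem stmt_3 {M : Type*} [Monoid M] [LinearOrder M]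
    (hmono : ∀ a b c d : M, a ≤ b → c * a * d ≤ c * b * d)
    (hidem : ∀ a : M, a * a = a)
    (a b : M) (hab : a ≠ b) :
    ((a * b * a = a ∧ b * a * b = b) ↔ a * b ≠ b * a) ∧
    (a * b ≠ b * a ↔
      ((a < 1 ∧ 1 < b) ∨ (b < 1 ∧ 1 < a)) ∧
        ((a * b = a ∧ b * a = b) ∨ (a * b = b ∧ b * a = a))) := by
  have main : a * b ≠ b * a →
      ((a < 1 ∧ 1 < b) ∨ (b < 1 ∧ 1 < a)) ∧
        ((a * b = a ∧ b * a = b) ∨ (a * b = b ∧ b * a = a)) := by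
    intro hne
    have hno_le : ¬(a ≤ 1 ∧ b ≤ 1) := by
      rintro ⟨h₁, h₂⟩
      exact hne (by rw [low_mul hmono hidem h₁ h₂, low_mul hmono hidem h₂ h₁, min_comm])
    have hno_ge : ¬(1 ≤ a ∧ 1 ≤ b) := by
      rintro ⟨h₁, h₂⟩
      exact hne (by rw [high_mul hmono hidem h₁ h₂, high_mul hmono hidem h₂ h₁, max_comm])
    rcases lt_trichotomy a 1 with h | h | h
    · have hb : 1 < b := lt_of_not_ge fun h' => hno_le ⟨h.le, h'⟩
      exact ⟨Or.inl ⟨h, hb⟩, key_lem hmono hidem h hb hne⟩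
    · exact absurd (by rw [h, one_mul, mul_one]) hne
    · have hb : b < 1 := lt_of_not_ge fun h' => hno_ge ⟨h.le, h'⟩
      rcases key_lem hmono hidem hb h (Ne.symm hne) with ⟨h₁, h₂⟩ | ⟨h₁, h₂⟩
      · exact ⟨Or.inr ⟨hb, h⟩, Or.inl ⟨h₂, h₁⟩⟩
      · exact ⟨Or.inr ⟨hb, h⟩, Or.inr ⟨h₂, h₁⟩⟩
  constructor
  · constructor
    · rintro ⟨h1, h2⟩ hc
      apply hab
      have ea : a = a * b := by
        conv_lhs => rw [← h1]
        rw [mul_assoc, ← hc, ← mul_assoc, hidem]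
      have eb : b = a * b := by
        conv_lhs => rw [← h2]
        rw [← hc, mul_assoc, hidem]
      exact ea.trans eb.symm
    · intro hne
      rcases (main hne).2 with ⟨h₁, h₂⟩ | ⟨h₁, h₂⟩
      · exact ⟨by rw [h₁, hidem], by rw [h₂, hidem]⟩
      · exact ⟨by rw [h₁, h₂], by rw [h₂, h₁]⟩
  · constructor
    · exact main
    · rintro ⟨_, ⟨h₁, h₂⟩ | ⟨h₁, h₂⟩⟩
      · rw [h₁, h₂]; exact hab
      · rw [h₁, h₂]; exact fun h => hab h.symm
end

section
/- Let M be an idempotent linearly ordered monoid. Then there do not exist three pairwise distinct elements a, b, c ∈ M such that a·b·a = a, b·a·b = b, a·c·a = a, c·a·c = c, b·c·b = b and c·b·c = c. (Equivalently, every equivalence class of the Green relation 𝒟, defined by a 𝒟 b iff a·b·a = a and b·a·b = b, has at most two elements.) -/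
/-- In an idempotent linearly ordered monoid, every class of the Green
relation `𝒟` (given by `a 𝒟 b ↔ a*b*a = a ∧ b*a*b = b`) has at most two
elements: there are no three pairwise distinct, pairwise `𝒟`-related
elements. -/
theorem stmt_4 {M : Type*} [Monoid M] [LinearOrder M]
    (hmono : ∀ a b c d : M, a ≤ b → c * a * d ≤ c * b * d)
    (hidem : ∀ a : M, a * a = a) :
    ¬ ∃ a b c : M, a ≠ b ∧ a ≠ c ∧ b ≠ c ∧
      a * b * a = a ∧ b * a * b = b ∧
      a * c * a = a ∧ c * a * c = c ∧
      b * c * b = b ∧ c * b * c = c := by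
  rintro ⟨a, b, c, hab, hac, hbc, hA, hB, hC, hD, hE, hF⟩
  -- if y*x*y = y and y ≤ 1 then y ≤ x
  have low : ∀ x y : M, y * x * y = y → y ≤ 1 → y ≤ x := by
    intro x y h hy
    calc y = y * x * y := h.symm
      _ ≤ y * x * 1 := by simpa using hmono y 1 (y * x) 1 hy
      _ ≤ x := by simpa using hmono y 1 1 x hy
  -- if y*x*y = y and 1 ≤ y then x ≤ y
  have high : ∀ x y : M, y * x * y = y → 1 ≤ y → x ≤ y := by
    intro x y h hy
    calc x ≤ y * x := by simpa using hmono 1 y 1 x hy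
      _ ≤ y * x * y := by simpa using hmono 1 y (y * x) 1 hy
      _ = y := h
  -- two distinct 𝒟-related elements cannot be on the same side of 1
  have same : ∀ x y : M, x * y * x = x → y * x * y = y →
      ((x ≤ 1 ∧ y ≤ 1) ∨ (1 ≤ x ∧ 1 ≤ y)) → x = y := by
    rintro x y hx hy (⟨h1, h2⟩ | ⟨h1, h2⟩)
    · exact le_antisymm (low y x hx h1) (low x y hy h2)
    · exact le_antisymm (high x y hy h2) (high y x hx h1)
  rcases le_total a 1 with ha | ha <;> rcases le_total b 1 with hb | hb <;>
    rcases le_total c 1 with hc | hc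
  · exact hab (same a b hA hB (Or.inl ⟨ha, hb⟩))
  · exact hab (same a b hA hB (Or.inl ⟨ha, hb⟩))
  · exact hac (same a c hC hD (Or.inl ⟨ha, hc⟩))
  · exact hbc (same b c hE hF (Or.inr ⟨hb, hc⟩))
  · exact hbc (same b c hE hF (Or.inl ⟨hb, hc⟩))
  · exact hac (same a c hC hD (Or.inr ⟨ha, hc⟩))
  · exact hab (same a b hA hB (Or.inr ⟨ha, hb⟩))
  · exact hab (same a b hA hB (Or.inr ⟨ha, hb⟩))
end

section
/- Let M be an idempotent linearly ordered monoid and let a, b, c ∈ M be three pairwise distinct elements such that a·b·a = a and b·a·b = b. Then a·c = c·a and b·c = c·b, and moreover a·c = a if and only if b·c = b. -/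
section Aux

variable {M : Type*} [Monoid M] [LinearOrder M]

private lemma aux_mixL (hl : ∀ x y z : M, x ≤ y → z * x ≤ z * y)
    (hr : ∀ x y z : M, x ≤ y → x * z ≤ y * z)
    (hidem : ∀ a : M, a * a = a) {x y : M} (hx : x ≤ 1) (hy : 1 ≤ y) :
    x * y = x ∨ x * y = y := by
  have hxz : x ≤ x * y := by
    calc x = x * 1 := (mul_one x).symm
    _ ≤ x * y := hl 1 y x hy
  have hzy : x * y ≤ y := by
    calc x * y ≤ 1 * y := hr x 1 y hx
    _ = y := one_mul y
  rcases le_total (x * y) 1 with h | h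
  · left
    refine le_antisymm ?_ hxz
    calc x * y = x * (x * y) := by rw [← mul_assoc, hidem x]
    _ ≤ x * 1 := hl (x * y) 1 x h
    _ = x := mul_one x
  · right
    refine le_antisymm hzy ?_
    calc y = 1 * y := (one_mul y).symm
    _ ≤ (x * y) * y := hr 1 (x * y) y h
    _ = x * (y * y) := mul_assoc _ _ _
    _ = x * y := by rw [hidem y]

private lemma aux_mixR (hl : ∀ x y z : M, x ≤ y → z * x ≤ z * y)
    (hr : ∀ x y z : M, x ≤ y → x * z ≤ y * z)
    (hidem : ∀ a : M, a * a = a) {x y : M} (hx : x ≤ 1) (hy : 1 ≤ y) :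
    y * x = x ∨ y * x = y := by
  have hxz : x ≤ y * x := by
    calc x = 1 * x := (one_mul x).symm
    _ ≤ y * x := hr 1 y x hy
  have hzy : y * x ≤ y := by
    calc y * x ≤ y * 1 := hl x 1 y hx
    _ = y := mul_one y
  rcases le_total (y * x) 1 with h | h
  · left
    refine le_antisymm ?_ hxz
    calc y * x = (y * x) * x := by rw [mul_assoc, hidem x]
    _ ≤ 1 * x := hr (y * x) 1 x h
    _ = x := one_mul x
  · right
    refine le_antisymm hzy ?_
    calc y = y * 1 := (mul_one y).symm
    _ ≤ y * (y * x) := hl 1 (y * x) y h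
    _ = (y * y) * x := (mul_assoc _ _ _).symm
    _ = y * x := by rw [hidem y]

private lemma aux_main (hmono : ∀ a b c d : M, a ≤ b → c * a * d ≤ c * b * d)
    (hidem : ∀ a : M, a * a = a)
    (a b c : M) (hab : a ≠ b) (hac : a ≠ c) (hbc : b ≠ c)
    (h1 : a * b * a = a) (h2 : b * a * b = b) (ha : a ≤ 1) (hb : 1 ≤ b) :
    a * c = c * a ∧ b * c = c * b ∧ (a * c = a ↔ b * c = b) := by
  have hl : ∀ x y z : M, x ≤ y → z * x ≤ z * y := by
    intro x y z h
    have := hmono x y z 1 h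
    simpa using this
  have hr : ∀ x y z : M, x ≤ y → x * z ≤ y * z := by
    intro x y z h
    have := hmono x y 1 z h
    simpa using this
  -- dichotomy on a*b, b*a
  have hcase : (a * b = a ∧ b * a = b) ∨ (a * b = b ∧ b * a = a) := by
    rcases aux_mixL hl hr hidem ha hb with hab1 | hab1 <;>
      rcases aux_mixR hl hr hidem ha hb with hba1 | hba1
    · exfalso; rw [hba1, hab1] at h2; exact hab h2
    · exact Or.inl ⟨hab1, hba1⟩
    · exact Or.inr ⟨hab1, hba1⟩
    · exfalso; rw [hab1, hba1] at h1; exact hab h1.symm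
  rcases le_total 1 c with h1c | hc1
  · -- 1 ≤ c
    rcases le_total c b with hcb | hbc'
    · -- 1 ≤ c ≤ b : show a*c = a, c*a = a, b*c = b, c*b = b
      have ebc : b * c = b := by
        refine le_antisymm ?_ ?_
        · calc b * c ≤ b * b := hl c b b hcb
          _ = b := hidem b
        · calc b = b * 1 := (mul_one b).symm
          _ ≤ b * c := hl 1 c b h1c
      have ecb : c * b = b := by
        refine le_antisymm ?_ ?_
        · calc c * b ≤ b * b := hr c b b hcb
          _ = b := hidem b
        · calc b = 1 * b := (one_mul b).symm
          _ ≤ c * b := hr 1 c b h1c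
      have eac : a * c = a := by
        rcases hcase with ⟨hiab, _⟩ | ⟨_, hiba⟩
        · refine le_antisymm ?_ ?_
          · calc a * c ≤ a * b := hl c b a hcb
            _ = a := hiab
          · calc a = a * 1 := (mul_one a).symm
            _ ≤ a * c := hl 1 c a h1c
        · rcases aux_mixL hl hr hidem ha h1c with h | h
          · exact h
          · exfalso
            apply hbc
            calc b = b * c := ebc.symm
            _ = b * (a * c) := by rw [h]
            _ = (b * a) * c := (mul_assoc _ _ _).symm
            _ = a * c := by rw [hiba]
            _ = c := h
      have eca : c * a = a := by
        rcases hcase with ⟨hiab, _⟩ | ⟨_, hiba⟩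
        · rcases aux_mixR hl hr hidem ha h1c with h | h
          · exact h
          · exfalso
            apply hbc
            calc b = c * b := ecb.symm
            _ = (c * a) * b := by rw [h]
            _ = c * (a * b) := mul_assoc _ _ _
            _ = c * a := by rw [hiab]
            _ = c := h
        · refine le_antisymm ?_ ?_
          · calc c * a ≤ b * a := hr c b a hcb
            _ = a := hiba
          · calc a = 1 * a := (one_mul a).symm
            _ ≤ c * a := hr 1 c a h1c
      exact ⟨by rw [eac, eca], by rw [ebc, ecb], by simp [eac, ebc]⟩
    · -- 1 ≤ b ≤ c : show a*c = c, c*a = c, b*c = c, c*b = c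
      have ebc : b * c = c := by
        refine le_antisymm ?_ ?_
        · calc b * c ≤ c * c := hr b c c hbc'
          _ = c := hidem c
        · calc c = 1 * c := (one_mul c).symm
          _ ≤ b * c := hr 1 b c hb
      have ecb : c * b = c := by
        refine le_antisymm ?_ ?_
        · calc c * b ≤ c * c := hl b c c hbc'
          _ = c := hidem c
        · calc c = c * 1 := (mul_one c).symm
          _ ≤ c * b := hl 1 b c hb
      have eac : a * c = c := by
        rcases aux_mixL hl hr hidem ha h1c with h | h
        · exfalso
          rcases hcase with ⟨_, hiba⟩ | ⟨hiab, _⟩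
          · apply hbc
            calc b = b * a := hiba.symm
            _ = b * (a * c) := by rw [h]
            _ = (b * a) * c := (mul_assoc _ _ _).symm
            _ = b * c := by rw [hiba]
            _ = c := ebc
          · apply hac
            calc a = a * c := h.symm
            _ = a * (b * c) := by rw [ebc]
            _ = (a * b) * c := (mul_assoc _ _ _).symm
            _ = b * c := by rw [hiab]
            _ = c := ebc
        · exact h
      have eca : c * a = c := by
        rcases aux_mixR hl hr hidem ha h1c with h | h
        · exfalso
          rcases hcase with ⟨_, hiba⟩ | ⟨hiab, _⟩
          · apply hac
            calc a = c * a := h.symm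
            _ = (c * b) * a := by rw [ecb]
            _ = c * (b * a) := mul_assoc _ _ _
            _ = c * b := by rw [hiba]
            _ = c := ecb
          · apply hbc
            calc b = a * b := hiab.symm
            _ = (c * a) * b := by rw [h]
            _ = c * (a * b) := mul_assoc _ _ _
            _ = c * b := by rw [hiab]
            _ = c := ecb
        · exact h
      refine ⟨by rw [eac, eca], by rw [ebc, ecb], ?_⟩
      rw [eac, ebc]
      exact ⟨fun h => absurd h.symm hac, fun h => absurd h.symm hbc⟩
  · -- c ≤ 1
    rcases le_total a c with hac' | hca
    · -- a ≤ c ≤ 1 : show a*c = a, c*a = a, b*c = b, c*b = b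
      have eac : a * c = a := by
        refine le_antisymm ?_ ?_
        · calc a * c ≤ a * 1 := hl c 1 a hc1
          _ = a := mul_one a
        · calc a = a * a := (hidem a).symm
          _ ≤ a * c := hl a c a hac'
      have eca : c * a = a := by
        refine le_antisymm ?_ ?_
        · calc c * a ≤ 1 * a := hr c 1 a hc1
          _ = a := one_mul a
        · calc a = a * a := (hidem a).symm
          _ ≤ c * a := hr a c a hac'
      have ebc : b * c = b := by
        rcases hcase with ⟨_, hiba⟩ | ⟨hiab, _⟩
        · refine le_antisymm ?_ ?_
          · calc b * c ≤ b * 1 := hl c 1 b hc1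
            _ = b := mul_one b
          · calc b = b * a := hiba.symm
            _ ≤ b * c := hl a c b hac'
        · rcases aux_mixR hl hr hidem hc1 hb with h | h
          · exfalso
            apply hac
            calc a = a * c := eac.symm
            _ = a * (b * c) := by rw [h]
            _ = (a * b) * c := (mul_assoc _ _ _).symm
            _ = b * c := by rw [hiab]
            _ = c := h
          · exact h
      have ecb : c * b = b := by
        rcases hcase with ⟨hiab, hiba⟩ | ⟨hiab, _⟩
        · rcases aux_mixL hl hr hidem hc1 hb with h | h
          · exfalso
            apply hac
            calc a = c * a := eca.symm
            _ = (c * b) * a := by rw [h]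
            _ = c * (b * a) := mul_assoc _ _ _
            _ = c * b := by rw [hiba]
            _ = c := h
          · exact h
        · refine le_antisymm ?_ ?_
          · calc c * b ≤ 1 * b := hr c 1 b hc1
            _ = b := one_mul b
          · calc b = a * b := hiab.symm
            _ ≤ c * b := hr a c b hac'
      exact ⟨by rw [eac, eca], by rw [ebc, ecb], by simp [eac, ebc]⟩
    · -- c ≤ a ≤ 1 : show a*c = c, c*a = c, b*c = c, c*b = c
      have eac : a * c = c := by
        refine le_antisymm ?_ ?_
        · calc a * c ≤ 1 * c := hr a 1 c ha
          _ = c := one_mul c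
        · calc c = c * c := (hidem c).symm
          _ ≤ a * c := hr c a c hca
      have eca : c * a = c := by
        refine le_antisymm ?_ ?_
        · calc c * a ≤ c * 1 := hl a 1 c ha
          _ = c := mul_one c
        · calc c = c * c := (hidem c).symm
          _ ≤ c * a := hl c a c hca
      have hc1' : c ≤ 1 := hc1
      have ebc : b * c = c := by
        rcases aux_mixR hl hr hidem hc1' hb with h | h
        · exact h
        · exfalso
          rcases hcase with ⟨hiab, _⟩ | ⟨_, hiba⟩
          · apply hac
            calc a = a * b := hiab.symm
            _ = a * (b * c) := by rw [h]
            _ = (a * b) * c := (mul_assoc _ _ _).symm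
            _ = a * c := by rw [hiab]
            _ = c := eac
          · apply hbc
            calc b = b * c := h.symm
            _ = b * (a * c) := by rw [eac]
            _ = (b * a) * c := (mul_assoc _ _ _).symm
            _ = a * c := by rw [hiba]
            _ = c := eac
      have ecb : c * b = c := by
        rcases aux_mixL hl hr hidem hc1' hb with h | h
        · exact h
        · exfalso
          rcases hcase with ⟨hiab, _⟩ | ⟨_, hiba⟩
          · apply hbc
            calc b = c * b := h.symm
            _ = (c * a) * b := by rw [eca]
            _ = c * (a * b) := mul_assoc _ _ _
            _ = c * a := by rw [hiab]
            _ = c := eca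
          · apply hac
            calc a = b * a := hiba.symm
            _ = (c * b) * a := by rw [h]
            _ = c * (b * a) := mul_assoc _ _ _
            _ = c * a := by rw [hiba]
            _ = c := eca
      refine ⟨by rw [eac, eca], by rw [ebc, ecb], ?_⟩
      rw [eac, ebc]
      exact ⟨fun h => absurd h.symm hac, fun h => absurd h.symm hbc⟩

end Aux

/-- If `a, b, c` are pairwise distinct elements of an idempotent linearly
ordered monoid with `a*b*a = a` and `b*a*b = b`, then `c` commutes with `a`
and `b`, and `a*c = a ↔ b*c = b`. -/
theorem stmt_5 {M : Type*} [Monoid M] [LinearOrder M]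
    (hmono : ∀ a b c d : M, a ≤ b → c * a * d ≤ c * b * d)
    (hidem : ∀ a : M, a * a = a)
    (a b c : M) (hab : a ≠ b) (hac : a ≠ c) (hbc : b ≠ c)
    (h1 : a * b * a = a) (h2 : b * a * b = b) :
    a * c = c * a ∧ b * c = c * b ∧ (a * c = a ↔ b * c = b) := by
  have hl : ∀ x y z : M, x ≤ y → z * x ≤ z * y := by
    intro x y z h
    have := hmono x y z 1 h
    simpa using this
  have hr : ∀ x y z : M, x ≤ y → x * z ≤ y * z := by
    intro x y z h
    have := hmono x y 1 z h
    simpa using this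
  rcases le_total a 1 with ha1 | h1a <;> rcases le_total b 1 with hb1 | h1b
  · -- both ≤ 1 : contradiction
    exfalso
    apply hab
    have k1 : a ≤ b := by
      calc a = a * b * a := h1.symm
      _ ≤ a * b * 1 := hl a 1 (a * b) ha1
      _ = a * b := mul_one _
      _ ≤ 1 * b := hr a 1 b ha1
      _ = b := one_mul b
    have k2 : b ≤ a := by
      calc b = b * a * b := h2.symm
      _ ≤ b * a * 1 := hl b 1 (b * a) hb1
      _ = b * a := mul_one _
      _ ≤ 1 * a := hr b 1 a hb1
      _ = a := one_mul a
    exact le_antisymm k1 k2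
  · exact aux_main hmono hidem a b c hab hac hbc h1 h2 ha1 h1b
  · obtain ⟨p, q, r⟩ :=
      aux_main hmono hidem b a c hab.symm hbc hac h2 h1 hb1 h1a
    exact ⟨q, p, r.symm⟩
  · -- both ≥ 1 : contradiction
    exfalso
    apply hab
    have k1 : b ≤ a := by
      calc b = 1 * b := (one_mul b).symm
      _ ≤ a * b := hr 1 a b h1a
      _ = a * b * 1 := (mul_one _).symm
      _ ≤ a * b * a := hl 1 a (a * b) h1a
      _ = a := h1
    have k2 : a ≤ b := by
      calc a = 1 * a := (one_mul a).symm
      _ ≤ b * a := hr 1 b a h1b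
      _ = b * a * 1 := (mul_one _).symm
      _ ≤ b * a * b := hl 1 b (b * a) h1b
      _ = b := h2
    exact le_antisymm k2 k1
end

section
/- Let M and N be idempotent linearly ordered monoids with identities denoted e. Then there exist an idempotent linearly ordered monoid P and embeddings f : M → P and g : N → P such that: every element of P lies in the range of f or the range of g; the ranges of f and g intersect exactly in {e}; for every m ∈ M with m ≠ e and every n ∈ N, f(m)·g(n) = g(n)·f(m) = f(m); and for every m ∈ M with m ≠ e and every n ∈ N, if m < e then f(m) < g(n), and if e < m then g(n) < f(m). (P is the nested sum M ⊞ N, and it is an idempotent linearly ordered monoid into which M and N embed.) -/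
universe u

/-- A linearly ordered monoid: a monoid with a linear order in which
multiplication is monotone in each argument. -/
structure LOM : Type (u + 1) where
  carrier : Type u
  mul : carrier → carrier → carrier
  one : carrier
  le : carrier → carrier → Prop
  mul_assoc : ∀ a b c, mul (mul a b) c = mul a (mul b c)
  one_mul : ∀ a, mul one a = a
  mul_one : ∀ a, mul a one = a
  le_refl : ∀ a, le a a
  le_trans : ∀ a b c, le a b → le b c → le a c
  le_antisymm : ∀ a b, le a b → le b a → a = b
  le_total : ∀ a b, le a b ∨ le b a
  mono : ∀ a b c d, le a b → le (mul (mul c a) d) (mul (mul c b) d)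

/-- A linearly ordered monoid is idempotent if every element is idempotent. -/
def LOM.Idem (A : LOM) : Prop := ∀ a, A.mul a a = a

/-- A homomorphism of linearly ordered monoids: an order-preserving monoid
homomorphism. -/
def LOM.IsHom (A B : LOM) (f : A.carrier → B.carrier) : Prop :=
  (∀ a b, f (A.mul a b) = B.mul (f a) (f b)) ∧ f A.one = B.one ∧
    ∀ a b, A.le a b → B.le (f a) (f b)

/-- An embedding of linearly ordered monoids: an injective homomorphism. -/
def LOM.IsEmb (A B : LOM) (f : A.carrier → B.carrier) : Prop :=
  LOM.IsHom A B f ∧ Function.Injective f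

/-!
`M ⊞ N` is `M` with its identity blown up into a copy of `N`: the carrier is
`(M ∖ {e}) ⊕ N`, elements of `N` multiply among themselves, every element of `M ∖ {e}`
absorbs `N`, and `N` sits between the negative and the positive part of `M`.
Idempotence of `M` makes `M ∖ {e}` closed under multiplication (`ab = e` forces
`a = a(ab) = (aa)b = ab = e`), so the product is well defined; associativity and
monotonicity are then checked case by case, and the embedding of `M` sends `e` to the
identity of `N`.
-/

namespace LOM

section

variable (A : LOM.{u})

theorem mul_le_mul_left {a b : A.carrier} (c : A.carrier) (h : A.le a b) :
    A.le (A.mul c a) (A.mul c b) := by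
  simpa only [A.mul_one] using A.mono a b c A.one h

theorem mul_le_mul_right {a b : A.carrier} (c : A.carrier) (h : A.le a b) :
    A.le (A.mul a c) (A.mul b c) := by
  simpa only [A.one_mul] using A.mono a b A.one c h

end

theorem Idem.mul_ne_one {A : LOM.{u}} (hA : A.Idem) {a : A.carrier} (ha : a ≠ A.one)
    (b : A.carrier) : A.mul a b ≠ A.one := fun hab =>
  ha <| calc
    a = A.mul a (A.mul a b) := by rw [hab, A.mul_one]
    _ = A.mul a b := by rw [← A.mul_assoc, hA]
    _ = A.one := hab

namespace NestedSum

variable (M N : LOM.{u})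

abbrev Carrier : Type u := {m : M.carrier // m ≠ M.one} ⊕ N.carrier

variable {M N}

def mul (hM : M.Idem) : Carrier M N → Carrier M N → Carrier M N
  | .inl a, .inl b => .inl ⟨M.mul a b, hM.mul_ne_one a.2 b⟩
  | .inl a, .inr _ => .inl a
  | .inr _, .inl b => .inl b
  | .inr n, .inr n' => .inr (N.mul n n')

def le : Carrier M N → Carrier M N → Prop
  | .inl a, .inl b => M.le a b
  | .inl a, .inr _ => M.le a M.one
  | .inr _, .inl b => M.le M.one b
  | .inr n, .inr n' => N.le n n'

variable (hM : M.Idem)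

theorem mul_assoc (x y z : Carrier M N) :
    mul hM (mul hM x y) z = mul hM x (mul hM y z) := by
  rcases x with a | a <;> rcases y with b | b <;> rcases z with c | c <;>
    simp [mul, M.mul_assoc, N.mul_assoc]

theorem le_refl : ∀ x : Carrier M N, le x x
  | .inl a => M.le_refl a
  | .inr n => N.le_refl n

theorem le_trans {x y z : Carrier M N} (hxy : le x y) (hyz : le y z) : le x z := by
  rcases x with a | a <;> rcases y with b | b <;> rcases z with c | c
  all_goals first
    | exact M.le_trans _ _ _ hxy hyz
    | exact N.le_trans _ _ _ hxy hyz
    | exact hxy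
    | exact hyz
    | exact absurd (M.le_antisymm _ _ hyz hxy) b.2

theorem le_antisymm {x y : Carrier M N} (hxy : le x y) (hyx : le y x) : x = y := by
  rcases x with a | a <;> rcases y with b | b
  · exact congrArg Sum.inl (Subtype.ext (M.le_antisymm _ _ hxy hyx))
  · exact absurd (M.le_antisymm _ _ hxy hyx) a.2
  · exact absurd (M.le_antisymm _ _ hyx hxy) b.2
  · exact congrArg Sum.inr (N.le_antisymm _ _ hxy hyx)

theorem le_total (x y : Carrier M N) : le x y ∨ le y x := by
  rcases x with a | a <;> rcases y with b | b
  · exact M.le_total _ _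
  · exact M.le_total _ _
  · exact (M.le_total _ _).symm
  · exact N.le_total _ _

theorem mul_le_mul_left {x y : Carrier M N} (z : Carrier M N) (h : le x y) :
    le (mul hM z x) (mul hM z y) := by
  rcases z with c | c <;> rcases x with a | a <;> rcases y with b | b
  any_goals first
    | exact h
    | exact M.mul_le_mul_left c h
    | exact N.mul_le_mul_left c h
    | exact M.le_refl c
  all_goals have := M.mul_le_mul_left c.1 h; rwa [M.mul_one] at this

theorem mul_le_mul_right {x y : Carrier M N} (z : Carrier M N) (h : le x y) :
    le (mul hM x z) (mul hM y z) := by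
  rcases z with c | c <;> rcases x with a | a <;> rcases y with b | b
  any_goals first
    | exact h
    | exact M.mul_le_mul_right c h
    | exact N.mul_le_mul_right c h
    | exact M.le_refl c
  all_goals have := M.mul_le_mul_right c.1 h; rwa [M.one_mul] at this

end NestedSum

def nestedSum (M N : LOM.{u}) (hM : M.Idem) : LOM.{u} where
  carrier := NestedSum.Carrier M N
  mul := NestedSum.mul hM
  one := .inr N.one
  le := NestedSum.le
  mul_assoc := NestedSum.mul_assoc hM
  one_mul := by rintro (a | n) <;> simp [NestedSum.mul, N.one_mul]
  mul_one := by rintro (a | n) <;> simp [NestedSum.mul, N.mul_one]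
  le_refl := NestedSum.le_refl
  le_trans _ _ _ := NestedSum.le_trans
  le_antisymm _ _ := NestedSum.le_antisymm
  le_total := NestedSum.le_total
  mono _ _ c d h := NestedSum.mul_le_mul_right hM d (NestedSum.mul_le_mul_left hM c h)

namespace NestedSum

variable {M N : LOM.{u}} (hM : M.Idem)

theorem idem (hN : N.Idem) : (nestedSum M N hM).Idem
  | .inl a => congrArg Sum.inl (Subtype.ext (hM a))
  | .inr n => congrArg Sum.inr (hN n)

open Classical in
noncomputable def ofLeft (m : M.carrier) : Carrier M N :=
  if h : m = M.one then .inr N.one else .inl ⟨m, h⟩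

theorem ofLeft_one : (ofLeft M.one : Carrier M N) = .inr N.one :=
  dif_pos rfl

theorem ofLeft_of_ne {m : M.carrier} (h : m ≠ M.one) : (ofLeft m : Carrier M N) = .inl ⟨m, h⟩ :=
  dif_neg h

theorem eq_one_of_ofLeft_eq_inr {m : M.carrier} {n : N.carrier} (h : ofLeft m = .inr n) :
    m = M.one := by
  by_contra hm
  rw [ofLeft_of_ne hm] at h
  exact Sum.inl_ne_inr h

theorem ofLeft_le_ofLeft_iff {a b : M.carrier} :
    le (ofLeft a : Carrier M N) (ofLeft b) ↔ M.le a b := by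
  by_cases ha : a = M.one <;> by_cases hb : b = M.one
  · subst ha hb
    rw [ofLeft_one]
    exact iff_of_true (N.le_refl _) (M.le_refl _)
  · subst ha
    rw [ofLeft_one, ofLeft_of_ne hb]
    rfl
  · subst hb
    rw [ofLeft_one, ofLeft_of_ne ha]
    rfl
  · rw [ofLeft_of_ne ha, ofLeft_of_ne hb]
    rfl

theorem ofLeft_mul (a b : M.carrier) :
    (ofLeft (M.mul a b) : Carrier M N) = mul hM (ofLeft a) (ofLeft b) := by
  by_cases ha : a = M.one
  · subst ha
    rw [M.one_mul, ofLeft_one]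
    exact ((nestedSum M N hM).one_mul _).symm
  by_cases hb : b = M.one
  · subst hb
    rw [M.mul_one, ofLeft_one]
    exact ((nestedSum M N hM).mul_one _).symm
  rw [ofLeft_of_ne ha, ofLeft_of_ne hb, ofLeft_of_ne (hM.mul_ne_one ha b)]
  rfl

theorem isEmb_ofLeft : IsEmb M (nestedSum M N hM) ofLeft := by
  have hle {a b : M.carrier} (h : ofLeft a = (ofLeft b : Carrier M N)) : M.le a b :=
    ofLeft_le_ofLeft_iff.1 (by rw [h]; exact le_refl _)
  exact ⟨⟨ofLeft_mul hM, ofLeft_one, fun _ _ => ofLeft_le_ofLeft_iff.2⟩,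
    fun a b h => M.le_antisymm _ _ (hle h) (hle h.symm)⟩

theorem isEmb_inr : IsEmb N (nestedSum M N hM) Sum.inr :=
  ⟨⟨fun _ _ => rfl, rfl, fun _ _ h => h⟩, fun _ _ => Sum.inr.inj⟩

theorem range_ofLeft_inter_range_inr :
    Set.range ofLeft ∩ Set.range Sum.inr = ({.inr N.one} : Set (Carrier M N)) := by
  ext p
  simp only [Set.mem_inter_iff, Set.mem_range, Set.mem_singleton_iff]
  constructor
  · rintro ⟨⟨m, rfl⟩, n, hn⟩
    rw [eq_one_of_ofLeft_eq_inr hn.symm, ofLeft_one]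
  · rintro rfl
    exact ⟨⟨M.one, ofLeft_one⟩, N.one, rfl⟩

end NestedSum

end LOM

open LOM.NestedSum

/-- The nested sum: for idempotent linearly ordered monoids `M` and `N` there
is an idempotent linearly ordered monoid `P` into which both embed, whose
elements are covered by the two ranges, the ranges meeting exactly in the
identity, such that non-identity elements of `M` absorb all elements of `N`,
and negative (resp. positive) non-identity elements of `M` lie below
(resp. above) all elements of `N`. -/
theorem stmt_6 (M N : LOM.{u}) (hM : M.Idem) (hN : N.Idem) :
    ∃ (P : LOM.{u}) (f : M.carrier → P.carrier) (g : N.carrier → P.carrier),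
      P.Idem ∧ LOM.IsEmb M P f ∧ LOM.IsEmb N P g ∧
      (∀ p : P.carrier, (∃ m, f m = p) ∨ (∃ n, g n = p)) ∧
      (Set.range f ∩ Set.range g = {P.one}) ∧
      (∀ m : M.carrier, m ≠ M.one → ∀ n : N.carrier,
        P.mul (f m) (g n) = f m ∧ P.mul (g n) (f m) = f m) ∧
      (∀ m : M.carrier, m ≠ M.one → ∀ n : N.carrier,
        (M.le m M.one → P.le (f m) (g n) ∧ f m ≠ g n) ∧
        (M.le M.one m → P.le (g n) (f m) ∧ g n ≠ f m)) := by
  refine ⟨LOM.nestedSum M N hM, ofLeft, Sum.inr, idem hM hN, isEmb_ofLeft hM, isEmb_inr hM,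
    ?_, range_ofLeft_inter_range_inr, ?_, ?_⟩
  · rintro (a | n)
    exacts [.inl ⟨a.1, ofLeft_of_ne a.2⟩, .inr ⟨n, rfl⟩]
  · intro m hm n
    rw [ofLeft_of_ne hm]
    exact ⟨rfl, rfl⟩
  · intro m hm n
    rw [ofLeft_of_ne hm]
    exact ⟨fun h => ⟨h, Sum.inl_ne_inr⟩, fun h => ⟨h, Sum.inr_ne_inl⟩⟩
end

section
/- Let M and N be idempotent linearly ordered monoids and let f : M → N be a surjective homomorphism (a surjective order-preserving monoid homomorphism). Then there exists an embedding g : N → M (an injective order-preserving monoid homomorphism) with f ∘ g = id_N. In particular, every homomorphic image of an idempotent linearly ordered monoid is isomorphic to a subalgebra of it. -/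
/-- Every surjective homomorphism between idempotent linearly ordered
monoids has a section that is an embedding; in particular every homomorphic
image of an idempotent linearly ordered monoid is isomorphic to a
subalgebra of it. -/
theorem stmt_7 {M N : Type*} [Monoid M] [LinearOrder M] [Monoid N] [LinearOrder N]
    (hmonoM : ∀ a b c d : M, a ≤ b → c * a * d ≤ c * b * d)
    (hidemM : ∀ a : M, a * a = a)
    (hmonoN : ∀ a b c d : N, a ≤ b → c * a * d ≤ c * b * d)
    (hidemN : ∀ a : N, a * a = a)
    (f : M → N)
    (hfmul : ∀ a b : M, f (a * b) = f a * f b) (hfone : f 1 = 1)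
    (hfmono : Monotone f) (hfsurj : Function.Surjective f) :
    ∃ g : N → M, (∀ a b : N, g (a * b) = g a * g b) ∧ g 1 = 1 ∧
      Monotone g ∧ Function.Injective g ∧ f ∘ g = id := by
  classical
  -- one-sided monotonicity
  have hl : ∀ a b c : M, a ≤ b → c * a ≤ c * b := fun a b c h => by
    simpa using hmonoM a b c 1 h
  have hr : ∀ a b d : M, a ≤ b → a * d ≤ b * d := fun a b d h => by
    simpa using hmonoM a b 1 d h
  -- quasitriviality: x * y ∈ {x, y}
  have quasi : ∀ x y : M, x * y = x ∨ x * y = y := by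
    intro x y
    rcases le_total x 1 with hx | hx <;> rcases le_total y 1 with hy | hy
    · -- both ≤ 1 : product is the minimum
      rcases le_total x y with h | h
      · left
        refine le_antisymm ?_ ?_
        · calc x * y ≤ x * 1 := hl _ _ _ hy
            _ = x := mul_one x
        · calc x = x * x := (hidemM x).symm
            _ ≤ x * y := hl _ _ _ h
      · right
        refine le_antisymm ?_ ?_
        · calc x * y ≤ 1 * y := hr _ _ _ hx
            _ = y := one_mul y
        · calc y = y * y := (hidemM y).symm
            _ ≤ x * y := hr _ _ _ h
    · -- x ≤ 1 ≤ y
      rcases le_total (x * y) 1 with hz | hz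
      · left
        refine le_antisymm ?_ ?_
        · calc x * y = x * x * y := by rw [hidemM]
            _ = x * (x * y) := by rw [mul_assoc]
            _ ≤ x * 1 := hl _ _ _ hz
            _ = x := mul_one x
        · calc x = x * 1 := (mul_one x).symm
            _ ≤ x * y := hl _ _ _ hy
      · right
        refine le_antisymm ?_ ?_
        · calc x * y ≤ 1 * y := hr _ _ _ hx
            _ = y := one_mul y
        · calc y = 1 * y := (one_mul y).symm
            _ ≤ (x * y) * y := hr _ _ _ hz
            _ = x * (y * y) := mul_assoc _ _ _
            _ = x * y := by rw [hidemM]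
    · -- y ≤ 1 ≤ x
      rcases le_total (x * y) 1 with hz | hz
      · right
        refine le_antisymm ?_ ?_
        · calc x * y = x * (y * y) := by rw [hidemM]
            _ = (x * y) * y := (mul_assoc _ _ _).symm
            _ ≤ 1 * y := hr _ _ _ hz
            _ = y := one_mul y
        · calc y = 1 * y := (one_mul y).symm
            _ ≤ x * y := hr _ _ _ hx
      · left
        refine le_antisymm ?_ ?_
        · calc x * y ≤ x * 1 := hl _ _ _ hy
            _ = x := mul_one x
        · calc x = x * 1 := (mul_one x).symm
            _ ≤ x * (x * y) := hl _ _ _ hz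
            _ = x * x * y := (mul_assoc _ _ _).symm
            _ = x * y := by rw [hidemM]
    · -- both ≥ 1 : product is the maximum
      rcases le_total x y with h | h
      · right
        refine le_antisymm ?_ ?_
        · calc x * y ≤ y * y := hr _ _ _ h
            _ = y := hidemM y
        · calc y = 1 * y := (one_mul y).symm
            _ ≤ x * y := hr _ _ _ hx
      · left
        refine le_antisymm ?_ ?_
        · calc x * y ≤ x * x := hl _ _ _ h
            _ = x := hidemM x
        · calc x = x * 1 := (mul_one x).symm
            _ ≤ x * y := hl _ _ _ hy
  -- the section
  set g : N → M := fun n => if n = 1 then 1 else Function.surjInv hfsurj n with hgdef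
  have hfg : ∀ n, f (g n) = n := by
    intro n
    by_cases h : n = 1
    · simp [hgdef, h, hfone]
    · simp [hgdef, h, Function.surjInv_eq hfsurj]
  have gone : g 1 = 1 := by simp [hgdef]
  have gmul : ∀ a b : N, g (a * b) = g a * g b := by
    intro a b
    rcases quasi (g a) (g b) with h | h
    · have hab : a * b = a := by
        rw [← hfg a, ← hfg b, ← hfmul, h]
      rw [hab, h]
    · have hab : a * b = b := by
        rw [← hfg a, ← hfg b, ← hfmul, h]
      rw [hab, h]
  have gmono : Monotone g := by
    intro a b hab
    by_contra hcon
    push_neg at hcon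
    have hba : b ≤ a := by
      have := hfmono hcon.le
      rwa [hfg, hfg] at this
    have : a = b := le_antisymm hab hba
    exact absurd (congrArg g this) hcon.ne'
  have ginj : Function.Injective g := by
    intro a b h
    have := congrArg f h
    rwa [hfg, hfg] at this
  exact ⟨g, gmul, gone, gmono, ginj, funext fun n => hfg n⟩
end

section
/- Every finitely generated idempotent distributive ℓ-monoid is finite. Precisely: if M is an idempotent distributive ℓ-monoid and S ⊆ M is a finite subset, then there is a finite subset T ⊆ M containing S and the identity e that is closed under the multiplication ·, the meet ⊓, and the join ⊔. -/
section Band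
variable {M : Type*} [Monoid M]

/-- single-letter sandwich lemma in a band -/
lemma band_g1 (hidem : ∀ a : M, a * a = a) :
    ∀ (p : List M) (t : M), t ∈ p → p.prod * t * p.prod = p.prod := by
  intro p
  induction p using List.reverseRecOn with
  | nil => intro t ht; simp at ht
  | append_singleton p' a ih =>
    intro t ht
    rw [List.mem_append] at ht
    have hprod : (p' ++ [a]).prod = p'.prod * a := by simp
    rcases ht with ht | ht
    · have H := ih t ht
      set P := p'.prod with hP
      rw [hprod]
      calc P * a * t * (P * a) = (P * t * P) * a * t * (P * a) := by rw [H]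
        _ = P * ((t * P * a) * (t * P * a)) := by simp [mul_assoc]
        _ = P * (t * P * a) := by rw [hidem]
        _ = (P * t * P) * a := by simp [mul_assoc]
        _ = P * a := by rw [H]
    · simp at ht; subst ht
      set P := p'.prod with hP
      rw [hprod]
      calc P * t * t * (P * t) = P * (t * t) * (P * t) := by simp [mul_assoc]
        _ = (P * t) * (P * t) := by rw [hidem]
        _ = P * t := hidem _

/-- general sandwich lemma -/
lemma band_g2 (hidem : ∀ a : M, a * a = a) :
    ∀ (x p : List M), (∀ t ∈ x, t ∈ p) → p.prod * x.prod * p.prod = p.prod := by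
  intro x
  induction x with
  | nil => intro p _; simp [hidem]
  | cons t x' ih =>
    intro p hx
    have ht : t ∈ p := hx t (by simp)
    have E := ih (p ++ [t]) (fun s hs => by
      simp only [List.mem_append, List.mem_singleton]
      exact Or.inl (hx s (List.mem_cons_of_mem _ hs)))
    simp only [List.prod_append, List.prod_singleton] at E
    have h1 := band_g1 hidem p t ht
    set P := p.prod with hP
    set X := x'.prod with hX
    have hc : (t :: x').prod = t * X := by simp [hX]
    rw [hc]
    calc P * (t * X) * P = P * t * X * (P * t * P) := by rw [h1]; simp [mul_assoc]
      _ = (P * t * X * (P * t)) * P := by simp [mul_assoc]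
      _ = (P * t) * P := by rw [E]
      _ = P := h1

/-- two-sided absorption -/
lemma band_L (hidem : ∀ a : M, a * a = a) (u v x : List M)
    (hxu : ∀ t ∈ x, t ∈ u) (huv : ∀ t ∈ u, t ∈ v) (hvu : ∀ t ∈ v, t ∈ u) :
    u.prod * x.prod * v.prod = u.prod * v.prod := by
  have h1 : u.prod * v.prod * u.prod = u.prod := band_g2 hidem v u hvu
  have h2 : v.prod * (u.prod * x.prod) * v.prod = v.prod := by
    have := band_g2 hidem (u ++ x) v (by
      intro t ht
      rcases List.mem_append.mp ht with h | h
      · exact huv t h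
      · exact huv t (hxu t h))
    simpa [List.prod_append] using this
  set U := u.prod; set V := v.prod; set X := x.prod
  calc U * X * V = (U * V * U) * X * V := by rw [h1]
    _ = U * (V * (U * X) * V) := by simp [mul_assoc]
    _ = U * V := by rw [h2]

/-- minimal full prefix decomposition -/
lemma exists_prefix : ∀ (l : List M), l ≠ [] →
    ∃ p a r, l = p ++ a :: r ∧ a ∉ p ∧ ∀ t ∈ l, t ∈ a :: p := by
  intro l
  induction l using List.reverseRecOn with
  | nil => intro h; exact absurd rfl h
  | append_singleton l' x ih =>
    intro _
    by_cases h' : l' = []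
    · subst h'
      exact ⟨[], x, [], by simp, by simp, by simp⟩
    · by_cases hx : x ∈ l'
      · obtain ⟨p, a, r, hdec, hap, hcov⟩ := ih h'
        refine ⟨p, a, r ++ [x], by simp [hdec], hap, ?_⟩
        intro t ht
        rcases List.mem_append.mp ht with h | h
        · exact hcov t h
        · simp at h; subst h; exact hcov t hx
      · refine ⟨l', x, [], by simp, hx, ?_⟩
        intro t ht
        rcases List.mem_append.mp ht with h | h
        · exact List.mem_cons_of_mem _ h
        · simp at h; subst h; exact List.mem_cons_self

/-- minimal full suffix decomposition -/
lemma exists_suffix : ∀ (l : List M), l ≠ [] →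
    ∃ r b q, l = r ++ b :: q ∧ b ∉ q ∧ ∀ t ∈ l, t ∈ b :: q := by
  intro l
  induction l with
  | nil => intro h; exact absurd rfl h
  | cons x l' ih =>
    intro _
    by_cases h' : l' = []
    · subst h'
      exact ⟨[], x, [], by simp, by simp, by simp⟩
    · by_cases hx : x ∈ l'
      · obtain ⟨r, b, q, hdec, hbq, hcov⟩ := ih h'
        refine ⟨x :: r, b, q, by simp [hdec], hbq, ?_⟩
        intro t ht
        rcases List.mem_cons.mp ht with h | h
        · subst h; exact hcov t hx
        · exact hcov t h
      · refine ⟨[], x, l', by simp, hx, ?_⟩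
        intro t ht
        exact ht

end Band

section BDef
variable {M : Type*} [Monoid M] [DecidableEq M]

/-- recursive finite bound for products of words with given content -/
def Bset : Finset M → Finset M := fun C =>
  C.attach.biUnion fun a =>
    C.attach.biUnion fun b =>
      ((insert (1 : M) (Bset (C.erase a.1))) ×ˢ (insert (1 : M) (Bset (C.erase b.1)))).image
        fun pq => pq.1 * a.1 * b.1 * pq.2
termination_by C => C.card
decreasing_by
  · exact Finset.card_erase_lt_of_mem a.2
  · exact Finset.card_erase_lt_of_mem b.2

lemma mem_Bset_intro {C : Finset M} {a b x y : M} (ha : a ∈ C) (hb : b ∈ C)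
    (hx : x ∈ insert (1 : M) (Bset (C.erase a))) (hy : y ∈ insert (1 : M) (Bset (C.erase b))) :
    x * a * b * y ∈ Bset C := by
  rw [Bset]
  refine Finset.mem_biUnion.mpr ⟨⟨a, ha⟩, Finset.mem_attach _ _, ?_⟩
  refine Finset.mem_biUnion.mpr ⟨⟨b, hb⟩, Finset.mem_attach _ _, ?_⟩
  exact Finset.mem_image.mpr ⟨(x, y), Finset.mem_product.mpr ⟨hx, hy⟩, rfl⟩

lemma Bset_spec : ∀ (n : ℕ) (C : Finset M), C.card ≤ n → ∀ x ∈ Bset C,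
    ∃ l : List M, (∀ t ∈ l, t ∈ C) ∧ l.prod = x := by
  intro n
  induction n with
  | zero =>
    intro C hC x hx
    have : C = ∅ := Finset.card_eq_zero.mp (Nat.le_zero.mp hC)
    subst this
    rw [Bset] at hx
    simp at hx
  | succ n ih =>
    intro C hC x hx
    rw [Bset] at hx
    simp only [Finset.mem_biUnion, Finset.mem_attach, true_and, Finset.mem_image,
      Finset.mem_product] at hx
    obtain ⟨a, b, ⟨p, q⟩, ⟨hp, hq⟩, hxeq⟩ := hx
    have hcard : ∀ c : M, c ∈ C → (C.erase c).card ≤ n := by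
      intro c hc
      have := Finset.card_erase_lt_of_mem hc
      omega
    have getlist : ∀ (c : M) (z : M), c ∈ C → z ∈ insert (1 : M) (Bset (C.erase c)) →
        ∃ l : List M, (∀ t ∈ l, t ∈ C) ∧ l.prod = z := by
      intro c z hc hz
      rcases Finset.mem_insert.mp hz with h | h
      · exact ⟨[], by simp, by simp [h]⟩
      · obtain ⟨l, hl, hl2⟩ := ih (C.erase c) (hcard c hc) z h
        exact ⟨l, fun t ht => Finset.mem_of_mem_erase (hl t ht), hl2⟩
    obtain ⟨lp, hlp, hlp2⟩ := getlist a.1 p a.2 hp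
    obtain ⟨lq, hlq, hlq2⟩ := getlist b.1 q b.2 hq
    refine ⟨lp ++ a.1 :: b.1 :: lq, ?_, ?_⟩
    · intro t ht
      rcases List.mem_append.mp ht with h | h
      · exact hlp t h
      · rcases List.mem_cons.mp h with h | h
        · subst h; exact a.2
        · rcases List.mem_cons.mp h with h | h
          · subst h; exact b.2
          · exact hlq t h
    · rw [← hxeq, ← hlp2, ← hlq2]
      simp [mul_assoc]
end BDef

section Main
variable {M : Type*} [Monoid M] [DecidableEq M]

lemma prod_mem_Bset (hidem : ∀ a : M, a * a = a) :
    ∀ (n : ℕ) (l : List M), l ≠ [] → l.toFinset.card ≤ n → l.prod ∈ Bset l.toFinset := by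
  intro n
  induction n with
  | zero =>
    intro l hl hcard
    exfalso
    have : l.toFinset.Nonempty := by
      cases l with
      | nil => exact absurd rfl hl
      | cons x l' => exact ⟨x, by simp⟩
    have := Finset.card_pos.mpr this
    omega
  | succ n ih =>
    intro l hl hcard
    set C := l.toFinset with hC
    obtain ⟨p, a, r, hdec1, hap, hcov1⟩ := exists_prefix l hl
    obtain ⟨r', b, q, hdec2, hbq, hcov2⟩ := exists_suffix l hl
    have haC : a ∈ C := by rw [hC, List.mem_toFinset, hdec1]; simp
    have hbC : b ∈ C := by rw [hC, List.mem_toFinset, hdec2]; simp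
    -- the key product identity
    have hkey : l.prod = (p ++ [a]).prod * (b :: q).prod := by
      have hL := band_L hidem (p ++ [a]) (b :: q) (r ++ r')
        (by
          intro t ht
          have htl : t ∈ l := by
            rcases List.mem_append.mp ht with h | h
            · rw [hdec1]; simp [h]
            · rw [hdec2]; simp [h]
          have := hcov1 t htl
          simpa [List.mem_append, or_comm] using this)
        (by
          intro t ht
          have htl : t ∈ l := by
            rw [hdec1]
            rcases List.mem_append.mp ht with h | h
            · simp [h]
            · simp at h; simp [h]
          exact hcov2 t htl)
        (by
          intro t ht
          have htl : t ∈ l := by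
            rw [hdec2]
            rcases List.mem_cons.mp ht with h | h
            · simp [h]
            · simp [h]
          have := hcov1 t htl
          simpa [List.mem_append, or_comm] using this)
      have e1 : l.prod = (p ++ [a]).prod * r.prod := by
        rw [hdec1]; simp [List.prod_append, mul_assoc]
      have e2 : l.prod = r'.prod * (b :: q).prod := by
        rw [hdec2]; simp [List.prod_append, mul_assoc]
      calc l.prod = l.prod * l.prod := (hidem _).symm
        _ = ((p ++ [a]).prod * r.prod) * (r'.prod * (b :: q).prod) := by rw [← e1, ← e2]
        _ = (p ++ [a]).prod * (r ++ r').prod * (b :: q).prod := by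
            rw [List.prod_append]; simp [mul_assoc]
        _ = (p ++ [a]).prod * (b :: q).prod := hL
    have hp : p.prod ∈ insert (1 : M) (Bset (C.erase a)) := by
      by_cases hp0 : p = []
      · subst hp0; simp
      · have hpt : p.toFinset = C.erase a := by
          ext t
          rw [Finset.mem_erase, hC, List.mem_toFinset, List.mem_toFinset]
          constructor
          · intro ht
            refine ⟨fun h => hap (h ▸ ht), ?_⟩
            rw [hdec1]; simp [ht]
          · rintro ⟨hne, htl⟩
            rcases List.mem_cons.mp (hcov1 t htl) with h | h
            · exact absurd h hne
            · exact h
        have hcard' : p.toFinset.card ≤ n := by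
          rw [hpt]
          have h1 := Finset.card_erase_lt_of_mem haC
          omega
        have := ih p hp0 hcard'
        rw [hpt] at this
        exact Finset.mem_insert_of_mem this
    have hq : q.prod ∈ insert (1 : M) (Bset (C.erase b)) := by
      by_cases hq0 : q = []
      · subst hq0; simp
      · have hqt : q.toFinset = C.erase b := by
          ext t
          rw [Finset.mem_erase, hC, List.mem_toFinset, List.mem_toFinset]
          constructor
          · intro ht
            refine ⟨fun h => hbq (h ▸ ht), ?_⟩
            rw [hdec2]; simp [ht]
          · rintro ⟨hne, htl⟩
            rcases List.mem_cons.mp (hcov2 t htl) with h | h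
            · exact absurd h hne
            · exact h
        have hcard' : q.toFinset.card ≤ n := by
          rw [hqt]
          have h1 := Finset.card_erase_lt_of_mem hbC
          omega
        have := ih q hq0 hcard'
        rw [hqt] at this
        exact Finset.mem_insert_of_mem this
    have := mem_Bset_intro haC hbC hp hq
    have heq : p.prod * a * b * q.prod = l.prod := by
      rw [hkey]; simp [List.prod_append, mul_assoc]
    rwa [heq] at this

end Main

section MonClosure
variable {M : Type*} [Monoid M] [DecidableEq M]

/-- the (finite superset of the) submonoid generated by S -/
def Fm (S : Finset M) : Finset M := insert 1 (S.powerset.biUnion Bset)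

lemma mem_Fm_iff (hidem : ∀ a : M, a * a = a) {S : Finset M} {x : M} :
    x ∈ Fm S ↔ ∃ l : List M, (∀ t ∈ l, t ∈ S) ∧ l.prod = x := by
  constructor
  · intro hx
    rcases Finset.mem_insert.mp hx with h | h
    · exact ⟨[], by simp, by simp [h]⟩
    · obtain ⟨C, hC, hxC⟩ := Finset.mem_biUnion.mp h
      obtain ⟨l, hl, hl2⟩ := Bset_spec C.card C le_rfl x hxC
      exact ⟨l, fun t ht => Finset.mem_powerset.mp hC (hl t ht), hl2⟩
  · rintro ⟨l, hl, rfl⟩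
    by_cases h0 : l = []
    · subst h0; simp [Fm]
    · refine Finset.mem_insert_of_mem (Finset.mem_biUnion.mpr ⟨l.toFinset, ?_, ?_⟩)
      · exact Finset.mem_powerset.mpr (fun t ht => hl t (List.mem_toFinset.mp ht))
      · exact prod_mem_Bset hidem l.toFinset.card l h0 le_rfl

lemma one_mem_Fm {S : Finset M} : (1 : M) ∈ Fm S := Finset.mem_insert_self _ _

lemma subset_Fm (hidem : ∀ a : M, a * a = a) {S : Finset M} : S ⊆ Fm S := by
  intro s hs
  exact (mem_Fm_iff hidem).mpr ⟨[s], by simpa using hs, by simp⟩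

lemma mul_mem_Fm (hidem : ∀ a : M, a * a = a) {S : Finset M} {x y : M}
    (hx : x ∈ Fm S) (hy : y ∈ Fm S) : x * y ∈ Fm S := by
  obtain ⟨l, hl, rfl⟩ := (mem_Fm_iff hidem).mp hx
  obtain ⟨l', hl', rfl⟩ := (mem_Fm_iff hidem).mp hy
  refine (mem_Fm_iff hidem).mpr ⟨l ++ l', ?_, by simp⟩
  intro t ht
  rcases List.mem_append.mp ht with h | h
  · exact hl t h
  · exact hl' t h

end MonClosure

section LatticeClosure
variable {M : Type*} [Lattice M] [DecidableEq M]

/-- infima of nonempty subsets -/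
def infsOf (F : Finset M) : Finset M :=
  (F.powerset.filter Finset.Nonempty).attach.image fun G =>
    G.1.inf' (Finset.mem_filter.mp G.2).2 id

/-- suprema of nonempty subsets -/
def supsOf (F : Finset M) : Finset M :=
  (F.powerset.filter Finset.Nonempty).attach.image fun G =>
    G.1.sup' (Finset.mem_filter.mp G.2).2 id

lemma mem_infsOf_intro {F G : Finset M} (hG : G ⊆ F) (h : G.Nonempty) :
    G.inf' h id ∈ infsOf F := by
  refine Finset.mem_image.mpr ⟨⟨G, Finset.mem_filter.mpr ⟨Finset.mem_powerset.mpr hG, h⟩⟩,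
    Finset.mem_attach _ _, rfl⟩

lemma mem_infsOf_elim {F : Finset M} {x : M} (hx : x ∈ infsOf F) :
    ∃ (G : Finset M) (h : G.Nonempty), G ⊆ F ∧ G.inf' h id = x := by
  obtain ⟨G, _, hGx⟩ := Finset.mem_image.mp hx
  exact ⟨G.1, (Finset.mem_filter.mp G.2).2,
    Finset.mem_powerset.mp (Finset.mem_filter.mp G.2).1, hGx⟩

lemma mem_supsOf_intro {F G : Finset M} (hG : G ⊆ F) (h : G.Nonempty) :
    G.sup' h id ∈ supsOf F := by
  refine Finset.mem_image.mpr ⟨⟨G, Finset.mem_filter.mpr ⟨Finset.mem_powerset.mpr hG, h⟩⟩,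
    Finset.mem_attach _ _, rfl⟩

lemma mem_supsOf_elim {F : Finset M} {x : M} (hx : x ∈ supsOf F) :
    ∃ (G : Finset M) (h : G.Nonempty), G ⊆ F ∧ G.sup' h id = x := by
  obtain ⟨G, _, hGx⟩ := Finset.mem_image.mp hx
  exact ⟨G.1, (Finset.mem_filter.mp G.2).2,
    Finset.mem_powerset.mp (Finset.mem_filter.mp G.2).1, hGx⟩

lemma subset_infsOf {F : Finset M} : F ⊆ infsOf F := by
  intro a ha
  have := mem_infsOf_intro (F := F) (G := {a}) (by simpa using ha) (Finset.singleton_nonempty a)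
  simpa using this

lemma subset_supsOf {F : Finset M} : F ⊆ supsOf F := by
  intro a ha
  have := mem_supsOf_intro (F := F) (G := {a}) (by simpa using ha) (Finset.singleton_nonempty a)
  simpa using this

lemma inf_mem_infsOf {F : Finset M} {x y : M} (hx : x ∈ infsOf F) (hy : y ∈ infsOf F) :
    x ⊓ y ∈ infsOf F := by
  obtain ⟨G, h, hGF, rfl⟩ := mem_infsOf_elim hx
  obtain ⟨G', h', hGF', rfl⟩ := mem_infsOf_elim hy
  have := mem_infsOf_intro (F := F) (G := G ∪ G') (Finset.union_subset hGF hGF')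
    (h.mono Finset.subset_union_left)
  rwa [Finset.inf'_union h h'] at this

lemma sup_mem_supsOf {F : Finset M} {x y : M} (hx : x ∈ supsOf F) (hy : y ∈ supsOf F) :
    x ⊔ y ∈ supsOf F := by
  obtain ⟨G, h, hGF, rfl⟩ := mem_supsOf_elim hx
  obtain ⟨G', h', hGF', rfl⟩ := mem_supsOf_elim hy
  have := mem_supsOf_intro (F := F) (G := G ∪ G') (Finset.union_subset hGF hGF')
    (h.mono Finset.subset_union_left)
  rwa [Finset.sup'_union h h'] at this

/-- generic binary-operation closure for `infsOf` -/
lemma binop_mem_infsOf {F : Finset M} (f : M → M → M)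
    (hl : ∀ a b c : M, f a (b ⊓ c) = f a b ⊓ f a c)
    (hr : ∀ a b c : M, f (a ⊓ b) c = f a c ⊓ f b c)
    (hF : ∀ x ∈ F, ∀ y ∈ F, f x y ∈ F)
    {x y : M} (hx : x ∈ infsOf F) (hy : y ∈ infsOf F) : f x y ∈ infsOf F := by
  obtain ⟨G, h, hGF, rfl⟩ := mem_infsOf_elim hx
  obtain ⟨G', h', hGF', rfl⟩ := mem_infsOf_elim hy
  have key : f (G.inf' h id) (G'.inf' h' id)
      = (G ×ˢ G').inf' (h.product h') (fun p => f p.1 p.2) := by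
    rw [Finset.apply_inf'_eq_inf'_comp h (fun t => f t (G'.inf' h' id))
      (fun u v => hr u v _)]
    rw [Finset.inf'_product_left]
    exact Finset.inf'_congr h rfl (fun a _ => by
      exact Finset.apply_inf'_eq_inf'_comp h' (fun t => f a t) (fun u v => hl a u v))
  rw [key]
  have himg : ((G ×ˢ G').image fun p => f p.1 p.2) ⊆ F := by
    intro z hz
    obtain ⟨p, hp, rfl⟩ := Finset.mem_image.mp hz
    obtain ⟨h1, h2⟩ := Finset.mem_product.mp hp
    exact hF _ (hGF h1) _ (hGF' h2)
  have := mem_infsOf_intro himg ((h.product h').image _)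
  rwa [Finset.inf'_image] at this

/-- generic binary-operation closure for `supsOf` -/
lemma binop_mem_supsOf {F : Finset M} (f : M → M → M)
    (hl : ∀ a b c : M, f a (b ⊔ c) = f a b ⊔ f a c)
    (hr : ∀ a b c : M, f (a ⊔ b) c = f a c ⊔ f b c)
    (hF : ∀ x ∈ F, ∀ y ∈ F, f x y ∈ F)
    {x y : M} (hx : x ∈ supsOf F) (hy : y ∈ supsOf F) : f x y ∈ supsOf F := by
  obtain ⟨G, h, hGF, rfl⟩ := mem_supsOf_elim hx
  obtain ⟨G', h', hGF', rfl⟩ := mem_supsOf_elim hy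
  have key : f (G.sup' h id) (G'.sup' h' id)
      = (G ×ˢ G').sup' (h.product h') (fun p => f p.1 p.2) := by
    rw [Finset.comp_sup'_eq_sup'_comp h (fun t => f t (G'.sup' h' id))
      (fun u v => hr u v _)]
    rw [Finset.sup'_product_left]
    exact Finset.sup'_congr h rfl (fun a _ => by
      exact Finset.comp_sup'_eq_sup'_comp h' (fun t => f a t) (fun u v => hl a u v))
  rw [key]
  have himg : ((G ×ˢ G').image fun p => f p.1 p.2) ⊆ F := by
    intro z hz
    obtain ⟨p, hp, rfl⟩ := Finset.mem_image.mp hz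
    obtain ⟨h1, h2⟩ := Finset.mem_product.mp hp
    exact hF _ (hGF h1) _ (hGF' h2)
  have := mem_supsOf_intro himg ((h.product h').image _)
  rwa [Finset.sup'_image] at this

end LatticeClosure

attribute [irreducible] Fm infsOf supsOf

set_option maxHeartbeats 1600000 in
/-- Local finiteness: in an idempotent distributive ℓ-monoid, every finite
subset is contained in a finite subset containing the identity that is
closed under multiplication, meet and join. -/
theorem stmt_8 {M : Type*} [Monoid M] [DistribLattice M]
    (hjoin : ∀ a b c d : M, a * (b ⊔ c) * d = a * b * d ⊔ a * c * d)
    (hmeet : ∀ a b c d : M, a * (b ⊓ c) * d = a * b * d ⊓ a * c * d)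
    (hidem : ∀ a : M, a * a = a)
    (S : Finset M) :
    ∃ T : Finset M, S ⊆ T ∧ (1 : M) ∈ T ∧
      ∀ a ∈ T, ∀ b ∈ T, a * b ∈ T ∧ a ⊓ b ∈ T ∧ a ⊔ b ∈ T := by
  classical
  -- pointwise distribution laws
  have hjl : ∀ a b c : M, a * (b ⊔ c) = a * b ⊔ a * c := fun a b c => by
    simpa using hjoin a b c 1
  have hjr : ∀ a b c : M, (a ⊔ b) * c = a * c ⊔ b * c := fun a b c => by
    simpa using hjoin 1 a b c
  have hml : ∀ a b c : M, a * (b ⊓ c) = a * b ⊓ a * c := fun a b c => by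
    simpa using hmeet a b c 1
  have hmr : ∀ a b c : M, (a ⊓ b) * c = a * c ⊓ b * c := fun a b c => by
    simpa using hmeet 1 a b c
  -- the finite monoid closure, then lattice closure
  set F : Finset M := Fm S with hF
  have hFmul : ∀ x ∈ F, ∀ y ∈ F, x * y ∈ F := fun x hx y hy => mul_mem_Fm hidem hx hy
  set T1 : Finset M := infsOf F with hT1
  have hT1mul : ∀ x ∈ T1, ∀ y ∈ T1, x * y ∈ T1 := fun x hx y hy =>
    binop_mem_infsOf (fun a b => a * b) hml hmr hFmul hx hy
  have hT1inf : ∀ x ∈ T1, ∀ y ∈ T1, x ⊓ y ∈ T1 := fun x hx y hy => inf_mem_infsOf hx hy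
  refine ⟨supsOf T1, ?_, ?_, ?_⟩
  · intro s hs
    exact subset_supsOf (subset_infsOf (subset_Fm hidem hs))
  · exact subset_supsOf (subset_infsOf one_mem_Fm)
  · intro a ha b hb
    refine ⟨?_, ?_, ?_⟩
    · exact binop_mem_supsOf (fun a b => a * b) hjl hjr hT1mul ha hb
    · exact binop_mem_supsOf (fun a b => a ⊓ b) (fun a b c => inf_sup_left a b c)
        (fun a b c => inf_sup_right a b c) hT1inf ha hb
    · exact sup_mem_supsOf ha hb
end

section
/- For n ≥ 1, let I(n) denote the number of isomorphism classes of idempotent linearly ordered monoid structures on an n-element set. Then I(1) = 1, I(2) = 2, and I(n) = 2·I(n−1) + 2·I(n−2) for all n > 2. -/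
/-- An idempotent linearly ordered monoid structure on the `n`-element set
`Fin n`. -/
structure ILOM (n : ℕ) where
  mul : Fin n → Fin n → Fin n
  one : Fin n
  le : Fin n → Fin n → Prop
  mul_assoc : ∀ a b c, mul (mul a b) c = mul a (mul b c)
  one_mul : ∀ a, mul one a = a
  mul_one : ∀ a, mul a one = a
  le_refl : ∀ a, le a a
  le_trans : ∀ a b c, le a b → le b c → le a c
  le_antisymm : ∀ a b, le a b → le b a → a = b
  le_total : ∀ a b, le a b ∨ le b a
  mono : ∀ a b c d, le a b → le (mul (mul c a) d) (mul (mul c b) d)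
  idem : ∀ a, mul a a = a

/-- Isomorphism of such structures: a bijection that is a monoid isomorphism
and an order isomorphism. -/
def ILOM.Iso {n : ℕ} (A B : ILOM n) : Prop :=
  ∃ f : Fin n ≃ Fin n,
    (∀ a b, f (A.mul a b) = B.mul (f a) (f b)) ∧
    f A.one = B.one ∧
    ∀ a b, A.le a b ↔ B.le (f a) (f b)

/-- The number of isomorphism classes of idempotent linearly ordered monoid
structures on an `n`-element set. -/
noncomputable def numILOM (n : ℕ) : ℕ := Nat.card (Quot (ILOM.Iso (n := n)))

structure CM (n : ℕ) where
  mul : Fin n → Fin n → Fin n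
  one : Fin n
  assoc : ∀ a b c, mul (mul a b) c = mul a (mul b c)
  one_mul : ∀ a, mul one a = a
  mul_one : ∀ a, mul a one = a
  monoL : ∀ {a b : Fin n} (c : Fin n), a ≤ b → mul a c ≤ mul b c
  monoR : ∀ {a b : Fin n} (c : Fin n), a ≤ b → mul c a ≤ mul c b
  idem : ∀ a, mul a a = a

namespace CM
variable {n : ℕ} (c : CM n)

theorem ext' {A B : CM n} (h1 : A.mul = B.mul) (h2 : A.one = B.one) : A = B := by
  cases A; cases B; simp_all

theorem mul_min {a b : Fin n} (ha : a ≤ c.one) (hb : b ≤ c.one) :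
    c.mul a b = min a b := by
  rcases le_total a b with h | h
  · rw [min_eq_left h]
    refine le_antisymm ?_ ?_
    · calc c.mul a b ≤ c.mul a c.one := c.monoR _ hb
        _ = a := c.mul_one a
    · calc a = c.mul a a := (c.idem a).symm
        _ ≤ c.mul a b := c.monoR _ h
  · rw [min_eq_right h]
    refine le_antisymm ?_ ?_
    · calc c.mul a b ≤ c.mul c.one b := c.monoL _ ha
        _ = b := c.one_mul b
    · calc b = c.mul b b := (c.idem b).symm
        _ ≤ c.mul a b := c.monoL _ h

theorem mul_max {a b : Fin n} (ha : c.one ≤ a) (hb : c.one ≤ b) :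
    c.mul a b = max a b := by
  rcases le_total a b with h | h
  · rw [max_eq_right h]
    refine le_antisymm ?_ ?_
    · calc c.mul a b ≤ c.mul b b := c.monoL _ h
        _ = b := c.idem b
    · calc b = c.mul c.one b := (c.one_mul b).symm
        _ ≤ c.mul a b := c.monoL _ ha
  · rw [max_eq_left h]
    refine le_antisymm ?_ ?_
    · calc c.mul a b ≤ c.mul a a := c.monoR _ h
        _ = a := c.idem a
    · calc a = c.mul a c.one := (c.mul_one a).symm
        _ ≤ c.mul a b := c.monoR _ hb

theorem select (x y : Fin n) : c.mul x y = x ∨ c.mul x y = y := by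
  have hxz : c.mul x (c.mul x y) = c.mul x y := by
    rw [← c.assoc, c.idem]
  have hzy : c.mul (c.mul x y) y = c.mul x y := by
    rw [c.assoc, c.idem]
  rcases le_total x c.one with hx | hx <;> rcases le_total y c.one with hy | hy
  · rw [c.mul_min hx hy]
    rcases le_total x y with h | h
    · exact Or.inl (min_eq_left h)
    · exact Or.inr (min_eq_right h)
  · -- x ≤ one ≤ y
    have hxle : x ≤ c.mul x y := by
      calc x = c.mul x c.one := (c.mul_one x).symm
        _ ≤ c.mul x y := c.monoR _ hy
    have hzley : c.mul x y ≤ y := by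
      calc c.mul x y ≤ c.mul c.one y := c.monoL _ hx
        _ = y := c.one_mul y
    rcases le_total (c.mul x y) c.one with hz | hz
    · left
      have := c.mul_min hx hz
      rw [hxz, min_eq_left hxle] at this
      exact this
    · right
      have := c.mul_max hz hy
      rw [hzy, max_eq_right hzley] at this
      exact this
  · -- y ≤ one ≤ x
    have hyle : y ≤ c.mul x y := by
      calc y = c.mul c.one y := (c.one_mul y).symm
        _ ≤ c.mul x y := c.monoL _ hx
    have hzlex : c.mul x y ≤ x := by
      calc c.mul x y ≤ c.mul x c.one := c.monoR _ hy
        _ = x := c.mul_one x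
    rcases le_total (c.mul x y) c.one with hz | hz
    · right
      have := c.mul_min hz hy
      rw [hzy, min_eq_right hyle] at this
      exact this
    · left
      have := c.mul_max hx hz
      rw [hxz, max_eq_left hzlex] at this
      exact this
  · rw [c.mul_max hx hy]
    rcases le_total x y with h | h
    · exact Or.inr (max_eq_right h)
    · exact Or.inl (max_eq_left h)

end CM

namespace CM
variable {n m : ℕ}

/-- raw restricted multiplication -/
def rmul (c : CM n) (f : Fin m ↪o Fin n) (i j : Fin m) : Fin m :=
  if c.mul (f i) (f j) = f i then i else j

theorem rmul_key (c : CM n) (f : Fin m ↪o Fin n) (i j : Fin m) :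
    f (rmul c f i j) = c.mul (f i) (f j) := by
  unfold rmul
  split
  · next h => rw [h]
  · next h => rcases c.select (f i) (f j) with h' | h' <;> simp_all

/-- Restriction of a structure along an order embedding whose image contains the unit. -/
def restrict (c : CM n) (f : Fin m ↪o Fin n) (e : Fin m) (he : f e = c.one) : CM m where
  mul := rmul c f
  one := e
  assoc := by
    intro a b d
    apply f.injective
    simp only [rmul_key]
    exact c.assoc _ _ _
  one_mul := by
    intro a
    apply f.injective
    rw [rmul_key, he, c.one_mul]
  mul_one := by
    intro a
    apply f.injective
    rw [rmul_key, he, c.mul_one]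
  monoL := by
    intro a b d h
    have := c.monoL (f d) (f.monotone h)
    rw [← rmul_key c f a d, ← rmul_key c f b d] at this
    exact f.le_iff_le.mp this
  monoR := by
    intro a b d h
    have := c.monoR (f d) (f.monotone h)
    rw [← rmul_key c f d a, ← rmul_key c f d b] at this
    exact f.le_iff_le.mp this
  idem := by
    intro a
    apply f.injective
    rw [rmul_key, c.idem]

theorem restrict_key (c : CM n) (f : Fin m ↪o Fin n) (e : Fin m) (he : f e = c.one)
    (i j : Fin m) : f ((c.restrict f e he).mul i j) = c.mul (f i) (f j) :=
  rmul_key c f i j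

theorem restrict_one (c : CM n) (f : Fin m ↪o Fin n) (e : Fin m) (he : f e = c.one) :
    (c.restrict f e he).one = e := rfl

section Absorb
variable {k : ℕ} (c : CM (k + 2))

local notation "t" => Fin.last (k + 1)

theorem bot_absL (h : c.mul 0 t = 0) (y : Fin (k+2)) : c.mul 0 y = 0 := by
  have := c.monoR (a := y) (b := t) 0 (Fin.le_last y)
  rw [h] at this
  exact Fin.le_zero_iff.mp this

theorem bot_absR (h : c.mul t 0 = 0) (y : Fin (k+2)) : c.mul y 0 = 0 := by
  have := c.monoL (a := y) (b := t) 0 (Fin.le_last y)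
  rw [h] at this
  exact Fin.le_zero_iff.mp this

theorem top_absL (h : c.mul 0 t = t) (y : Fin (k+2)) : c.mul y t = t := by
  have := c.monoL (a := (0 : Fin (k+2))) (b := y) t (Fin.zero_le y)
  rw [h] at this
  exact le_antisymm (Fin.le_last _) this

theorem top_absR (h : c.mul t 0 = t) (y : Fin (k+2)) : c.mul t y = t := by
  have := c.monoR (a := (0 : Fin (k+2))) (b := y) t (Fin.zero_le y)
  rw [h] at this
  exact le_antisymm (Fin.le_last _) this

theorem one_ne_bot (h : c.mul 0 t = 0) : c.one ≠ 0 := by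
  intro he
  rw [← he, c.one_mul] at h
  exact (Fin.last_pos).ne' (h.trans he)

theorem one_ne_bot' (h : c.mul t 0 = 0) : c.one ≠ 0 := by
  intro he
  rw [← he, c.mul_one] at h
  exact (Fin.last_pos).ne' (h.trans he)

theorem one_ne_top (h : c.mul 0 t = t) : c.one ≠ t := by
  intro he
  rw [← he, c.mul_one] at h
  exact (Fin.last_pos).ne (h.trans he)

theorem one_ne_top' (h : c.mul t 0 = t) : c.one ≠ t := by
  intro he
  rw [← he, c.one_mul] at h
  exact (Fin.last_pos).ne (h.trans he)

/-- Case L (left-zero pair at the extremes): inner elements are absorbed into `0` on the right. -/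
theorem caseL_mul_bot (h1 : c.mul 0 t = 0) (h2 : c.mul t 0 = t) {x : Fin (k+2)}
    (hx0 : x ≠ 0) (hxt : x ≠ t) : c.mul x 0 = 0 := by
  rcases le_total x c.one with hx | hx
  · have := c.mul_min hx (Fin.zero_le c.one)
    rw [min_eq_right (Fin.zero_le x)] at this
    exact this
  · by_contra hne
    rcases c.select x 0 with h | h
    · -- c.mul x 0 = x; derive c.mul x t = x, but c.mul x t = max x t = t
      have hxt' : c.mul x t = x := by
        have := c.assoc x 0 t
        rw [h, h1, h] at this
        exact this
      have := c.mul_max hx (le_trans hx (Fin.le_last _))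
      rw [hxt', max_eq_right (Fin.le_last x)] at this
      exact hxt this
    · exact hne h

theorem caseL_mul_top (h1 : c.mul 0 t = 0) (h2 : c.mul t 0 = t) {x : Fin (k+2)}
    (hx0 : x ≠ 0) (hxt : x ≠ t) : c.mul x t = t := by
  rcases le_total c.one x with hx | hx
  · have := c.mul_max hx (le_trans hx (Fin.le_last _))
    rw [max_eq_right (Fin.le_last x)] at this
    exact this
  · rcases c.select x t with h | h
    · -- c.mul x t = x; then c.mul x 0 = x contradicting caseL_mul_bot
      exfalso
      have hxb : c.mul x 0 = x := by
        have := c.assoc x t 0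
        rw [h, h2, h] at this
        exact this
      rw [c.caseL_mul_bot h1 h2 hx0 hxt] at hxb
      exact hx0 hxb.symm
    · exact h

/-- Case R (right-zero pair at the extremes). -/
theorem caseR_mul_bot (h1 : c.mul 0 t = t) (h2 : c.mul t 0 = 0) {x : Fin (k+2)}
    (hx0 : x ≠ 0) (hxt : x ≠ t) : c.mul 0 x = 0 := by
  rcases le_total x c.one with hx | hx
  · have := c.mul_min (Fin.zero_le c.one) hx
    rw [min_eq_left (Fin.zero_le x)] at this
    exact this
  · by_contra hne
    rcases c.select 0 x with h | h
    · exact hne h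
    · have hxt' : c.mul t x = x := by
        have := c.assoc t 0 x
        rw [h2, h] at this
        exact this.symm
      have := c.mul_max (le_trans hx (Fin.le_last _)) hx
      rw [hxt', max_eq_left (Fin.le_last x)] at this
      exact hxt this

theorem caseR_mul_top (h1 : c.mul 0 t = t) (h2 : c.mul t 0 = 0) {x : Fin (k+2)}
    (hx0 : x ≠ 0) (hxt : x ≠ t) : c.mul t x = t := by
  rcases le_total c.one x with hx | hx
  · have := c.mul_max (le_trans hx (Fin.le_last _)) hx
    rw [max_eq_left (Fin.le_last x)] at this
    exact this
  · rcases c.select t x with h | h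
    · exact h
    · exfalso
      have hxb : c.mul 0 x = x := by
        have := c.assoc 0 t x
        rw [h1, h] at this
        exact this.symm
      rw [c.caseR_mul_bot h1 h2 hx0 hxt] at hxb
      exact hx0 hxb.symm

end Absorb
end CM

namespace CM
variable {m : ℕ}

/-! ### The three embeddings -/

def embU (m : ℕ) : Fin (m+1) ↪o Fin (m+2) := Fin.succOrderEmb (m+1)
def embR (m : ℕ) : Fin (m+1) ↪o Fin (m+2) := Fin.castSuccOrderEmb
def embD (m : ℕ) : Fin (m+1) ↪o Fin (m+3) :=
  OrderEmbedding.ofStrictMono (fun i => (i.castSucc).succ)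
    (fun _ _ h => Fin.strictMono_succ (Fin.strictMono_castSucc h))

@[simp] theorem embU_apply (i : Fin (m+1)) : embU m i = i.succ := rfl
@[simp] theorem embR_apply (i : Fin (m+1)) : embR m i = i.castSucc := rfl
@[simp] theorem embD_apply (i : Fin (m+1)) : embD m i = (i.castSucc).succ := rfl

/-! ### Extension with an absorbing bottom -/

def umul (c : CM (m+1)) : Fin (m+2) → Fin (m+2) → Fin (m+2) := fun x y =>
  Fin.cases 0 (fun i => Fin.cases 0 (fun j => (c.mul i j).succ) y) x

@[simp] theorem umul_zero_left (c : CM (m+1)) (y : Fin (m+2)) : umul c 0 y = 0 := by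
  simp [umul]
@[simp] theorem umul_succ_zero (c : CM (m+1)) (i : Fin (m+1)) : umul c i.succ 0 = 0 := by
  simp [umul]
@[simp] theorem umul_succ_succ (c : CM (m+1)) (i j : Fin (m+1)) :
    umul c i.succ j.succ = (c.mul i j).succ := by
  simp [umul]

@[simp] theorem umul_zero_right (c : CM (m+1)) (x : Fin (m+2)) : umul c x 0 = 0 := by
  induction x using Fin.cases <;> simp

def extU (c : CM (m+1)) : CM (m+2) where
  mul := umul c
  one := c.one.succ
  assoc := by
    intro a b d
    induction a using Fin.cases <;> induction b using Fin.cases <;>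
      induction d using Fin.cases <;> simp [c.assoc]
  one_mul := by
    intro a
    induction a using Fin.cases <;> simp [c.one_mul]
  mul_one := by
    intro a
    induction a using Fin.cases <;> simp [c.mul_one]
  monoL := by
    intro a b d h
    induction a using Fin.cases with
    | zero => simp
    | succ i =>
      induction b using Fin.cases with
      | zero => exact absurd (Fin.le_zero_iff.mp h) (Fin.succ_ne_zero i)
      | succ j =>
        have hij : i ≤ j := by rwa [Fin.succ_le_succ_iff] at h
        induction d using Fin.cases with
        | zero => simp
        | succ k => simpa [Fin.succ_le_succ_iff] using c.monoL k hij
  monoR := by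
    intro a b d h
    induction a using Fin.cases with
    | zero => simp
    | succ i =>
      induction b using Fin.cases with
      | zero => exact absurd (Fin.le_zero_iff.mp h) (Fin.succ_ne_zero i)
      | succ j =>
        have hij : i ≤ j := by rwa [Fin.succ_le_succ_iff] at h
        induction d using Fin.cases with
        | zero => simp
        | succ k => simpa [Fin.succ_le_succ_iff] using c.monoR k hij
  idem := by
    intro a
    induction a using Fin.cases <;> simp [c.idem]

/-! ### Extension with an absorbing top -/

def rmul' (c : CM (m+1)) : Fin (m+2) → Fin (m+2) → Fin (m+2) := fun x y =>
  Fin.lastCases (Fin.last (m+1))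
    (fun i => Fin.lastCases (Fin.last (m+1)) (fun j => (c.mul i j).castSucc) y) x

@[simp] theorem rmul'_last_left (c : CM (m+1)) (y : Fin (m+2)) :
    rmul' c (Fin.last (m+1)) y = Fin.last (m+1) := by simp [rmul']
@[simp] theorem rmul'_cast_last (c : CM (m+1)) (i : Fin (m+1)) :
    rmul' c i.castSucc (Fin.last (m+1)) = Fin.last (m+1) := by simp [rmul']
@[simp] theorem rmul'_cast_cast (c : CM (m+1)) (i j : Fin (m+1)) :
    rmul' c i.castSucc j.castSucc = (c.mul i j).castSucc := by simp [rmul']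

@[simp] theorem rmul'_last_right (c : CM (m+1)) (x : Fin (m+2)) :
    rmul' c x (Fin.last (m+1)) = Fin.last (m+1) := by
  induction x using Fin.lastCases <;> simp

def extR (c : CM (m+1)) : CM (m+2) where
  mul := rmul' c
  one := c.one.castSucc
  assoc := by
    intro a b d
    induction a using Fin.lastCases <;> induction b using Fin.lastCases <;>
      induction d using Fin.lastCases <;> simp [c.assoc]
  one_mul := by
    intro a
    induction a using Fin.lastCases <;> simp [c.one_mul]
  mul_one := by
    intro a
    induction a using Fin.lastCases <;> simp [c.mul_one]
  monoL := by
    intro a b d h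
    induction b using Fin.lastCases with
    | last => simp [Fin.le_last]
    | cast j =>
      induction a using Fin.lastCases with
      | last => exact absurd h (not_le.mpr (Fin.castSucc_lt_last j))
      | cast i =>
        have hij : i ≤ j := by rwa [Fin.castSucc_le_castSucc_iff] at h
        induction d using Fin.lastCases with
        | last => simp
        | cast k => simpa [Fin.castSucc_le_castSucc_iff] using c.monoL k hij
  monoR := by
    intro a b d h
    induction b using Fin.lastCases with
    | last => simp [Fin.le_last]
    | cast j =>
      induction a using Fin.lastCases with
      | last => exact absurd h (not_le.mpr (Fin.castSucc_lt_last j))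
      | cast i =>
        have hij : i ≤ j := by rwa [Fin.castSucc_le_castSucc_iff] at h
        induction d using Fin.lastCases with
        | last => simp
        | cast k => simpa [Fin.castSucc_le_castSucc_iff] using c.monoR k hij
  idem := by
    intro a
    induction a using Fin.lastCases <;> simp [c.idem]

end CM

namespace CM
variable {m : ℕ}

/-- Case eliminator for `Fin (m+3)`: bottom, top, or middle. -/
theorem cases3 {m : ℕ} {P : Fin (m+3) → Prop} (h0 : P 0) (hl : P (Fin.last (m+2)))
    (hm : ∀ i : Fin (m+1), P ((i.castSucc).succ)) : ∀ x, P x := by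
  intro x
  induction x using Fin.cases with
  | zero => exact h0
  | succ i =>
    induction i using Fin.lastCases with
    | last => rw [Fin.succ_last]; exact hl
    | cast j => exact hm j

theorem demb_lt_last (i : Fin (m+1)) : (i.castSucc).succ < Fin.last (m+2) := by
  rw [← Fin.succ_last]
  exact Fin.strictMono_succ (Fin.castSucc_lt_last i)

theorem demb_ne_zero (i : Fin (m+1)) : (i.castSucc).succ ≠ 0 := Fin.succ_ne_zero _

def dlmul (c : CM (m+1)) : Fin (m+3) → Fin (m+3) → Fin (m+3) := fun x y =>
  Fin.cases 0 (fun x' => Fin.lastCases (Fin.last (m+2)) (fun x'' =>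
    Fin.cases 0 (fun y' => Fin.lastCases (Fin.last (m+2))
      (fun y'' => ((c.mul x'' y'').castSucc).succ) y') y) x') x

@[simp] theorem dlmul_zero (c : CM (m+1)) (y : Fin (m+3)) : dlmul c 0 y = 0 := by
  simp [dlmul]
@[simp] theorem dlmul_last (c : CM (m+1)) (y : Fin (m+3)) :
    dlmul c (Fin.last (m+2)) y = Fin.last (m+2) := by
  conv_lhs => rw [← Fin.succ_last]
  simp only [dlmul]
  rw [Fin.cases_succ, Fin.lastCases_last]
@[simp] theorem dlmul_mid_zero (c : CM (m+1)) (i : Fin (m+1)) :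
    dlmul c (i.castSucc).succ 0 = 0 := by simp [dlmul]
@[simp] theorem dlmul_mid_last (c : CM (m+1)) (i : Fin (m+1)) :
    dlmul c (i.castSucc).succ (Fin.last (m+2)) = Fin.last (m+2) := by
  conv_lhs => rw [← Fin.succ_last]
  simp only [dlmul]
  rw [Fin.cases_succ, Fin.lastCases_castSucc, Fin.cases_succ, Fin.lastCases_last]
@[simp] theorem dlmul_mid_mid (c : CM (m+1)) (i j : Fin (m+1)) :
    dlmul c (i.castSucc).succ (j.castSucc).succ = ((c.mul i j).castSucc).succ := by
  simp [dlmul]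

def extDl (c : CM (m+1)) : CM (m+3) where
  mul := dlmul c
  one := ((c.one).castSucc).succ
  assoc := by
    intro a b d
    induction a using cases3 <;> induction b using cases3 <;>
      induction d using cases3 <;> simp [c.assoc]
  one_mul := by
    intro a
    induction a using cases3 <;> simp [c.one_mul]
  mul_one := by
    intro a
    induction a using cases3 <;> simp [c.mul_one]
  monoL := by
    intro a b d h
    induction a using cases3 with
    | h0 => simp
    | hl =>
      rw [Fin.last_le_iff.mp h]
    | hm i =>
      induction b using cases3 with
      | h0 => exact absurd (Fin.le_zero_iff.mp h) (demb_ne_zero i)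
      | hl => simp [Fin.le_last]
      | hm j =>
        have hij : i ≤ j := by
          rwa [Fin.succ_le_succ_iff, Fin.castSucc_le_castSucc_iff] at h
        induction d using cases3 with
        | h0 => simp
        | hl => simp
        | hm k =>
          simp only [dlmul_mid_mid]
          rw [Fin.succ_le_succ_iff, Fin.castSucc_le_castSucc_iff]
          exact c.monoL k hij
  monoR := by
    intro a b d h
    induction d using cases3 with
    | h0 => simp
    | hl => simp
    | hm i =>
      induction a using cases3 with
      | h0 => simp
      | hl =>
        rw [Fin.last_le_iff.mp h]
      | hm j =>
        induction b using cases3 with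
        | h0 => exact absurd (Fin.le_zero_iff.mp h) (demb_ne_zero j)
        | hl => simp [Fin.le_last]
        | hm k =>
          have hjk : j ≤ k := by
            rwa [Fin.succ_le_succ_iff, Fin.castSucc_le_castSucc_iff] at h
          simp only [dlmul_mid_mid]
          rw [Fin.succ_le_succ_iff, Fin.castSucc_le_castSucc_iff]
          exact c.monoR i hjk
  idem := by
    intro a
    induction a using cases3 <;> simp [c.idem]

def drmul (c : CM (m+1)) : Fin (m+3) → Fin (m+3) → Fin (m+3) := fun x y =>
  Fin.cases 0 (fun y' => Fin.lastCases (Fin.last (m+2)) (fun y'' =>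
    Fin.cases 0 (fun x' => Fin.lastCases (Fin.last (m+2))
      (fun x'' => ((c.mul x'' y'').castSucc).succ) x') x) y') y

@[simp] theorem drmul_zero (c : CM (m+1)) (x : Fin (m+3)) : drmul c x 0 = 0 := by
  simp [drmul]
@[simp] theorem drmul_last (c : CM (m+1)) (x : Fin (m+3)) :
    drmul c x (Fin.last (m+2)) = Fin.last (m+2) := by
  conv_lhs => rw [← Fin.succ_last]
  simp only [drmul]
  rw [Fin.cases_succ, Fin.lastCases_last]
@[simp] theorem drmul_zero_mid (c : CM (m+1)) (i : Fin (m+1)) :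
    drmul c 0 (i.castSucc).succ = 0 := by simp [drmul]
@[simp] theorem drmul_last_mid (c : CM (m+1)) (i : Fin (m+1)) :
    drmul c (Fin.last (m+2)) (i.castSucc).succ = Fin.last (m+2) := by
  conv_lhs => rw [← Fin.succ_last]
  simp only [drmul]
  rw [Fin.cases_succ, Fin.lastCases_castSucc, Fin.cases_succ, Fin.lastCases_last]
@[simp] theorem drmul_mid_mid (c : CM (m+1)) (i j : Fin (m+1)) :
    drmul c (i.castSucc).succ (j.castSucc).succ = ((c.mul i j).castSucc).succ := by
  simp [drmul]

def extDr (c : CM (m+1)) : CM (m+3) where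
  mul := drmul c
  one := ((c.one).castSucc).succ
  assoc := by
    intro a b d
    induction a using cases3 <;> induction b using cases3 <;>
      induction d using cases3 <;> simp [c.assoc]
  one_mul := by
    intro a
    induction a using cases3 <;> simp [c.one_mul]
  mul_one := by
    intro a
    induction a using cases3 <;> simp [c.mul_one]
  monoL := by
    intro a b d h
    induction d using cases3 with
    | h0 => simp
    | hl => simp
    | hm i =>
      induction a using cases3 with
      | h0 => simp
      | hl =>
        rw [Fin.last_le_iff.mp h]
      | hm j =>
        induction b using cases3 with
        | h0 => exact absurd (Fin.le_zero_iff.mp h) (demb_ne_zero j)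
        | hl => simp [Fin.le_last]
        | hm k =>
          have hjk : j ≤ k := by
            rwa [Fin.succ_le_succ_iff, Fin.castSucc_le_castSucc_iff] at h
          simp only [drmul_mid_mid]
          rw [Fin.succ_le_succ_iff, Fin.castSucc_le_castSucc_iff]
          exact c.monoL i hjk
  monoR := by
    intro a b d h
    induction a using cases3 with
    | h0 => simp
    | hl =>
      rw [Fin.last_le_iff.mp h]
    | hm i =>
      induction b using cases3 with
      | h0 => exact absurd (Fin.le_zero_iff.mp h) (demb_ne_zero i)
      | hl => simp [Fin.le_last]
      | hm j =>
        have hij : i ≤ j := by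
          rwa [Fin.succ_le_succ_iff, Fin.castSucc_le_castSucc_iff] at h
        induction d using cases3 with
        | h0 => simp
        | hl => simp
        | hm k =>
          simp only [drmul_mid_mid]
          rw [Fin.succ_le_succ_iff, Fin.castSucc_le_castSucc_iff]
          exact c.monoR k hij
  idem := by
    intro a
    induction a using cases3 <;> simp [c.idem]

end CM

namespace CM
variable {m : ℕ}

def resU (c : CM (m+2)) (h : c.one ≠ 0) : CM (m+1) :=
  c.restrict (embU m) (c.one.pred h) (by simp)

def resR (c : CM (m+2)) (h : c.one ≠ Fin.last (m+1)) : CM (m+1) :=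
  c.restrict (embR m) (c.one.castPred h) (by simp)

def resD (c : CM (m+3)) (h0 : c.one ≠ 0) (hl : c.one ≠ Fin.last (m+2)) : CM (m+1) :=
  c.restrict (embD m)
    ((c.one.pred h0).castPred
      (fun hE => hl (by rw [← Fin.succ_pred c.one h0, hE, Fin.succ_last])))
    (by simp)

theorem resU_mul (c : CM (m+2)) (h : c.one ≠ 0) (i j : Fin (m+1)) :
    ((resU c h).mul i j).succ = c.mul i.succ j.succ := by
  have h' := rmul_key c (embU m) i j
  show ((rmul c (embU m) i j)).succ = _
  simpa using h'

theorem resR_mul (c : CM (m+2)) (h : c.one ≠ Fin.last (m+1)) (i j : Fin (m+1)) :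
    ((resR c h).mul i j).castSucc = c.mul i.castSucc j.castSucc := by
  have h' := rmul_key c (embR m) i j
  show ((rmul c (embR m) i j)).castSucc = _
  simpa using h'

theorem resD_mul (c : CM (m+3)) (h0 : c.one ≠ 0) (hl : c.one ≠ Fin.last (m+2))
    (i j : Fin (m+1)) :
    (((resD c h0 hl).mul i j).castSucc).succ
      = c.mul ((i.castSucc).succ) ((j.castSucc).succ) := by
  have h' := rmul_key c (embD m) i j
  show (((rmul c (embD m) i j)).castSucc).succ = _
  simpa using h'

theorem resU_one (c : CM (m+2)) (h : c.one ≠ 0) : ((resU c h).one).succ = c.one := by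
  show ((c.one.pred h)).succ = c.one
  simp

theorem resR_one (c : CM (m+2)) (h : c.one ≠ Fin.last (m+1)) :
    ((resR c h).one).castSucc = c.one := by
  show ((c.one.castPred h)).castSucc = c.one
  simp

theorem resD_one (c : CM (m+3)) (h0 : c.one ≠ 0) (hl : c.one ≠ Fin.last (m+2)) :
    (((resD c h0 hl).one).castSucc).succ = c.one := by
  show ((((c.one.pred h0).castPred
      (fun hE => hl (by rw [← Fin.succ_pred c.one h0, hE, Fin.succ_last])))).castSucc).succ
    = c.one
  rw [Fin.castSucc_castPred, Fin.succ_pred]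

/-- shape type for the classification -/
abbrev Ty (m : ℕ) := (CM (m+2) ⊕ CM (m+2)) ⊕ (CM (m+1) ⊕ CM (m+1))

def Fmap (c : CM (m+3)) : Ty m :=
  if h1 : c.mul 0 (Fin.last (m+2)) = 0 then
    if h2 : c.mul (Fin.last (m+2)) 0 = 0 then
      .inl (.inl (resU c (c.one_ne_bot h1)))
    else
      .inr (.inl (resD c (c.one_ne_bot h1)
        (c.one_ne_top' ((c.select (Fin.last (m+2)) 0).resolve_right h2))))
  else
    if h2 : c.mul (Fin.last (m+2)) 0 = Fin.last (m+2) then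
      .inl (.inr (resR c (c.one_ne_top ((c.select 0 (Fin.last (m+2))).resolve_left h1))))
    else
      .inr (.inr (resD c
        (c.one_ne_bot' ((c.select (Fin.last (m+2)) 0).resolve_left h2))
        (c.one_ne_top ((c.select 0 (Fin.last (m+2))).resolve_left h1))))

def Gmap : Ty m → CM (m+3)
  | .inl (.inl c) => extU c
  | .inl (.inr c) => extR c
  | .inr (.inl c) => extDl c
  | .inr (.inr c) => extDr c

theorem extU_resU (c : CM (m+3)) (h1 : c.mul 0 (Fin.last (m+2)) = 0)
    (h2 : c.mul (Fin.last (m+2)) 0 = 0) (h : c.one ≠ 0) :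
    extU (resU c h) = c := by
  apply ext'
  · funext x y
    show umul _ x y = c.mul x y
    induction x using Fin.cases with
    | zero => rw [umul_zero_left, c.bot_absL h1]
    | succ i =>
      induction y using Fin.cases with
      | zero => rw [umul_succ_zero, c.bot_absR h2]
      | succ j => rw [umul_succ_succ, resU_mul]
  · exact resU_one c h

theorem extR_resR (c : CM (m+3)) (h1 : c.mul 0 (Fin.last (m+2)) = Fin.last (m+2))
    (h2 : c.mul (Fin.last (m+2)) 0 = Fin.last (m+2)) (h : c.one ≠ Fin.last (m+2)) :
    extR (resR c h) = c := by
  apply ext'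
  · funext x y
    show rmul' _ x y = c.mul x y
    induction x using Fin.lastCases with
    | last => rw [rmul'_last_left, c.top_absR h2]
    | cast i =>
      induction y using Fin.lastCases with
      | last => rw [rmul'_cast_last, c.top_absL h1]
      | cast j => rw [rmul'_cast_cast, resR_mul]
  · exact resR_one c h

theorem extDl_resD (c : CM (m+3)) (h1 : c.mul 0 (Fin.last (m+2)) = 0)
    (h2 : c.mul (Fin.last (m+2)) 0 = Fin.last (m+2)) (e0 : c.one ≠ 0)
    (el : c.one ≠ Fin.last (m+2)) :
    extDl (resD c e0 el) = c := by
  apply ext'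
  · funext x y
    show dlmul _ x y = c.mul x y
    induction x using cases3 with
    | h0 => rw [dlmul_zero, c.bot_absL h1]
    | hl => rw [dlmul_last, c.top_absR h2]
    | hm i =>
      induction y using cases3 with
      | h0 => rw [dlmul_mid_zero,
          c.caseL_mul_bot h1 h2 (demb_ne_zero i) (ne_of_lt (demb_lt_last i))]
      | hl => rw [dlmul_mid_last,
          c.caseL_mul_top h1 h2 (demb_ne_zero i) (ne_of_lt (demb_lt_last i))]
      | hm j => rw [dlmul_mid_mid, resD_mul]
  · exact resD_one c e0 el

theorem extDr_resD (c : CM (m+3)) (h1 : c.mul 0 (Fin.last (m+2)) = Fin.last (m+2))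
    (h2 : c.mul (Fin.last (m+2)) 0 = 0) (e0 : c.one ≠ 0)
    (el : c.one ≠ Fin.last (m+2)) :
    extDr (resD c e0 el) = c := by
  apply ext'
  · funext x y
    show drmul _ x y = c.mul x y
    induction y using cases3 with
    | h0 => rw [drmul_zero, c.bot_absR h2]
    | hl => rw [drmul_last, c.top_absL h1]
    | hm j =>
      induction x using cases3 with
      | h0 => rw [drmul_zero_mid,
          c.caseR_mul_bot h1 h2 (demb_ne_zero j) (ne_of_lt (demb_lt_last j))]
      | hl => rw [drmul_last_mid,
          c.caseR_mul_top h1 h2 (demb_ne_zero j) (ne_of_lt (demb_lt_last j))]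
      | hm i => rw [drmul_mid_mid, resD_mul]
  · exact resD_one c e0 el

theorem left_inv_FG (c : CM (m+3)) : Gmap (Fmap c) = c := by
  by_cases h1 : c.mul 0 (Fin.last (m+2)) = 0
  · by_cases h2 : c.mul (Fin.last (m+2)) 0 = 0
    · rw [Fmap, dif_pos h1, dif_pos h2]
      exact extU_resU c h1 h2 _
    · rw [Fmap, dif_pos h1, dif_neg h2]
      exact extDl_resD c h1 ((c.select (Fin.last (m+2)) 0).resolve_right h2) _ _
  · by_cases h2 : c.mul (Fin.last (m+2)) 0 = Fin.last (m+2)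
    · rw [Fmap, dif_neg h1, dif_pos h2]
      exact extR_resR c ((c.select 0 (Fin.last (m+2))).resolve_left h1) h2 _
    · rw [Fmap, dif_neg h1, dif_neg h2]
      exact extDr_resD c ((c.select 0 (Fin.last (m+2))).resolve_left h1)
        ((c.select (Fin.last (m+2)) 0).resolve_left h2) _ _

theorem right_inv_FG (d : Ty m) : Fmap (Gmap d) = d := by
  have hN0 : (Fin.last (m+2)) ≠ (0 : Fin (m+3)) := Fin.last_pos.ne'
  rcases d with (c | c) | (c | c)
  · -- extU
    show Fmap (extU c) = _
    have e1 : (extU c).mul 0 (Fin.last (m+2)) = 0 := umul_zero_left c (Fin.last (m+2))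
    have e2 : (extU c).mul (Fin.last (m+2)) 0 = 0 := umul_zero_right c (Fin.last (m+2))
    rw [Fmap, dif_pos e1, dif_pos e2]
    congr 1
    congr 1
    apply ext'
    · funext i j
      apply Fin.succ_injective
      rw [resU_mul]
      show umul c i.succ j.succ = (c.mul i j).succ
      rw [umul_succ_succ]
    · apply Fin.succ_injective
      rw [resU_one]
      rfl
  · -- extR
    show Fmap (extR c) = _
    have e1 : (extR c).mul 0 (Fin.last (m+2)) = Fin.last (m+2) :=
      rmul'_last_right c 0
    have e2 : (extR c).mul (Fin.last (m+2)) 0 = Fin.last (m+2) := rmul'_last_left c 0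
    rw [Fmap, dif_neg (by rw [e1]; exact hN0), dif_pos e2]
    congr 1
    congr 1
    apply ext'
    · funext i j
      apply Fin.castSucc_injective
      rw [resR_mul]
      show rmul' c i.castSucc j.castSucc = (c.mul i j).castSucc
      rw [rmul'_cast_cast]
    · apply Fin.castSucc_injective
      rw [resR_one]
      rfl
  · -- extDl
    show Fmap (extDl c) = _
    have e1 : (extDl c).mul 0 (Fin.last (m+2)) = 0 := dlmul_zero c (Fin.last (m+2))
    have e2 : (extDl c).mul (Fin.last (m+2)) 0 = Fin.last (m+2) := dlmul_last c 0
    rw [Fmap, dif_pos e1, dif_neg (by rw [e2]; exact hN0)]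
    congr 1
    congr 1
    apply ext'
    · funext i j
      apply Fin.castSucc_injective
      apply Fin.succ_injective
      rw [Fin.succ_castSucc, Fin.succ_castSucc, ← Fin.succ_castSucc, resD_mul]
      show dlmul c ((i.castSucc).succ) ((j.castSucc).succ) = ((c.mul i j).castSucc).succ
      rw [dlmul_mid_mid]
    · apply Fin.castSucc_injective
      apply Fin.succ_injective
      rw [Fin.succ_castSucc, ← Fin.succ_castSucc, resD_one]
      rfl
  · -- extDr
    show Fmap (extDr c) = _
    have e1 : (extDr c).mul 0 (Fin.last (m+2)) = Fin.last (m+2) := drmul_last c 0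
    have e2 : (extDr c).mul (Fin.last (m+2)) 0 = 0 := drmul_zero c (Fin.last (m+2))
    rw [Fmap, dif_neg (by rw [e1]; exact hN0), dif_neg (by rw [e2]; exact Ne.symm hN0)]
    congr 1
    congr 1
    apply ext'
    · funext i j
      apply Fin.castSucc_injective
      apply Fin.succ_injective
      rw [Fin.succ_castSucc, Fin.succ_castSucc, ← Fin.succ_castSucc, resD_mul]
      show drmul c ((i.castSucc).succ) ((j.castSucc).succ) = ((c.mul i j).castSucc).succ
      rw [drmul_mid_mid]
    · apply Fin.castSucc_injective
      apply Fin.succ_injective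
      rw [Fin.succ_castSucc, ← Fin.succ_castSucc, resD_one]
      rfl

def mainEquiv (m : ℕ) : CM (m+3) ≃ Ty m :=
  ⟨Fmap, Gmap, left_inv_FG, right_inv_FG⟩

end CM

namespace CM

instance (n : ℕ) : Finite (CM n) :=
  Finite.of_injective (fun c => (c.mul, c.one))
    (fun _ _ h => ext' (congrArg Prod.fst h) (congrArg Prod.snd h))

theorem card_rec (m : ℕ) :
    Nat.card (CM (m+3)) = 2 * Nat.card (CM (m+2)) + 2 * Nat.card (CM (m+1)) := by
  rw [Nat.card_congr (mainEquiv m)]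
  show Nat.card ((CM (m+2) ⊕ CM (m+2)) ⊕ (CM (m+1) ⊕ CM (m+1))) = _
  rw [Nat.card_sum, Nat.card_sum, Nat.card_sum]
  ring

def minCM (n : ℕ) : CM (n+1) where
  mul := min
  one := Fin.last n
  assoc := fun a b c => min_assoc a b c
  one_mul := fun a => min_eq_right (Fin.le_last a)
  mul_one := fun a => min_eq_left (Fin.le_last a)
  monoL := fun _ h => min_le_min h le_rfl
  monoR := fun _ h => min_le_min le_rfl h
  idem := fun a => min_self a

def maxCM (n : ℕ) : CM (n+1) where
  mul := max
  one := 0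
  assoc := fun a b c => max_assoc a b c
  one_mul := fun a => max_eq_right (Fin.zero_le a)
  mul_one := fun a => max_eq_left (Fin.zero_le a)
  monoL := fun _ h => max_le_max h le_rfl
  monoR := fun _ h => max_le_max le_rfl h
  idem := fun a => max_self a

instance : Unique (CM 1) where
  default := minCM 0
  uniq := by
    intro a
    apply ext'
    · funext x y
      exact Subsingleton.elim _ _
    · exact Subsingleton.elim _ _

theorem card1 : Nat.card (CM 1) = 1 := Nat.card_unique

theorem mul_formula2 (d : CM 2) (x y : Fin 2) :
    d.mul x y = if x = y then x else if d.one = x then y else x := by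
  by_cases hxy : x = y
  · rw [if_pos hxy, hxy, d.idem]
  · rw [if_neg hxy]
    by_cases ho : d.one = x
    · rw [if_pos ho, ← ho, d.one_mul]
    · rw [if_neg ho]
      have hoy : d.one = y := by
        apply Fin.ext
        have h1 := d.one.isLt
        have h2 := x.isLt
        have h3 := y.isLt
        have h4 : (d.one : ℕ) ≠ (x : ℕ) := fun hh => ho (Fin.ext hh)
        have h5 : (x : ℕ) ≠ (y : ℕ) := fun hh => hxy (Fin.ext hh)
        omega
      rw [← hoy, d.mul_one]

theorem card2 : Nat.card (CM 2) = 2 := by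
  have bij : Function.Bijective (fun c : CM 2 => c.one) := by
    constructor
    · intro c c' h
      apply ext' _ h
      funext x y
      rw [mul_formula2 c, mul_formula2 c']
      simp only at h
      rw [h]
    · intro y
      by_cases hy : y = 0
      · exact ⟨maxCM 1, hy.symm⟩
      · refine ⟨minCM 1, ?_⟩
        show Fin.last 1 = y
        apply Fin.ext
        have h1 := y.isLt
        have h2 : (y : ℕ) ≠ 0 := fun hh => hy (Fin.ext hh)
        simp [Fin.last]
        omega
  rw [Nat.card_congr (Equiv.ofBijective _ bij)]
  simp

end CM

section Bridge
variable {n : ℕ}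

def CM.toILOM (c : CM n) : ILOM n where
  mul := c.mul
  one := c.one
  le := (· ≤ ·)
  mul_assoc := c.assoc
  one_mul := c.one_mul
  mul_one := c.mul_one
  le_refl := fun a => le_refl a
  le_trans := fun _ _ _ h h' => le_trans h h'
  le_antisymm := fun _ _ h h' => le_antisymm h h'
  le_total := fun a b => le_total a b
  mono := fun _ _ c' d h => c.monoL d (c.monoR c' h)
  idem := c.idem

theorem ILOM.monoL' (A : ILOM n) {a b : Fin n} (d : Fin n) (h : A.le a b) :
    A.le (A.mul a d) (A.mul b d) := by
  have := A.mono a b A.one d h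
  rwa [A.one_mul, A.one_mul] at this

theorem ILOM.monoR' (A : ILOM n) {a b : Fin n} (d : Fin n) (h : A.le a b) :
    A.le (A.mul d a) (A.mul d b) := by
  have := A.mono a b d A.one h
  rwa [A.mul_one, A.mul_one] at this

theorem iso_equivalence (n : ℕ) : Equivalence (ILOM.Iso (n := n)) where
  refl A := ⟨Equiv.refl _, fun _ _ => rfl, rfl, fun _ _ => Iff.rfl⟩
  symm := by
    rintro A B ⟨f, hm, h1, hle⟩
    refine ⟨f.symm, ?_, ?_, ?_⟩
    · intro a b
      apply f.injective
      rw [Equiv.apply_symm_apply, hm, Equiv.apply_symm_apply, Equiv.apply_symm_apply]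
    · apply f.injective
      rw [Equiv.apply_symm_apply, h1]
    · intro a b
      have := hle (f.symm a) (f.symm b)
      rw [Equiv.apply_symm_apply, Equiv.apply_symm_apply] at this
      exact this.symm
  trans := by
    rintro A B C ⟨f, hm, h1, hle⟩ ⟨g, hm', h1', hle'⟩
    refine ⟨f.trans g, ?_, ?_, ?_⟩
    · intro a b
      show g (f (A.mul a b)) = C.mul (g (f a)) (g (f b))
      rw [hm, hm']
    · show g (f A.one) = C.one
      rw [h1, h1']
    · intro a b
      exact (hle a b).trans (hle' (f a) (f b))

noncomputable def ILOM.lin (A : ILOM n) : LinearOrder (Fin n) :=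
  letI dle : DecidableRel A.le := Classical.decRel _
  letI deq : DecidableEq (Fin n) := inferInstance
  letI ltI : LT (Fin n) := ⟨fun a b => A.le a b ∧ ¬ A.le b a⟩
  letI dlt : DecidableRel ltI.lt := fun _ _ => instDecidableAnd
  { le := A.le
    lt := fun a b => A.le a b ∧ ¬ A.le b a
    le_refl := A.le_refl
    le_trans := A.le_trans
    le_antisymm := A.le_antisymm
    le_total := A.le_total
    lt_iff_le_not_ge := fun _ _ => Iff.rfl
    toDecidableLE := dle
    toDecidableEq := deq
    toDecidableLT := dlt
    min := fun a b => if A.le a b then a else b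
    max := fun a b => if A.le a b then b else a
    min_def := fun _ _ => rfl
    max_def := fun _ _ => rfl
    compare := fun a b => @compareOfLessAndEq _ a b ltI (dlt a b) deq
    compare_eq_compareOfLessAndEq := fun _ _ => rfl }

noncomputable def ILOM.ordIso (A : ILOM n) :=
  @monoEquivOfFin (Fin n) _ A.lin n (Fintype.card_fin n)

noncomputable def ILOM.g (A : ILOM n) : Fin n ≃ Fin n := A.ordIso.toEquiv

theorem ILOM.g_le (A : ILOM n) (a b : Fin n) :
    A.le (A.g a) (A.g b) ↔ a ≤ b :=
  A.ordIso.map_rel_iff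

theorem ILOM.g_symm_le (A : ILOM n) (u v : Fin n) :
    A.g.symm u ≤ A.g.symm v ↔ A.le u v := by
  rw [← A.g_le, Equiv.apply_symm_apply, Equiv.apply_symm_apply]

noncomputable def ILOM.canon (A : ILOM n) : CM n where
  mul x y := A.g.symm (A.mul (A.g x) (A.g y))
  one := A.g.symm A.one
  assoc := by
    intro a b c
    rw [Equiv.apply_symm_apply, Equiv.apply_symm_apply, A.mul_assoc]
  one_mul := by
    intro a
    rw [Equiv.apply_symm_apply, A.one_mul, Equiv.symm_apply_apply]
  mul_one := by
    intro a
    rw [Equiv.apply_symm_apply, A.mul_one, Equiv.symm_apply_apply]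
  monoL := by
    intro a b d h
    rw [ILOM.g_symm_le]
    exact A.monoL' _ ((A.g_le a b).mpr h)
  monoR := by
    intro a b d h
    rw [ILOM.g_symm_le]
    exact A.monoR' _ ((A.g_le a b).mpr h)
  idem := by
    intro a
    rw [A.idem, Equiv.symm_apply_apply]

theorem ILOM.canon_iso (A : ILOM n) : ILOM.Iso A (CM.toILOM A.canon) := by
  refine ⟨A.g.symm, ?_, rfl, ?_⟩
  · intro a b
    show A.g.symm (A.mul a b)
      = A.g.symm (A.mul (A.g (A.g.symm a)) (A.g (A.g.symm b)))
    rw [Equiv.apply_symm_apply, Equiv.apply_symm_apply]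
  · intro a b
    exact (A.g_symm_le a b).symm

theorem CM.canon_inj {c c' : CM n} (h : ILOM.Iso (CM.toILOM c) (CM.toILOM c')) :
    c = c' := by
  obtain ⟨f, hm, h1, hle⟩ := h
  have hid : ∀ x, f x = x := by
    let e : Fin n ≃o Fin n :=
      { toEquiv := f, map_rel_iff' := by intro a b; exact (hle a b).symm }
    intro x
    exact Fin.ext (Fin.coe_orderIso_apply e x)
  apply CM.ext'
  · funext x y
    have := hm x y
    rw [hid, hid, hid] at this
    exact this
  · have : f c.one = c'.one := h1
    rwa [hid] at this

theorem numILOM_eq (n : ℕ) : numILOM n = Nat.card (CM n) := by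
  have bij : Function.Bijective
      (fun c : CM n => Quot.mk (ILOM.Iso (n := n)) (CM.toILOM c)) := by
    constructor
    · intro c c' h
      exact CM.canon_inj ((iso_equivalence n).eqvGen_iff.mp (Quot.eq.mp h))
    · intro q
      induction q using Quot.ind with
      | _ A => exact ⟨A.canon, Quot.sound ((iso_equivalence n).symm A.canon_iso)⟩
  rw [numILOM, Nat.card_congr (Equiv.ofBijective _ bij).symm]
end Bridge


/-- `I(1) = 1`, `I(2) = 2` and `I(n) = 2·I(n-1) + 2·I(n-2)` for `n > 2`. -/
theorem stmt_9 :
    numILOM 1 = 1 ∧ numILOM 2 = 2 ∧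
      ∀ n : ℕ, n > 2 → numILOM n = 2 * numILOM (n - 1) + 2 * numILOM (n - 2) := by
  refine ⟨?_, ?_, ?_⟩
  · rw [numILOM_eq]; exact CM.card1
  · rw [numILOM_eq]; exact CM.card2
  · intro n hn
    obtain ⟨m, rfl⟩ : ∃ m, n = m + 3 := ⟨n - 3, by omega⟩
    have h1 : m + 3 - 1 = m + 2 := by omega
    have h2 : m + 3 - 2 = m + 1 := by omega
    rw [h1, h2, numILOM_eq, numILOM_eq, numILOM_eq]
    exact CM.card_rec m
end

section
/- For every n ≥ 1, there are, up to isomorphism, exactly 2^(n−1) commutative idempotent linearly ordered monoids with n elements; that is, the number of isomorphism classes of commutative idempotent linearly ordered monoid structures on an n-element set is 2^(n−1). -/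
structure CILOM (n : ℕ) where
  mul : Fin n → Fin n → Fin n
  one : Fin n
  le : Fin n → Fin n → Prop
  mul_assoc : ∀ a b c, mul (mul a b) c = mul a (mul b c)
  one_mul : ∀ a, mul one a = a
  mul_one : ∀ a, mul a one = a
  le_refl : ∀ a, le a a
  le_trans : ∀ a b c, le a b → le b c → le a c
  le_antisymm : ∀ a b, le a b → le b a → a = b
  le_total : ∀ a b, le a b ∨ le b a
  mono : ∀ a b c d, le a b → le (mul (mul c a) d) (mul (mul c b) d)
  idem : ∀ a, mul a a = a
  comm : ∀ a b, mul a b = mul b a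

def CILOM.Iso {n : ℕ} (A B : CILOM n) : Prop :=
  ∃ f : Fin n ≃ Fin n,
    (∀ a b, f (A.mul a b) = B.mul (f a) (f b)) ∧
    f A.one = B.one ∧
    ∀ a b, A.le a b ↔ B.le (f a) (f b)

namespace CilomAux

variable {n : ℕ}

/-! ### Strictly monotone self-equivs of `Fin n` are the identity -/

lemma le_apply_of_strictMono {f : Fin n → Fin n} (hf : StrictMono f) : ∀ x, x ≤ f x := by
  intro x
  obtain ⟨m, hx⟩ : ∃ m, x.val = m := ⟨x.val, rfl⟩
  induction m using Nat.strong_induction_on generalizing x with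
  | _ m ih =>
    by_contra h
    push_neg at h
    have hv : (f x).val < m := by subst hx; exact h
    have h3 : f x ≤ f (f x) := ih (f x).val hv (f x) rfl
    exact absurd h3 (not_le_of_gt (hf h))

lemma equiv_eq_refl {f : Fin n ≃ Fin n} (hf : StrictMono f) : f = Equiv.refl _ := by
  have hs : StrictMono (f.symm : Fin n → Fin n) := by
    intro a b hab
    rcases lt_trichotomy (f.symm a) (f.symm b) with h | h | h
    · exact h
    · exact absurd (f.symm.injective h) (ne_of_lt hab)
    · have := hf h
      simp only [Equiv.apply_symm_apply] at this
      exact absurd hab (not_lt_of_gt this)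
  apply Equiv.ext (fun x => ?_)
  simp only [Equiv.refl_apply]
  have h1 := le_apply_of_strictMono hf x
  have h2 : f x ≤ x := by
    have := le_apply_of_strictMono hs (f x)
    simpa using this
  exact le_antisymm h2 h1

/-! ### Canonical structures from valid rank functions -/

def Valid (r : Fin n ≃ Fin n) : Prop :=
  ∀ x y z : Fin n, r y < r x → r z < r x → y < x → z < x

/-- interval property -/
lemma Valid.rank_le_max {r : Fin n ≃ Fin n} (hr : Valid r) {x y z : Fin n}
    (h1 : y ≤ x) (h2 : x ≤ z) : r x ≤ max (r y) (r z) := by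
  by_contra h
  push_neg at h
  have hy : r y < r x := lt_of_le_of_lt (le_max_left _ _) h
  have hz : r z < r x := lt_of_le_of_lt (le_max_right _ _) h
  have hyx : y < x := lt_of_le_of_ne h1 (fun e => by simp [e] at hy)
  have hxz : x < z := lt_of_le_of_ne h2 (fun e => by simp [e] at hz)
  exact absurd (hr x y z hy hz hyx) (not_lt_of_gt hxz)

def mulOf (r : Fin n ≃ Fin n) (a b : Fin n) : Fin n := r.symm (max (r a) (r b))

lemma mulOf_comm (r : Fin n ≃ Fin n) (a b : Fin n) : mulOf r a b = mulOf r b a := by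
  simp [mulOf, max_comm]

lemma mulOf_left {r : Fin n ≃ Fin n} {a b : Fin n} (h : r b ≤ r a) : mulOf r a b = a := by
  simp [mulOf, max_eq_left h]

lemma mulOf_right {r : Fin n ≃ Fin n} {a b : Fin n} (h : r a ≤ r b) : mulOf r a b = b := by
  simp [mulOf, max_eq_right h]

lemma mulOf_mono {r : Fin n ≃ Fin n} (hr : Valid r) {a b : Fin n} (c : Fin n)
    (hab : a ≤ b) : mulOf r c a ≤ mulOf r c b := by
  rcases le_total (r a) (r c) with h1 | h1 <;> rcases le_total (r b) (r c) with h2 | h2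
  · rw [mulOf_left h1, mulOf_left h2]
  · -- mulOf c a = c, mulOf c b = b ; show c ≤ b
    rw [mulOf_left h1, mulOf_right h2]
    by_contra hbc
    push_neg at hbc
    -- b < c, r a ≤ r c ≤ r b
    have hcb : r c < r b :=
      h2.lt_of_ne (fun e => lt_irrefl b (by rw [r.injective e] at hbc; exact hbc))
    have hra : r a < r b := h1.trans_lt hcb
    have hab' : a < b :=
      hab.lt_of_ne (fun e => lt_irrefl (r a) (by rw [e] at hra ⊢; exact hra))
    exact absurd (hr b a c hra hcb hab') (not_lt_of_gt hbc)
  · -- r c ≤ r a and r c ≤ r b with r b ≤ r c... a ≤ b gives contradiction-ish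
    rw [mulOf_right h1, mulOf_left h2]
    -- show a ≤ c. by_contra c < a
    by_contra hac
    push_neg at hac
    have hrc : r c < r a :=
      h1.lt_of_ne (fun e => lt_irrefl a (by rw [r.injective e] at hac; exact hac))
    have hrb : r b < r a := h2.trans_lt hrc
    exact absurd hab (not_le_of_gt (hr a c b hrc hrb hac))
  · rw [mulOf_right h1, mulOf_right h2]; exact hab

def toC [NeZero n] (r : Fin n ≃ Fin n) (hr : Valid r) : CILOM n where
  mul := mulOf r
  one := r.symm 0
  le a b := a ≤ b
  mul_assoc a b c := by simp [mulOf, max_assoc]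
  one_mul a := by simp [mulOf]
  mul_one a := by simp [mulOf]
  le_refl a := le_refl a
  le_trans a b c := le_trans
  le_antisymm a b := le_antisymm
  le_total a b := le_total a b
  mono a b c d h := by
    have h1 : mulOf r c a ≤ mulOf r c b := mulOf_mono hr c h
    calc mulOf r (mulOf r c a) d = mulOf r d (mulOf r c a) := mulOf_comm _ _ _
      _ ≤ mulOf r d (mulOf r c b) := mulOf_mono hr d h1
      _ = mulOf r (mulOf r c b) d := mulOf_comm _ _ _
  idem a := by simp [mulOf]
  comm := mulOf_comm r

/-! ### Iso is an equivalence -/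

lemma iso_refl (A : CILOM n) : CILOM.Iso A A :=
  ⟨Equiv.refl _, fun _ _ => rfl, rfl, fun _ _ => Iff.rfl⟩

lemma iso_symm {A B : CILOM n} (h : CILOM.Iso A B) : CILOM.Iso B A := by
  obtain ⟨f, hm, ho, hl⟩ := h
  refine ⟨f.symm, fun a b => ?_, ?_, fun a b => ?_⟩
  · apply f.injective
    rw [Equiv.apply_symm_apply, hm, Equiv.apply_symm_apply, Equiv.apply_symm_apply]
  · apply f.injective; rw [Equiv.apply_symm_apply, ho]
  · rw [hl, Equiv.apply_symm_apply, Equiv.apply_symm_apply]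

lemma iso_trans {A B C : CILOM n} (h1 : CILOM.Iso A B) (h2 : CILOM.Iso B C) :
    CILOM.Iso A C := by
  obtain ⟨f, hm, ho, hl⟩ := h1
  obtain ⟨g, hm', ho', hl'⟩ := h2
  exact ⟨f.trans g, fun a b => by simp [hm, hm'], by simp [ho, ho'],
    fun a b => (hl a b).trans (hl' _ _)⟩

lemma iso_equivalence : Equivalence (CILOM.Iso (n := n)) :=
  ⟨iso_refl, iso_symm, iso_trans⟩

/-- A copy of `Fin n` with no instances, to put custom orders on. -/
def Copy (n : ℕ) : Type := Fin n

def copyEquiv (n : ℕ) : Copy n ≃ Fin n := Equiv.refl (Fin n)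

/-- Any abstract linear order on `Fin n` is realized by some self-bijection. -/
lemma exists_orderEquiv (L : Fin n → Fin n → Prop)
    (hrefl : ∀ a, L a a) (htrans : ∀ a b c, L a b → L b c → L a c)
    (hanti : ∀ a b, L a b → L b a → a = b) (htot : ∀ a b, L a b ∨ L b a) :
    ∃ s : Fin n ≃ Fin n, ∀ a b, L a b ↔ s a ≤ s b := by
  classical
  letI : LinearOrder (Copy n) :=
    { le := fun a b => L (copyEquiv n a) (copyEquiv n b)
      le_refl := fun a => hrefl _
      le_trans := fun a b c => htrans _ _ _
      le_antisymm := fun a b h1 h2 => (copyEquiv n).injective (hanti _ _ h1 h2)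
      le_total := fun a b => htot _ _
      toDecidableLE := fun a b => Classical.dec _ }
  letI : Fintype (Copy n) := Fintype.ofEquiv (Fin n) (copyEquiv n).symm
  have hcard : Fintype.card (Copy n) = n := by
    rw [Fintype.card_congr (copyEquiv n), Fintype.card_fin]
  let g : Fin n ≃o Copy n := monoEquivOfFin (Copy n) hcard
  refine ⟨((copyEquiv n).symm.trans g.symm.toEquiv : Fin n ≃ Fin n), fun a b => ?_⟩
  change L a b ↔ g.symm ((copyEquiv n).symm a) ≤ g.symm ((copyEquiv n).symm b)
  rw [g.symm.le_iff_le]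
  exact Iff.rfl

section Basic
variable (A : CILOM n)

/-- the strict order of `A` -/
def Alt (a b : Fin n) : Prop := A.le a b ∧ a ≠ b

lemma alt_of_le_ne {a b : Fin n} (h : A.le a b) (hne : a ≠ b) : Alt A a b := ⟨h, hne⟩

lemma not_alt_self (a : Fin n) : ¬ Alt A a a := fun h => h.2 rfl

lemma alt_or (a b : Fin n) (hne : a ≠ b) : Alt A a b ∨ Alt A b a := by
  rcases A.le_total a b with h | h
  · exact Or.inl ⟨h, hne⟩
  · exact Or.inr ⟨h, hne.symm⟩

lemma alt_asymm {a b : Fin n} (h1 : Alt A a b) (h2 : Alt A b a) : False :=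
  h1.2 (A.le_antisymm _ _ h1.1 h2.1)

/-- `a ≤ a*b` whenever `A.le a b` -/
lemma le_mul_of_le {a b : Fin n} (h : A.le a b) : A.le a (A.mul a b) := by
  have := A.mono a b a A.one h
  rwa [A.idem, A.mul_one, A.mul_one] at this

lemma mul_le_of_le {a b : Fin n} (h : A.le a b) : A.le (A.mul a b) b := by
  have := A.mono a b b A.one h
  rwa [A.comm b a, A.idem, A.mul_one, A.mul_one] at this

/-- key absorption: the product of two elements is one of them -/
lemma mul_mem_aux {a b : Fin n} (h : A.le a b) : A.mul a b = a ∨ A.mul a b = b := by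
  rcases A.le_total (A.mul a b) A.one with h1 | h1
  · left
    have hmono := A.mono (A.mul a b) A.one a A.one h1
    rw [A.mul_one, A.mul_one, A.mul_one] at hmono
    rw [← A.mul_assoc, A.idem] at hmono
    exact A.le_antisymm _ _ hmono (le_mul_of_le A h)
  · right
    have hmono := A.mono A.one (A.mul a b) b A.one h1
    rw [A.mul_one, A.mul_one, A.mul_one] at hmono
    rw [A.comm a b, ← A.mul_assoc, A.idem, A.comm b a] at hmono
    exact A.le_antisymm _ _ (mul_le_of_le A h) hmono

lemma mul_mem (a b : Fin n) : A.mul a b = a ∨ A.mul a b = b := by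
  rcases A.le_total a b with h | h
  · exact mul_mem_aux A h
  · rcases mul_mem_aux A h with h' | h'
    · right; rw [A.comm]; exact h'
    · left; rw [A.comm]; exact h'

/-- the semilattice order -/
def Pre (a b : Fin n) : Prop := A.mul a b = b

lemma pre_refl (a : Fin n) : Pre A a a := A.idem a
lemma pre_total (a b : Fin n) : Pre A a b ∨ Pre A b a := by
  rcases mul_mem A a b with h | h
  · right; rw [Pre, A.comm]; exact h
  · left; exact h
lemma pre_antisymm {a b : Fin n} (h1 : Pre A a b) (h2 : Pre A b a) : a = b := by
  rw [Pre] at h1 h2; rw [← h2, A.comm]; exact h1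
lemma pre_trans {a b c : Fin n} (h1 : Pre A a b) (h2 : Pre A b c) : Pre A a c := by
  rw [Pre] at h1 h2 ⊢
  rw [← h2, ← A.mul_assoc, h1]

lemma pre_one (a : Fin n) : Pre A A.one a := A.one_mul a

/-- The crucial geometric property: all `Pre`-predecessors of `x` lie on the same
side of `x` in the linear order. -/
lemma side_lemma {x y z : Fin n} (hy : Pre A y x) (hyx : y ≠ x)
    (hz : Pre A z x) (hzx : z ≠ x) (h1 : Alt A y x) : Alt A z x := by
  by_contra h2
  have h3 : Alt A x z := by
    rcases alt_or A x z (Ne.symm hzx) with h | h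
    · exact h
    · exact absurd h h2
  -- y <' x <' z, y*x = x, z*x = x; then y*z = x, but y*z ∈ {y,z}
  have k1 : A.le x (A.mul y z) := by
    have h5 := A.mono x z y A.one h3.1
    rw [A.mul_one, A.mul_one] at h5
    rwa [show A.mul y x = x from hy] at h5
  have k2 : A.le (A.mul y z) x := by
    have h5 := A.mono y x z A.one h1.1
    rw [A.mul_one, A.mul_one, A.comm z y] at h5
    rwa [show A.mul z x = x from hz] at h5
  have hyz : A.mul y z = x := A.le_antisymm _ _ k2 k1
  rcases mul_mem A y z with h | h
  · rw [h] at hyz; exact hyx hyz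
  · rw [h] at hyz; exact hzx hyz

end Basic

lemma exists_iso_toC [NeZero n] (A : CILOM n) :
    ∃ (r : Fin n ≃ Fin n) (hr : Valid r), CILOM.Iso A (toC r hr) := by
  classical
  -- order iso for A.le
  obtain ⟨f, hf⟩ := exists_orderEquiv A.le A.le_refl A.le_trans A.le_antisymm A.le_total
  -- order iso for Pre A
  obtain ⟨s, hs⟩ := exists_orderEquiv (Pre A) (pre_refl A) (fun a b c => pre_trans A)
    (fun a b => pre_antisymm A) (pre_total A)
  -- strict versions
  have hf' : ∀ a b : Fin n, Alt A a b ↔ f a < f b := by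
    intro a b
    constructor
    · rintro ⟨h, hne⟩
      exact lt_of_le_of_ne ((hf a b).1 h) (fun e => hne (f.injective e))
    · intro h
      refine ⟨(hf a b).2 (le_of_lt h), fun e => ?_⟩
      subst e; exact lt_irrefl _ h
  have hs' : ∀ a b : Fin n, (Pre A a b ∧ a ≠ b) ↔ s a < s b := by
    intro a b
    constructor
    · rintro ⟨h, hne⟩
      exact lt_of_le_of_ne ((hs a b).1 h) (fun e => hne (s.injective e))
    · intro h
      refine ⟨(hs a b).2 (le_of_lt h), fun e => ?_⟩
      subst e; exact lt_irrefl _ h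
  refine ⟨f.symm.trans s, ?_, ?_⟩
  · -- validity
    intro x y z h1 h2 h3
    simp only [Equiv.trans_apply] at h1 h2
    -- names
    set a := f.symm x
    set b := f.symm y
    set c := f.symm z
    have hxa : x = f a := by simp [a]
    have hyb : y = f b := by simp [b]
    have hzc : z = f c := by simp [c]
    have hba : Pre A b a ∧ b ≠ a := (hs' b a).2 h1
    have hca : Pre A c a ∧ c ≠ a := (hs' c a).2 h2
    have h3' : Alt A b a := by
      rw [hyb, hxa] at h3
      exact (hf' b a).2 h3
    have := side_lemma A hba.1 hba.2 hca.1 hca.2 h3'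
    rw [hzc, hxa]
    exact (hf' c a).1 this
  · -- the isomorphism
    refine ⟨f, fun a b => ?_, ?_, fun a b => ?_⟩
    · -- multiplication
      show f (A.mul a b) = mulOf (f.symm.trans s) (f a) (f b)
      have key : ∀ u : Fin n, (f.symm.trans s) (f u) = s u := by
        intro u; simp
      rcases mul_mem A a b with h | h
      · have hba : Pre A b a := by rw [Pre, A.comm]; exact h
        have : s b ≤ s a := (hs b a).1 hba
        rw [h, mulOf_comm, mulOf_right]
        rw [key, key]; exact this
      · have : s a ≤ s b := (hs a b).1 h
        rw [h, mulOf_right]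
        rw [key, key]; exact this
    · -- one
      show f A.one = (f.symm.trans s).symm 0
      apply (f.symm.trans s).injective
      simp only [Equiv.apply_symm_apply, Equiv.trans_apply, Equiv.symm_apply_apply]
      have h0 : s A.one ≤ s (s.symm 0) := (hs _ _).1 (pre_one A _)
      simp only [Equiv.apply_symm_apply] at h0
      exact le_antisymm h0 (Fin.zero_le _)
    · -- order
      show A.le a b ↔ f a ≤ f b
      exact hf a b


lemma toC_inj [NeZero n] {r r' : Fin n ≃ Fin n} {hr : Valid r} {hr' : Valid r'}
    (h : CILOM.Iso (toC r hr) (toC r' hr')) : r = r' := by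
  obtain ⟨f, hm, ho, hl⟩ := h
  have hfid : f = Equiv.refl _ := by
    apply equiv_eq_refl
    intro a b hab
    have h1 : f a ≤ f b := (hl a b).1 (le_of_lt hab)
    exact lt_of_le_of_ne h1 (fun e => (ne_of_lt hab) (f.injective e))
  rw [hfid] at hm
  simp only [Equiv.refl_apply] at hm
  have key : ∀ a b : Fin n, r a ≤ r b → r' a ≤ r' b := by
    intro a b hab
    have h2 := hm a b
    rw [show (toC r hr).mul a b = mulOf r a b from rfl,
        show (toC r' hr').mul a b = mulOf r' a b from rfl, mulOf_right hab] at h2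
    have h3 : r' b = max (r' a) (r' b) := by
      conv_lhs => rw [h2]
      simp [mulOf]
    rw [h3]
    exact le_max_left _ _
  have hg : r.symm.trans r' = Equiv.refl _ := by
    apply equiv_eq_refl
    intro u v huv
    simp only [Equiv.trans_apply]
    have h1 : r' (r.symm u) ≤ r' (r.symm v) := by
      apply key
      simpa using le_of_lt huv
    refine lt_of_le_of_ne h1 (fun e => (ne_of_lt huv) ?_)
    have := r'.injective e
    have := congrArg r this
    simpa using this
  apply Equiv.ext
  intro y
  have := congrArg (fun g : Fin n ≃ Fin n => g (r y)) hg
  simpa using this.symm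

lemma card_quot [NeZero n] :
    Nat.card (Quot (CILOM.Iso (n := n))) =
      Nat.card {r : Fin n ≃ Fin n // Valid r} := by
  refine (Nat.card_eq_of_bijective
    (fun p : {r : Fin n ≃ Fin n // Valid r} => Quot.mk _ (toC p.1 p.2)) ?_).symm
  constructor
  · intro p q h
    rw [Quot.eq] at h
    have := (iso_equivalence.eqvGen_iff).1 h
    exact Subtype.ext (toC_inj this)
  · intro q
    induction q using Quot.ind with
    | _ A =>
      obtain ⟨r, hr, hiso⟩ := exists_iso_toC A
      exact ⟨⟨r, hr⟩, Quot.sound (iso_symm hiso)⟩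


/-! ### Counting valid rank functions -/

def bits [NeZero n] (r : Fin n ≃ Fin n) : Fin (n - 1) → Bool :=
  fun i => decide (r.symm ⟨i.val + 1, by have := i.isLt; omega⟩ < r.symm 0)

lemma count_bits [NeZero n] (r : Fin n ≃ Fin n) :
    (r.symm 0).val
      = (Finset.univ.filter (fun i : Fin (n - 1) => bits r i = true)).card := by
  rw [← Fin.card_Iio (r.symm 0)]
  refine Eq.symm ?_
  apply Finset.card_bij
    (fun (i : Fin (n - 1)) (_ : i ∈ Finset.univ.filter (fun i => bits r i = true)) =>
      r.symm ⟨i.val + 1, by have := i.isLt; omega⟩)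
  · intro a ha
    simp only [Finset.mem_filter] at ha
    simp only [Finset.mem_Iio]
    exact of_decide_eq_true ha.2
  · intro a _ b _ h
    have h2 := r.symm.injective h
    have h3 : a.val + 1 = b.val + 1 := congrArg Fin.val h2
    exact Fin.ext (by omega)
  · intro b hb
    simp only [Finset.mem_Iio] at hb
    have hj : (r b).val ≠ 0 := by
      intro e
      have h1 : r b = 0 := Fin.ext e
      have h2 : b = r.symm 0 := by rw [← h1]; simp
      rw [h2] at hb; exact lt_irrefl _ hb
    have hlt := (r b).isLt
    refine ⟨⟨(r b).val - 1, by omega⟩, ?_, ?_⟩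
    · rw [Finset.mem_filter]; simp only [Finset.mem_univ, true_and, bits]
      have hb' : (⟨(r b).val - 1 + 1, by omega⟩ : Fin n) = r b := Fin.ext (by simp; omega)
      rw [hb']
      simp [hb]
    · have hb' : (⟨(r b).val - 1 + 1, by omega⟩ : Fin n) = r b := Fin.ext (by simp; omega)
      rw [hb']
      simp

/-- The element of rank `k` is adjacent to the set of elements of smaller rank,
on the side determined by its comparison with the rank-`0` element. -/
lemma symm_step [NeZero n] {r : Fin n ≃ Fin n} (hr : Valid r) {k : Fin n} (hk : 0 < k)
    {S : Finset (Fin n)} (hmem : ∀ u, u ∈ S ↔ r u < k) (hSne : S.Nonempty) :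
    (r.symm k).val =
      (if r.symm k < r.symm 0 then (S.min' hSne).val - 1 else (S.max' hSne).val + 1) := by
  have hx : r (r.symm k) = k := by simp
  have hxS : r.symm k ∉ S := by
    rw [hmem, hx]; exact lt_irrefl k
  have heS : r.symm 0 ∈ S := by rw [hmem]; simpa using hk
  have hae : S.min' hSne ≤ r.symm 0 := S.min'_le _ heS
  have heb : r.symm 0 ≤ S.max' hSne := S.le_max' _ heS
  have hinterval : ∀ u : Fin n, S.min' hSne ≤ u → u ≤ S.max' hSne → u ∈ S := by
    intro u h1 h2
    by_contra hu
    have hku : k ≤ r u := le_of_not_gt (fun h => hu ((hmem u).2 h))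
    have ha : r (S.min' hSne) < k := (hmem _).1 (S.min'_mem hSne)
    have hb2 : r (S.max' hSne) < k := (hmem _).1 (S.max'_mem hSne)
    have h3 := hr.rank_le_max h1 h2
    exact absurd hku (not_le_of_gt (lt_of_le_of_lt h3 (max_lt ha hb2)))
  rcases lt_or_ge (r.symm k) (S.min' hSne) with hside | h1
  · rw [if_pos (lt_of_lt_of_le hside hae)]
    -- adjacency on the left
    have hv1 : (r.symm k).val + 1 ≤ (S.min' hSne).val := hside
    rcases eq_or_lt_of_le hv1 with h | h
    · omega
    · exfalso
      have hminlt := (S.min' hSne).isLt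
      set u : Fin n := ⟨(S.min' hSne).val - 1, by omega⟩ with hu
      have huv : u.val = (S.min' hSne).val - 1 := rfl
      have hxu : r.symm k < u := by rw [Fin.lt_def]; omega
      have hua : u < S.min' hSne := by rw [Fin.lt_def]; omega
      have huS : u ∉ S := fun hmem2 => absurd (S.min'_le _ hmem2) (not_le_of_gt hua)
      have hku : k < r u := by
        rcases lt_or_ge (r u) k with h2 | h2
        · exact absurd ((hmem u).2 h2) huS
        · rcases eq_or_lt_of_le h2 with h3 | h3
          · exfalso
            have h4 : u = r.symm k := by rw [h3]; simp
            rw [h4] at hxu; exact lt_irrefl _ hxu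
          · exact h3
      have h4 := hr.rank_le_max (le_of_lt hxu) (le_of_lt hua)
      rw [hx] at h4
      have ha : r (S.min' hSne) < k := (hmem _).1 (S.min'_mem hSne)
      have h5 : max k (r (S.min' hSne)) = k := max_eq_left (le_of_lt ha)
      rw [h5] at h4
      exact absurd h4 (not_le_of_gt hku)
  · rcases le_or_gt (r.symm k) (S.max' hSne) with h2 | hside
    · exact absurd (hinterval _ h1 h2) hxS
    · rw [if_neg (not_lt_of_gt (lt_of_le_of_lt heb hside))]
      have hv1 : (S.max' hSne).val + 1 ≤ (r.symm k).val := hside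
      rcases eq_or_lt_of_le hv1 with h | h
      · omega
      · exfalso
        have hxlt := (r.symm k).isLt
        set u : Fin n := ⟨(S.max' hSne).val + 1, by omega⟩ with hu
        have huv : u.val = (S.max' hSne).val + 1 := rfl
        have hbu : S.max' hSne < u := by rw [Fin.lt_def]; omega
        have hux : u < r.symm k := by rw [Fin.lt_def]; omega
        have huS : u ∉ S := fun hmem2 => absurd (S.le_max' _ hmem2) (not_le_of_gt hbu)
        have hku : k < r u := by
          rcases lt_or_ge (r u) k with h2 | h2
          · exact absurd ((hmem u).2 h2) huS
          · rcases eq_or_lt_of_le h2 with h3 | h3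
            · exfalso
              have h4 : u = r.symm k := by rw [h3]; simp
              rw [h4] at hux; exact lt_irrefl _ hux
            · exact h3
        have h4 := hr.rank_le_max (le_of_lt hbu) (le_of_lt hux)
        rw [hx] at h4
        have hb2 : r (S.max' hSne) < k := (hmem _).1 (S.max'_mem hSne)
        have h5 : max (r (S.max' hSne)) k = k := max_eq_right (le_of_lt hb2)
        rw [h5] at h4
        exact absurd h4 (not_le_of_gt hku)

lemma bits_det [NeZero n] {r r' : Fin n ≃ Fin n} (hr : Valid r) (hr' : Valid r')
    (hb : bits r = bits r') : r = r' := by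
  have he : r.symm 0 = r'.symm 0 := by
    apply Fin.ext
    rw [count_bits r, count_bits r', hb]
  have hsymm : ∀ k : Fin n, r.symm k = r'.symm k := by
    intro k
    obtain ⟨m, hm⟩ : ∃ m, k.val = m := ⟨k.val, rfl⟩
    induction m using Nat.strong_induction_on generalizing k with
    | _ m ih =>
      rcases Nat.eq_zero_or_pos m with rfl | hm1
      · have : k = 0 := Fin.ext hm
        rw [this]; exact he
      have hk0 : (0 : Fin n) < k := by
        rw [Fin.lt_def]
        show 0 < k.val
        omega
      set S : Finset (Fin n) :=
        (Finset.univ.filter (fun j : Fin n => j < k)).image (fun j => r.symm j) with hS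
      have memS : ∀ u : Fin n, u ∈ S ↔ r u < k := by
        intro u
        simp only [hS, Finset.mem_image, Finset.mem_filter, Finset.mem_univ, true_and]
        constructor
        · rintro ⟨j, hj, rfl⟩; simpa using hj
        · intro h; exact ⟨r u, h, by simp⟩
      have memS' : ∀ u : Fin n, u ∈ S ↔ r' u < k := by
        intro u
        simp only [hS, Finset.mem_image, Finset.mem_filter, Finset.mem_univ, true_and]
        constructor
        · rintro ⟨j, hj, rfl⟩
          rw [ih j.val (by rw [← hm]; exact hj) j rfl]
          simpa using hj
        · intro h
          refine ⟨r' u, h, ?_⟩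
          rw [ih (r' u).val (by rw [← hm]; exact h) (r' u) rfl]
          simp
      have hSne : S.Nonempty := ⟨r.symm 0, (memS _).2 (by simpa using hk0)⟩
      have hstep := symm_step hr hk0 memS hSne
      have hstep' := symm_step hr' hk0 memS' hSne
      -- the bits agree at position m - 1
      have hkn := k.isLt
      set i : Fin (n - 1) := ⟨m - 1, by omega⟩ with hi
      have hiv : i.val = m - 1 := rfl
      have hbi := congrFun hb i
      simp only [bits] at hbi
      have hki : ∀ (h : i.val + 1 < n), (⟨i.val + 1, h⟩ : Fin n) = k := by
        intro h
        apply Fin.ext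
        show i.val + 1 = k.val
        omega
      rw [hki] at hbi
      have hcond : (r.symm k < r.symm 0) ↔ (r'.symm k < r'.symm 0) :=
        decide_eq_decide.mp hbi
      apply Fin.ext
      rw [hstep, hstep']
      by_cases hc : r.symm k < r.symm 0
      · rw [if_pos hc, if_pos (hcond.1 hc)]
      · rw [if_neg hc, if_neg (fun h2 => hc (hcond.2 h2))]
  apply Equiv.ext
  intro y
  have h6 := hsymm (r y)
  simp only [Equiv.symm_apply_apply] at h6
  have h7 := congrArg r' h6
  simpa using h7.symm


/-! ### Construction of a valid rank function from a bit vector -/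

def Wof (n : ℕ) (w : Fin (n - 1) → Bool) (m : ℕ) : Bool :=
  if h : m < n - 1 then w ⟨m, h⟩ else false

def tof (n : ℕ) (w : Fin (n - 1) → Bool) (k : ℕ) : ℕ :=
  ((Finset.range k).filter (fun m => Wof n w m = true)).card

def vof (n : ℕ) (w : Fin (n - 1) → Bool) (k : ℕ) : ℕ :=
  if k = 0 then tof n w (n - 1)
  else if Wof n w (k - 1) then tof n w (n - 1) - tof n w k
  else tof n w (n - 1) + (k - tof n w k)

section Construction

variable {n : ℕ} (w : Fin (n - 1) → Bool)

lemma tof_zero : tof n w 0 = 0 := by simp [tof]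

lemma tof_succ (k : ℕ) :
    tof n w (k + 1) = tof n w k + (if Wof n w k = true then 1 else 0) := by
  rw [tof, Finset.range_add_one, Finset.filter_insert]
  by_cases h : Wof n w k = true
  · rw [if_pos h, if_pos h, Finset.card_insert_of_notMem (by simp)]
    rfl
  · rw [if_neg h, if_neg h]
    rfl

lemma tof_mono {k l : ℕ} (h : k ≤ l) : tof n w k ≤ tof n w l :=
  Finset.card_le_card (Finset.filter_subset_filter _ (Finset.range_subset_range.2 h))

lemma tof_le (k : ℕ) : tof n w k ≤ k :=
  (Finset.card_le_card (Finset.filter_subset _ _)).trans (by simp)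

lemma dof_mono : Monotone (fun k => k - tof n w k) := by
  apply monotone_nat_of_le_succ
  intro k
  have h1 := tof_succ w k
  have h2 := tof_le w k
  by_cases h : Wof n w k = true <;> simp [h] at h1 <;> omega

lemma vof_bounds (j : ℕ) :
    tof n w (n - 1) - tof n w j ≤ vof n w j ∧
      vof n w j ≤ tof n w (n - 1) + (j - tof n w j) := by
  rcases j with _ | m
  · simp [vof, tof_zero]
  · rw [vof, if_neg (Nat.succ_ne_zero m)]
    by_cases h : Wof n w ((m + 1) - 1) = true
    · rw [if_pos h]
      omega
    · rw [if_neg h]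
      omega

lemma vof_bounds' {j k : ℕ} (hjk : j ≤ k) :
    tof n w (n - 1) - tof n w k ≤ vof n w j ∧
      vof n w j ≤ tof n w (n - 1) + (k - tof n w k) := by
  have h1 := vof_bounds w j
  have h2 := tof_mono w hjk
  have h3 : j - tof n w j ≤ k - tof n w k := dof_mono w hjk
  omega

lemma vof_step {k : ℕ} (hk1 : 1 ≤ k) (hk2 : k ≤ n - 1) {j : ℕ} (hj : j < k) :
    (Wof n w (k - 1) = true → vof n w k < vof n w j) ∧
      (Wof n w (k - 1) = false → vof n w j < vof n w k) := by
  obtain ⟨m, rfl⟩ : ∃ m, k = m + 1 := ⟨k - 1, by omega⟩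
  have hsucc := tof_succ w m
  have htle := tof_le w m
  have hte : tof n w (m + 1) ≤ tof n w (n - 1) := tof_mono w hk2
  have hb := vof_bounds' w (show j ≤ m by omega)
  have hv : vof n w (m + 1) =
      if Wof n w m then tof n w (n - 1) - tof n w (m + 1)
      else tof n w (n - 1) + ((m + 1) - tof n w (m + 1)) := by
    rw [vof, if_neg (Nat.succ_ne_zero m)]
    simp only [Nat.add_sub_cancel]
  constructor
  · intro hW
    rw [show (m + 1) - 1 = m from rfl] at hW
    rw [hv, if_pos hW]
    rw [if_pos hW] at hsucc
    omega
  · intro hW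
    rw [show (m + 1) - 1 = m from rfl] at hW
    rw [hv, if_neg (by simp [hW])]
    rw [if_neg (by simp [hW])] at hsucc
    omega

lemma vof_ne {j k : ℕ} (hj : j < k) (hk2 : k ≤ n - 1) : vof n w j ≠ vof n w k := by
  have hs := vof_step w (by omega) hk2 hj
  cases hW : Wof n w (k - 1)
  · exact ne_of_lt (hs.2 hW)
  · exact (ne_of_lt (hs.1 hW)).symm

lemma vof_le (k : ℕ) (hk : k ≤ n - 1) : vof n w k ≤ n - 1 := by
  have h1 := (vof_bounds' w (le_refl k)).2
  have h2 : k - tof n w k ≤ (n - 1) - tof n w (n - 1) := dof_mono w hk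
  have h3 := tof_le w (n - 1)
  omega

lemma bits_surjective [NeZero n] (w : Fin (n - 1) → Bool) :
    ∃ (r : Fin n ≃ Fin n) (hr : Valid r), bits r = w := by
  have hn : 1 ≤ n := Nat.pos_of_ne_zero (NeZero.ne n)
  set V : Fin n → Fin n := fun k => ⟨vof n w k.val, by
    have := vof_le w k.val (by have := k.isLt; omega)
    omega⟩ with hV
  have hVval : ∀ k : Fin n, (V k).val = vof n w k.val := fun k => rfl
  have hVinj : Function.Injective V := by
    intro a b hab
    have h1 : vof n w a.val = vof n w b.val := congrArg Fin.val hab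
    rcases lt_trichotomy a.val b.val with h | h | h
    · exact absurd h1 (vof_ne w h (by have := b.isLt; omega))
    · exact Fin.ext h
    · exact absurd h1.symm (vof_ne w h (by have := a.isLt; omega))
  have hVbij : Function.Bijective V := Finite.injective_iff_bijective.1 hVinj
  set E : Fin n ≃ Fin n := Equiv.ofBijective V hVbij with hE
  have hEapp : ∀ u : Fin n, E u = V u := fun u => rfl
  refine ⟨E.symm, ?_, ?_⟩
  · -- validity
    intro x y z h1 h2 h3
    set kx := (E.symm x).val
    set ky := (E.symm y).val
    set kz := (E.symm z).val
    have hx : x.val = vof n w kx := by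
      conv_lhs => rw [← E.apply_symm_apply x]
      rfl
    have hy : y.val = vof n w ky := by
      conv_lhs => rw [← E.apply_symm_apply y]
      rfl
    have hz : z.val = vof n w kz := by
      conv_lhs => rw [← E.apply_symm_apply z]
      rfl
    have hky : ky < kx := h1
    have hkz : kz < kx := h2
    have hkx2 : kx ≤ n - 1 := by have := (E.symm x).isLt; omega
    have hyx : vof n w ky < vof n w kx := by rw [← hx, ← hy]; exact h3
    show z < x
    rw [Fin.lt_def, hz, hx]
    cases hW : Wof n w (kx - 1)
    · exact (vof_step w (by omega) hkx2 hkz).2 hW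
    · exact absurd hyx (not_lt_of_gt ((vof_step w (by omega) hkx2 hky).1 hW))
  · -- bits
    funext i
    have hin := i.isLt
    simp only [bits, Equiv.symm_symm]
    have h0 : (E 0).val = tof n w (n - 1) := by
      rw [hEapp, hVval]
      simp [vof]
    have h1 : (E ⟨i.val + 1, by omega⟩).val = vof n w (i.val + 1) := by
      rw [hEapp, hVval]
    have hWi : Wof n w i.val = w i := by
      rw [Wof, dif_pos hin]
    have hsucc := tof_succ w i.val
    have hte : tof n w (i.val + 1) ≤ tof n w (n - 1) := tof_mono w (by omega)
    have htle := tof_le w i.val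
    have hv : vof n w (i.val + 1) =
        if Wof n w i.val then tof n w (n - 1) - tof n w (i.val + 1)
        else tof n w (n - 1) + ((i.val + 1) - tof n w (i.val + 1)) := by
      rw [vof, if_neg (Nat.succ_ne_zero i.val)]
      simp only [Nat.add_sub_cancel]
    cases hw : w i
    · -- bit false : not less
      apply decide_eq_false
      rw [Fin.lt_def, h0, h1]
      rw [hw] at hWi
      rw [hv, if_neg (by simp [hWi])]
      rw [if_neg (by simp [hWi])] at hsucc
      omega
    · apply decide_eq_true
      rw [Fin.lt_def, h0, h1]
      rw [hw] at hWi
      rw [hv, if_pos hWi]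
      rw [if_pos hWi] at hsucc
      omega

end Construction

lemma card_valid [NeZero n] :
    Nat.card {r : Fin n ≃ Fin n // Valid r} = 2 ^ (n - 1) := by
  have hbij : Function.Bijective
      (fun p : {r : Fin n ≃ Fin n // Valid r} => bits p.1) := by
    constructor
    · intro p q h
      exact Subtype.ext (bits_det p.2 q.2 h)
    · intro w
      obtain ⟨r, hr, hb⟩ := bits_surjective w
      exact ⟨⟨r, hr⟩, hb⟩
  rw [Nat.card_eq_of_bijective _ hbij]
  simp [Nat.card_eq_fintype_card]

end CilomAux

/-- For every `n ≥ 1` there are exactly `2^(n-1)` commutative idempotent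
linearly ordered monoids with `n` elements, up to isomorphism. -/
theorem stmt_11 :
    ∀ n : ℕ, n ≥ 1 → Nat.card (Quot (CILOM.Iso (n := n))) = 2 ^ (n - 1) := by
  intro n hn
  haveI : NeZero n := ⟨by omega⟩
  rw [CilomAux.card_quot, CilomAux.card_valid]
end

section
/- There is no linearly ordered monoid E with identity e containing elements b, t, t* such that b < e < t, b < e < t*, t·b = t, b·t = b, t*·b = b, and b·t* = t*. Dually, there is no linearly ordered monoid E containing elements b, b*, t such that b < e < t, b* < e < t, t·b = t, b·t = b, b*·t = t, and t·b* = b*. (Equivalently, the spans ⟨C₂ ↪ G₃, C₂ ↪ D₃⟩ and ⟨C₂^∂ ↪ G₃, C₂^∂ ↪ D₃⟩ have no amalgam in the class of linearly ordered monoids.) -/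
universe u

/-- The spans `⟨C₂ ↪ G₃, C₂ ↪ D₃⟩` and `⟨C₂^∂ ↪ G₃, C₂^∂ ↪ D₃⟩` have no
amalgam among linearly ordered monoids: there is no linearly ordered monoid
containing elements `b < 1 < t, tₛ` with `t*b = t`, `b*t = b`, `tₛ*b = b`,
`b*tₛ = tₛ`, and dually. -/
theorem stmt_12 :
    (∀ (E : Type u) [Monoid E] [LinearOrder E],
      (∀ a b c d : E, a ≤ b → c * a * d ≤ c * b * d) →
      ¬ ∃ b t ts : E, b < 1 ∧ (1 : E) < t ∧ (1 : E) < ts ∧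
        t * b = t ∧ b * t = b ∧ ts * b = b ∧ b * ts = ts) ∧
    (∀ (E : Type u) [Monoid E] [LinearOrder E],
      (∀ a b c d : E, a ≤ b → c * a * d ≤ c * b * d) →
      ¬ ∃ b bs t : E, b < 1 ∧ bs < 1 ∧ (1 : E) < t ∧
        t * b = t ∧ b * t = b ∧ bs * t = t ∧ t * bs = bs) := by
  constructor
  · intro E _ _ hmono ⟨b, t, ts, hb, ht, hts, htb, hbt, htsb, hbts⟩
    rcases le_total t ts with h | h
    · -- t = t*b ≤ ts*b = b < 1 < t
      have : 1 * t * b ≤ 1 * ts * b := hmono t ts 1 b h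
      simp only [one_mul] at this
      rw [htb, htsb] at this
      exact absurd (this.trans hb.le) (not_le.mpr ht)
    · -- ts = b*ts ≥? no: ts ≤ t → b*ts ≤ b*t = b
      have : b * ts * 1 ≤ b * t * 1 := hmono ts t b 1 h
      simp only [mul_one] at this
      rw [hbts, hbt] at this
      exact absurd (this.trans hb.le) (not_le.mpr hts)
  · intro E _ _ hmono ⟨b, bs, t, hb, hbs, ht, htb, hbt, hbst, htbs⟩
    rcases le_total b bs with h | h
    · have : t * b * 1 ≤ t * bs * 1 := hmono b bs t 1 h
      simp only [mul_one] at this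
      rw [htb, htbs] at this
      exact absurd (this.trans hbs.le) (not_le.mpr ht)
    · have : 1 * bs * t ≤ 1 * b * t := hmono bs b 1 t h
      simp only [one_mul] at this
      rw [hbst, hbt] at this
      exact absurd (this.trans hb.le) (not_le.mpr ht)
end

section
/- There is no idempotent distributive ℓ-monoid E with identity e containing elements b, t, t* such that b < e, e ≤ t, e ≤ t*, t·b = t, b·t = b, t*·b = b, and b·t* = t*. (Equivalently, the span ⟨C₂ ↪ G₃, C₂ ↪ D₃⟩ has no amalgam in the variety of idempotent distributive ℓ-monoids.) -/
/-- In an idempotent distributive ℓ-monoid, `x ⊓ y ≤ y * x`. -/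
lemma aux_inf_le_mul {E : Type*} [Monoid E] [DistribLattice E]
    (hmeet : ∀ a b c d : E, a * (b ⊓ c) * d = a * b * d ⊓ a * c * d)
    (hidem : ∀ a : E, a * a = a) (x y : E) : x ⊓ y ≤ y * x := by
  have h1 : (x ⊓ y) * (x ⊓ y) = x * (x ⊓ y) ⊓ y * (x ⊓ y) := by
    have := hmeet 1 x y (x ⊓ y)
    simpa using this
  have h2 : x * (x ⊓ y) = x ⊓ x * y := by
    have := hmeet x x y 1
    simpa [hidem x] using this
  have h3 : y * (x ⊓ y) = y * x ⊓ y := by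
    have := hmeet y x y 1
    simpa [hidem y] using this
  have key : x ⊓ y = (x ⊓ x * y) ⊓ (y * x ⊓ y) := by
    rw [← h2, ← h3, ← h1, hidem]
  calc x ⊓ y = (x ⊓ x * y) ⊓ (y * x ⊓ y) := key
    _ ≤ y * x ⊓ y := inf_le_right
    _ ≤ y * x := inf_le_left

/-- The span `⟨C₂ ↪ G₃, C₂ ↪ D₃⟩` has no amalgam among idempotent
distributive ℓ-monoids: no idempotent distributive ℓ-monoid contains
elements `b, t, tₛ` with `b < 1`, `1 ≤ t`, `1 ≤ tₛ`, `t*b = t`, `b*t = b`,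
`tₛ*b = b`, `b*tₛ = tₛ`. -/
theorem stmt_13 {E : Type*} [Monoid E] [DistribLattice E]
    (hjoin : ∀ a b c d : E, a * (b ⊔ c) * d = a * b * d ⊔ a * c * d)
    (hmeet : ∀ a b c d : E, a * (b ⊓ c) * d = a * b * d ⊓ a * c * d)
    (hidem : ∀ a : E, a * a = a) :
    ¬ ∃ b t ts : E, b < 1 ∧ (1 : E) ≤ t ∧ (1 : E) ≤ ts ∧
      t * b = t ∧ b * t = b ∧ ts * b = b ∧ b * ts = ts := by
  rintro ⟨b, t, ts, hb, ht, hts, htb, hbt, htsb, hbts⟩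
  set s : E := t ⊔ ts with hs
  have hble : b ≤ t := le_trans hb.le ht
  have hblets : b ≤ ts := le_trans hb.le hts
  -- s * b = t
  have hsb : s * b = t := by
    have := hjoin 1 t ts b
    simp only [one_mul] at this
    rw [hs, this, htb, htsb, sup_eq_left.mpr hble]
  -- b * s = ts
  have hbs : b * s = ts := by
    have := hjoin b t ts 1
    simp only [mul_one] at this
    rw [hs, this, hbt, hbts, sup_eq_right.mpr hblets]
  -- t ⊓ ts ≤ b
  have hkey : t ⊓ ts ≤ b := by
    have h1 : t ⊓ ts ≤ (b * s) * (s * b) :=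
      hsb ▸ hbs ▸ aux_inf_le_mul hmeet hidem (s * b) (b * s)
    have h2 : (b * s) * (s * b) = b := by
      have : (b * s) * (s * b) = b * (s * s) * b := by
        simp [mul_assoc]
      rw [this, hidem s, hbs, htsb]
    rwa [h2] at h1
  have : (1 : E) ≤ b := le_trans (le_inf ht hts) hkey
  exact absurd this hb.not_ge
end

section
/- Let E be a distributive ℓ-monoid with identity e that is semilinear, i.e., satisfies z₁·x·z₂ ⊓ w₁·y·w₂ ≤ z₁·y·z₂ ⊔ w₁·x·w₂ for all x, y, z₁, z₂, w₁, w₂ ∈ E. Then E contains no elements b, t, t* with b·b = b, t·t = t, t*·t* = t*, b < e < t, b < e < t*, t·b = t, b·t = b, t*·b = b, and b·t* = t*. (Equivalently, the span ⟨C₂ ↪ G₃, C₂ ↪ D₃⟩ has no amalgam in the variety of semilinear distributive ℓ-monoids.) -/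
/-- The span `⟨C₂ ↪ G₃, C₂ ↪ D₃⟩` has no amalgam among semilinear
distributive ℓ-monoids: a semilinear distributive ℓ-monoid contains no
idempotent elements `b, t, tₛ` with `b < 1 < t`, `b < 1 < tₛ`, `t*b = t`,
`b*t = b`, `tₛ*b = b`, `b*tₛ = tₛ`. -/
theorem stmt_14 {E : Type*} [Monoid E] [DistribLattice E]
    (hjoin : ∀ a b c d : E, a * (b ⊔ c) * d = a * b * d ⊔ a * c * d)
    (hmeet : ∀ a b c d : E, a * (b ⊓ c) * d = a * b * d ⊓ a * c * d)
    (hsemilin : ∀ x y z₁ z₂ w₁ w₂ : E,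
      z₁ * x * z₂ ⊓ (w₁ * y * w₂) ≤ z₁ * y * z₂ ⊔ w₁ * x * w₂) :
    ¬ ∃ b t ts : E, b * b = b ∧ t * t = t ∧ ts * ts = ts ∧
      b < 1 ∧ (1 : E) < t ∧ (1 : E) < ts ∧
      t * b = t ∧ b * t = b ∧ ts * b = b ∧ b * ts = ts := by
  rintro ⟨b, t, ts, hbb, htt, htsts, hb, ht, hts, htb, hbt, htsb, hbts⟩
  have key := hsemilin t ts 1 b b 1
  simp only [one_mul, mul_one, htb, hbts, htsb, hbt, sup_idem] at key
  -- key : t ⊓ ts ≤ b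
  have h1 : (1 : E) ≤ b := le_trans (le_inf ht.le hts.le) key
  exact absurd h1 hb.not_ge
end

section
/- The class of commutative idempotent linearly ordered monoids has the strong amalgamation property: for all commutative idempotent linearly ordered monoids L, M, N and embeddings i₁ : L → M, i₂ : L → N, there exist a commutative idempotent linearly ordered monoid P and embeddings j₁ : M → P, j₂ : N → P such that j₁ ∘ i₁ = j₂ ∘ i₂ and the intersection of the ranges of j₁ and j₂ equals the range of j₁ ∘ i₁. -/
universe u

/-- A linearly ordered monoid is commutative if its multiplication is. -/
def LOM.Comm (A : LOM) : Prop := ∀ a b, A.mul a b = A.mul b a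

namespace AP

/-- The absorption relation: `a ⊑ b` iff `a * b = a`. -/
def Q (A : LOM.{u}) (a b : A.carrier) : Prop := A.mul a b = a

variable {A : LOM.{u}}

theorem mono_left (A : LOM.{u}) {a b : A.carrier} (c : A.carrier) (h : A.le a b) :
    A.le (A.mul c a) (A.mul c b) := by
  have := A.mono a b c A.one h
  rwa [A.mul_one, A.mul_one] at this

theorem mono_right (A : LOM.{u}) {a b : A.carrier} (d : A.carrier) (h : A.le a b) :
    A.le (A.mul a d) (A.mul b d) := by
  have := A.mono a b A.one d h
  rwa [A.one_mul, A.one_mul] at this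

theorem q_refl (hI : A.Idem) (a : A.carrier) : Q A a a := hI a

theorem q_trans {a b c : A.carrier} (hab : Q A a b) (hbc : Q A b c) : Q A a c := by
  unfold Q at *
  calc A.mul a c = A.mul (A.mul a b) c := by rw [hab]
    _ = A.mul a (A.mul b c) := A.mul_assoc a b c
    _ = A.mul a b := by rw [hbc]
    _ = a := hab

theorem q_antisymm (hC : A.Comm) {a b : A.carrier} (hab : Q A a b) (hba : Q A b a) :
    a = b := by
  unfold Q at *
  rw [← hab, hC a b, hba]

theorem mul_eq_left_of_le (hI : A.Idem) {a b : A.carrier} (hab : A.le a b)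
    (hb : A.le b A.one) : A.mul a b = a := by
  apply A.le_antisymm
  · have := mono_left A a hb
    rwa [A.mul_one] at this
  · have := mono_left A a hab
    rwa [hI a] at this

theorem mul_eq_right_of_le (hI : A.Idem) {a b : A.carrier} (hab : A.le a b)
    (ha : A.le A.one a) : A.mul a b = b := by
  apply A.le_antisymm
  · have := mono_right A b hab
    rwa [hI b] at this
  · have := mono_right A b ha
    rwa [A.one_mul] at this

theorem mixed_cases (hI : A.Idem) (hC : A.Comm) {a b : A.carrier}
    (ha : A.le a A.one) (hb : A.le A.one b) :
    A.mul a b = a ∨ A.mul a b = b := by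
  set c := A.mul a b with hc
  have hca : A.mul c a = c := by
    calc A.mul (A.mul a b) a = A.mul (A.mul b a) a := by rw [hC a b]
      _ = A.mul b (A.mul a a) := A.mul_assoc b a a
      _ = A.mul b a := by rw [hI a]
      _ = A.mul a b := hC b a
  have hcb : A.mul c b = c := by
    calc A.mul (A.mul a b) b = A.mul a (A.mul b b) := A.mul_assoc a b b
      _ = A.mul a b := by rw [hI b]
  have hab : A.le a b := A.le_trans _ _ _ ha hb
  have hac : A.le a c := by
    have := mono_left A a hab
    rwa [hI a] at this
  have hcb' : A.le c b := by
    have := mono_right A b ha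
    rwa [A.one_mul] at this
  rcases A.le_total c A.one with h1 | h1
  · left
    have h2 : A.mul a c = a := mul_eq_left_of_le hI hac h1
    have h3 : A.mul a c = c := by rw [hC a c]; exact hca
    exact h3.symm.trans h2
  · right
    have h2 : A.mul c b = b := mul_eq_right_of_le hI hcb' h1
    exact hcb.symm.trans h2

theorem q_total (hI : A.Idem) (hC : A.Comm) (a b : A.carrier) :
    Q A a b ∨ Q A b a := by
  rcases A.le_total a A.one with ha | ha <;> rcases A.le_total b A.one with hb | hb
  · rcases A.le_total a b with h | h
    · exact Or.inl (mul_eq_left_of_le hI h hb)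
    · exact Or.inr (mul_eq_left_of_le hI h ha)
  · rcases mixed_cases hI hC ha hb with h | h
    · exact Or.inl h
    · exact Or.inr (by unfold Q; rw [hC b a]; exact h)
  · rcases mixed_cases hI hC hb ha with h | h
    · exact Or.inr h
    · exact Or.inl (by unfold Q; rw [hC a b]; exact h)
  · rcases A.le_total a b with h | h
    · exact Or.inr (by unfold Q; rw [hC b a]; exact mul_eq_right_of_le hI h ha)
    · exact Or.inl (by unfold Q; rw [hC a b]; exact mul_eq_right_of_le hI h hb)

theorem le_of_q_neg {a b : A.carrier} (ha : A.le a A.one) (h : Q A a b) :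
    A.le a b := by
  have := mono_right A b ha
  rw [A.one_mul] at this
  rw [Q] at h
  rw [← h]
  exact this

theorem le_of_q_pos {a b : A.carrier} (h1a : A.le A.one a) (h : Q A a b) :
    A.le b a := by
  have := mono_right A b h1a
  rw [A.one_mul] at this
  rw [Q] at h
  rw [← h]
  exact this

theorem q_of_le_pos (hI : A.Idem) (hC : A.Comm) {a b : A.carrier}
    (hba : A.le b a) (h1b : A.le A.one b) : Q A a b := by
  unfold Q
  rw [hC a b]
  exact mul_eq_right_of_le hI hba h1b


section Generic

variable {T : Type u} (q : T → T → Prop) (pos : T → Prop) (e : T)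

open Classical in
/-- Multiplication given by selecting the `q`-smaller element. -/
noncomputable def sel (x y : T) : T := if q x y then x else y

def gle (x y : T) : Prop :=
  (¬ pos x ∧ ¬ pos y ∧ q x y) ∨ (pos x ∧ pos y ∧ q y x) ∨ (¬ pos x ∧ pos y)

variable {q} {pos} {e}

theorem sel_of_q {x y : T} (h : q x y) : sel q x y = x := if_pos h

theorem sel_of_not {x y : T} (h : ¬ q x y) : sel q x y = y := if_neg h

variable (hrefl : ∀ x, q x x) (htrans : ∀ x y z, q x y → q y z → q x z)
  (hanti : ∀ x y, q x y → q y x → x = y) (htot : ∀ x y, q x y ∨ q y x)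
  (htop : ∀ x, q x e) (hpe : pos e)

include hrefl in
theorem sel_idem (x : T) : sel q x x = x := sel_of_q (hrefl x)

include hanti htot in
theorem sel_comm (x y : T) : sel q x y = sel q y x := by
  by_cases h1 : q x y <;> by_cases h2 : q y x
  · rw [sel_of_q h1, sel_of_q h2]; exact hanti x y h1 h2
  · rw [sel_of_q h1, sel_of_not h2]
  · rw [sel_of_not h1, sel_of_q h2]
  · rcases htot x y with h | h
    · exact absurd h h1
    · exact absurd h h2

include htrans hanti htot in
theorem sel_assoc (x y z : T) : sel q (sel q x y) z = sel q x (sel q y z) := by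
  by_cases h1 : q x y <;> by_cases h2 : q y z
  · rw [sel_of_q h1, sel_of_q h2, sel_of_q (htrans _ _ _ h1 h2), sel_of_q h1]
  · rw [sel_of_q h1, sel_of_not h2]
  · rw [sel_of_not h1, sel_of_q h2]
    exact (sel_of_not h1).symm
  · rw [sel_of_not h1, sel_of_not h2]
    have hyx : q y x := (htot x y).resolve_left h1
    have hzy : q z y := (htot y z).resolve_left h2
    by_cases h3 : q x z
    · rw [sel_of_q h3]
      exact (hanti x z h3 (htrans _ _ _ hzy hyx)).symm
    · rw [sel_of_not h3]

include htop in
theorem sel_one_right (x : T) : sel q x e = x := sel_of_q (htop x)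

include hanti htop in
theorem sel_one_left (x : T) : sel q e x = x := by
  by_cases h : q e x
  · rw [sel_of_q h]; exact hanti e x h (htop x)
  · exact sel_of_not h

include hrefl in
theorem gle_refl (x : T) : gle q pos x x := by
  by_cases h : pos x
  · exact Or.inr (Or.inl ⟨h, h, hrefl x⟩)
  · exact Or.inl ⟨h, h, hrefl x⟩

include htrans in
theorem gle_trans (x y z : T) (hxy : gle q pos x y) (hyz : gle q pos y z) :
    gle q pos x z := by
  rcases hxy with ⟨nx, ny, h1⟩ | ⟨px, py, h1⟩ | ⟨nx, py⟩ <;>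
    rcases hyz with ⟨ny', nz, h2⟩ | ⟨py', pz, h2⟩ | ⟨ny', pz⟩
  · exact Or.inl ⟨nx, nz, htrans _ _ _ h1 h2⟩
  · exact absurd py' ny
  · exact Or.inr (Or.inr ⟨nx, pz⟩)
  · exact absurd py ny'
  · exact Or.inr (Or.inl ⟨px, pz, htrans _ _ _ h2 h1⟩)
  · exact absurd py ny'
  · exact absurd py ny'
  · exact Or.inr (Or.inr ⟨nx, pz⟩)
  · exact absurd py ny'

include hanti in
theorem gle_antisymm (x y : T) (hxy : gle q pos x y) (hyx : gle q pos y x) :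
    x = y := by
  rcases hxy with ⟨nx, ny, h1⟩ | ⟨px, py, h1⟩ | ⟨nx, py⟩ <;>
    rcases hyx with ⟨ny', nx', h2⟩ | ⟨py', px', h2⟩ | ⟨ny', px'⟩
  · exact hanti x y h1 h2
  · exact absurd px' nx
  · exact absurd px' nx
  · exact absurd py ny'
  · exact hanti x y h2 h1
  · exact absurd py ny'
  · exact absurd py ny'
  · exact absurd px' nx
  · exact absurd py ny'

include htot in
theorem gle_total (x y : T) : gle q pos x y ∨ gle q pos y x := by
  by_cases px : pos x <;> by_cases py : pos y
  · rcases htot x y with h | h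
    · exact Or.inr (Or.inr (Or.inl ⟨py, px, h⟩))
    · exact Or.inl (Or.inr (Or.inl ⟨px, py, h⟩))
  · exact Or.inr (Or.inr (Or.inr ⟨py, px⟩))
  · exact Or.inl (Or.inr (Or.inr ⟨px, py⟩))
  · rcases htot x y with h | h
    · exact Or.inl (Or.inl ⟨px, py, h⟩)
    · exact Or.inr (Or.inl ⟨py, px, h⟩)

include hrefl htrans htot in
theorem gle_mono1 (a b c : T) (hab : gle q pos a b) :
    gle q pos (sel q c a) (sel q c b) := by
  have R := gle_refl (q := q) (pos := pos) hrefl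
  rcases hab with ⟨na, nb, h1⟩ | ⟨pa, pb, h1⟩ | ⟨na, pb⟩ <;>
    by_cases hca : q c a <;> by_cases hcb : q c b
  -- case neg-neg
  · rw [sel_of_q hca, sel_of_q hcb]; exact R c
  · exact absurd (htrans _ _ _ hca h1) hcb
  · rw [sel_of_not hca, sel_of_q hcb]
    have hac : q a c := (htot c a).resolve_left hca
    by_cases pc : pos c
    · exact Or.inr (Or.inr ⟨na, pc⟩)
    · exact Or.inl ⟨na, pc, hac⟩
  · rw [sel_of_not hca, sel_of_not hcb]; exact Or.inl ⟨na, nb, h1⟩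
  -- case pos-pos (q b a)
  · rw [sel_of_q hca, sel_of_q hcb]; exact R c
  · rw [sel_of_q hca, sel_of_not hcb]
    have hbc : q b c := (htot c b).resolve_left hcb
    by_cases pc : pos c
    · exact Or.inr (Or.inl ⟨pc, pb, hbc⟩)
    · exact Or.inr (Or.inr ⟨pc, pb⟩)
  · exact absurd (htrans _ _ _ hcb h1) hca
  · rw [sel_of_not hca, sel_of_not hcb]; exact Or.inr (Or.inl ⟨pa, pb, h1⟩)
  -- case neg-pos
  · rw [sel_of_q hca, sel_of_q hcb]; exact R c
  · rw [sel_of_q hca, sel_of_not hcb]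
    have hbc : q b c := (htot c b).resolve_left hcb
    by_cases pc : pos c
    · exact Or.inr (Or.inl ⟨pc, pb, hbc⟩)
    · exact Or.inr (Or.inr ⟨pc, pb⟩)
  · rw [sel_of_not hca, sel_of_q hcb]
    have hac : q a c := (htot c a).resolve_left hca
    by_cases pc : pos c
    · exact Or.inr (Or.inr ⟨na, pc⟩)
    · exact Or.inl ⟨na, pc, hac⟩
  · rw [sel_of_not hca, sel_of_not hcb]; exact Or.inr (Or.inr ⟨na, pb⟩)

end Generic

/-- The linearly ordered monoid built from a linear "absorption" order `q`,
a positivity predicate, and a `q`-top element `e` with `pos e`. -/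
noncomputable def glom (T : Type u) (q : T → T → Prop) (pos : T → Prop) (e : T)
    (hrefl : ∀ x, q x x) (htrans : ∀ x y z, q x y → q y z → q x z)
    (hanti : ∀ x y, q x y → q y x → x = y) (htot : ∀ x y, q x y ∨ q y x)
    (htop : ∀ x, q x e) (hpe : pos e) : LOM.{u} where
  carrier := T
  mul := sel q
  one := e
  le := gle q pos
  mul_assoc := sel_assoc htrans hanti htot
  one_mul := sel_one_left hanti htop
  mul_one := sel_one_right htop
  le_refl := gle_refl hrefl
  le_trans := gle_trans htrans
  le_antisymm := gle_antisymm hanti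
  le_total := gle_total htot
  mono := by
    intro a b c d h
    have h1 := gle_mono1 hrefl htrans htot a b c h
    have h2 := gle_mono1 hrefl htrans htot _ _ d h1
    rwa [sel_comm hanti htot d (sel q c a), sel_comm hanti htot d (sel q c b)] at h2


section Emb

variable {A B : LOM.{u}} {f : A.carrier → B.carrier}

theorem emb_q (hf : LOM.IsEmb A B f) {a b : A.carrier} (h : Q A a b) :
    Q B (f a) (f b) := by
  unfold Q at *
  rw [← hf.1.1 a b, h]

theorem emb_q_rev (hAI : A.Idem) (hAC : A.Comm) (hBC : B.Comm)
    (hf : LOM.IsEmb A B f) {a b : A.carrier} (h : Q B (f a) (f b)) : Q A a b := by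
  rcases q_total hAI hAC a b with h' | h'
  · exact h'
  · have := emb_q hf h'
    have heq : a = b := hf.2 (q_antisymm hBC h this)
    exact heq ▸ q_refl hAI a
theorem emb_le_rev (hf : LOM.IsEmb A B f) {a b : A.carrier}
    (h : B.le (f a) (f b)) : A.le a b := by
  rcases A.le_total a b with h' | h'
  · exact h'
  · have := hf.1.2.2 b a h'
    have heq : a = b := hf.2 (B.le_antisymm _ _ h this)
    exact heq ▸ A.le_refl a

theorem emb_pos_iff (hf : LOM.IsEmb A B f) (a : A.carrier) :
    A.le A.one a ↔ B.le B.one (f a) := by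
  constructor
  · intro h
    have := hf.1.2.2 _ _ h
    rwa [hf.1.2.1] at this
  · intro h
    rw [← hf.1.2.1] at h
    exact emb_le_rev hf h

end Emb

section Hom

variable {A : LOM.{u}} {T : Type u} {q : T → T → Prop} {pos : T → Prop}
  {g : A.carrier → T}

theorem sel_hom (hI : A.Idem) (hC : A.Comm)
    (hanti : ∀ x y, q x y → q y x → x = y)
    (hg : ∀ a b, Q A a b → q (g a) (g b)) (a b : A.carrier) :
    g (A.mul a b) = sel q (g a) (g b) := by
  by_cases h : Q A a b
  · rw [sel_of_q (hg a b h)]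
    unfold Q at h
    rw [h]
  · have hba : Q A b a := (q_total hI hC a b).resolve_left h
    have hmul : A.mul a b = b := by rw [hC a b]; exact hba
    rw [hmul]
    by_cases h2 : q (g a) (g b)
    · rw [sel_of_q h2]
      exact (hanti _ _ h2 (hg b a hba)).symm
    · rw [sel_of_not h2]

theorem gle_hom (hI : A.Idem) (hC : A.Comm)
    (hg : ∀ a b, Q A a b → q (g a) (g b))
    (hpos : ∀ a, A.le A.one a ↔ pos (g a)) (a b : A.carrier) (hab : A.le a b) :
    gle q pos (g a) (g b) := by
  by_cases pa : A.le A.one a <;> by_cases pb : A.le A.one b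
  · exact Or.inr (Or.inl ⟨(hpos a).1 pa, (hpos b).1 pb,
      hg b a (q_of_le_pos hI hC hab pa)⟩)
  · exact absurd (A.le_trans _ _ _ pa hab) pb
  · exact Or.inr (Or.inr ⟨fun h => pa ((hpos a).2 h), (hpos b).1 pb⟩)
  · have hb1 : A.le b A.one := (A.le_total b A.one).resolve_right pb
    exact Or.inl ⟨fun h => pa ((hpos a).2 h), fun h => pb ((hpos b).2 h),
      hg a b (mul_eq_left_of_le hI hab hb1)⟩

end Hom

section Amalgam

variable (M N : LOM.{u}) {L : LOM.{u}}

/-- Carrier of the amalgam. -/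
def PC (i₂ : L.carrier → N.carrier) : Type u :=
  M.carrier ⊕ {n : N.carrier // ¬ ∃ l, i₂ l = n}

/-- The amalgamated absorption order. -/
def QP (i₁ : L.carrier → M.carrier) (i₂ : L.carrier → N.carrier) :
    PC M N i₂ → PC M N i₂ → Prop
  | Sum.inl m, Sum.inl m' => Q M m m'
  | Sum.inl m, Sum.inr n => ∀ l, Q M (i₁ l) m → Q N (i₂ l) n.1
  | Sum.inr n, Sum.inl m => ∃ l, Q M (i₁ l) m ∧ ¬ Q N (i₂ l) n.1
  | Sum.inr n, Sum.inr n' => Q N n.1 n'.1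

/-- The positivity predicate on the amalgam. -/
def Ppos (i₂ : L.carrier → N.carrier) : PC M N i₂ → Prop
  | Sum.inl m => M.le M.one m
  | Sum.inr n => N.le N.one n.1

end Amalgam


section Jtwo

variable (M N : LOM.{u}) {L : LOM.{u}} (i₁ : L.carrier → M.carrier)
  (i₂ : L.carrier → N.carrier)

open Classical in
/-- The second embedding into the amalgam. -/
noncomputable def jtwo (n : N.carrier) : PC M N i₂ :=
  if h : ∃ l, i₂ l = n then Sum.inl (i₁ h.choose) else Sum.inr ⟨n, h⟩

theorem jtwo_mem (hinj : Function.Injective i₂) (l : L.carrier) :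
    jtwo M N i₁ i₂ (i₂ l) = Sum.inl (i₁ l) := by
  have h : ∃ l', i₂ l' = i₂ l := ⟨l, rfl⟩
  rw [jtwo]; exact (dif_pos h).trans (congrArg _ (congrArg _ (hinj h.choose_spec)))

theorem jtwo_not {n : N.carrier} (h : ¬ ∃ l, i₂ l = n) :
    jtwo M N i₁ i₂ n = Sum.inr ⟨n, h⟩ := dif_neg h

end Jtwo

end AP

/-- The class of commutative idempotent linearly ordered monoids has the
strong amalgamation property. -/
theorem stmt_15 (L M N : LOM.{u})
    (hL : L.Idem ∧ L.Comm) (hM : M.Idem ∧ M.Comm) (hN : N.Idem ∧ N.Comm)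
    (i₁ : L.carrier → M.carrier) (i₂ : L.carrier → N.carrier)
    (hi₁ : LOM.IsEmb L M i₁) (hi₂ : LOM.IsEmb L N i₂) :
    ∃ (P : LOM.{u}) (j₁ : M.carrier → P.carrier) (j₂ : N.carrier → P.carrier),
      P.Idem ∧ P.Comm ∧ LOM.IsEmb M P j₁ ∧ LOM.IsEmb N P j₂ ∧
      j₁ ∘ i₁ = j₂ ∘ i₂ ∧
      Set.range j₁ ∩ Set.range j₂ = Set.range (j₁ ∘ i₁) := by
  classical
  open AP in
  -- the absorption order on the amalgam
  have qrefl : ∀ x, QP M N i₁ i₂ x x := by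
    rintro (m | n)
    · exact q_refl hM.1 m
    · exact q_refl hN.1 n.1
  have qtrans : ∀ x y z, QP M N i₁ i₂ x y → QP M N i₁ i₂ y z →
      QP M N i₁ i₂ x z := by
    rintro (m | n) (m' | n') (m'' | n'') h1 h2
    · exact q_trans h1 h2
    · exact fun l hl => h2 l (q_trans hl h1)
    · obtain ⟨l, hlm, hln⟩ := h2
      by_contra hc
      exact hln (h1 l (q_trans hlm ((q_total hM.1 hM.2 m m'').resolve_left hc)))
    · exact fun l hl => q_trans (h1 l hl) h2
    · obtain ⟨l, h3, h4⟩ := h1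
      exact ⟨l, q_trans h3 h2, h4⟩
    · obtain ⟨l, h3, h4⟩ := h1
      exact q_trans ((q_total hN.1 hN.2 n.1 (i₂ l)).resolve_right h4) (h2 l h3)
    · obtain ⟨l, h3, h4⟩ := h2
      exact ⟨l, h3, fun hc => h4 (q_trans hc h1)⟩
    · exact q_trans h1 h2
  have qanti : ∀ x y, QP M N i₁ i₂ x y → QP M N i₁ i₂ y x → x = y := by
    rintro (m | n) (m' | n') h1 h2
    · exact congrArg Sum.inl (q_antisymm hM.2 h1 h2)
    · obtain ⟨l, h3, h4⟩ := h2
      exact absurd (h1 l h3) h4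
    · obtain ⟨l, h3, h4⟩ := h1
      exact absurd (h2 l h3) h4
    · exact congrArg Sum.inr (Subtype.ext (q_antisymm hN.2 h1 h2))
  have qtot : ∀ x y, QP M N i₁ i₂ x y ∨ QP M N i₁ i₂ y x := by
    rintro (m | n) (m' | n')
    · exact q_total hM.1 hM.2 m m'
    · by_cases h : ∀ l, Q M (i₁ l) m → Q N (i₂ l) n'.1
      · exact Or.inl h
      · push_neg at h
        exact Or.inr h
    · by_cases h : ∀ l, Q M (i₁ l) m' → Q N (i₂ l) n.1
      · exact Or.inr h
      · push_neg at h
        exact Or.inl h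
    · exact q_total hN.1 hN.2 n.1 n'.1
  have qtop : ∀ x, QP M N i₁ i₂ x (Sum.inl M.one) := by
    rintro (m | n)
    · exact M.mul_one m
    · refine ⟨L.one, ?_, ?_⟩
      · show Q M (i₁ L.one) M.one
        rw [hi₁.1.2.1]
        exact M.mul_one M.one
      · show ¬ Q N (i₂ L.one) n.1
        rw [hi₂.1.2.1]
        intro hq
        unfold Q at hq
        rw [N.one_mul] at hq
        exact n.2 ⟨L.one, by rw [hi₂.1.2.1, hq]⟩
  have hpe : Ppos M N i₂ (Sum.inl M.one) := M.le_refl M.one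
  set P : LOM.{u} := glom (PC M N i₂) (QP M N i₁ i₂) (Ppos M N i₂)
    (Sum.inl M.one) qrefl qtrans qanti qtot qtop hpe with hP
  refine ⟨P, Sum.inl, jtwo M N i₁ i₂, ?_, ?_, ?_, ?_, ?_, ?_⟩
  · -- Idem
    exact fun x => sel_of_q (qrefl x)
  · -- Comm
    exact fun x y => sel_comm qanti qtot x y
  · -- IsEmb M P inl
    have hg : ∀ a b, Q M a b → QP M N i₁ i₂ (Sum.inl a) (Sum.inl b) :=
      fun a b h => h
    exact ⟨⟨fun a b => sel_hom hM.1 hM.2 qanti hg a b, rfl,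
      fun a b hab => gle_hom hM.1 hM.2 hg (fun a => Iff.rfl) a b hab⟩,
      Sum.inl_injective⟩
  · -- IsEmb N P jtwo
    have hg2 : ∀ a b, Q N a b → QP M N i₁ i₂ (jtwo M N i₁ i₂ a) (jtwo M N i₁ i₂ b) := by
      intro a b h
      by_cases ha : ∃ l, i₂ l = a <;> by_cases hb : ∃ l, i₂ l = b
      · obtain ⟨l, rfl⟩ := ha
        obtain ⟨l', rfl⟩ := hb
        rw [jtwo_mem M N i₁ i₂ hi₂.2, jtwo_mem M N i₁ i₂ hi₂.2]
        exact emb_q hi₁ (emb_q_rev hL.1 hL.2 hN.2 hi₂ h)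
      · obtain ⟨l, rfl⟩ := ha
        rw [jtwo_mem M N i₁ i₂ hi₂.2, jtwo_not M N i₁ i₂ hb]
        intro l'' hq
        exact q_trans (emb_q hi₂ (emb_q_rev hL.1 hL.2 hM.2 hi₁ hq)) h
      · obtain ⟨l', rfl⟩ := hb
        rw [jtwo_not M N i₁ i₂ ha, jtwo_mem M N i₁ i₂ hi₂.2]
        exact ⟨l', q_refl hM.1 _, fun hc => ha ⟨l', q_antisymm hN.2 hc h⟩⟩
      · rw [jtwo_not M N i₁ i₂ ha, jtwo_not M N i₁ i₂ hb]
        exact h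
    have hpos2 : ∀ a, N.le N.one a ↔ Ppos M N i₂ (jtwo M N i₁ i₂ a) := by
      intro a
      by_cases ha : ∃ l, i₂ l = a
      · obtain ⟨l, rfl⟩ := ha
        rw [jtwo_mem M N i₁ i₂ hi₂.2]
        exact (emb_pos_iff hi₂ l).symm.trans (emb_pos_iff hi₁ l)
      · rw [jtwo_not M N i₁ i₂ ha]
        exact Iff.rfl
    have hone2 : jtwo M N i₁ i₂ N.one = Sum.inl M.one := by
      rw [← hi₂.1.2.1, jtwo_mem M N i₁ i₂ hi₂.2, hi₁.1.2.1]
    have hinj2 : Function.Injective (jtwo M N i₁ i₂) := by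
      intro a b hab
      by_cases ha : ∃ l, i₂ l = a <;> by_cases hb : ∃ l, i₂ l = b
      · obtain ⟨l, rfl⟩ := ha
        obtain ⟨l', rfl⟩ := hb
        rw [jtwo_mem M N i₁ i₂ hi₂.2, jtwo_mem M N i₁ i₂ hi₂.2] at hab
        exact congrArg i₂ (hi₁.2 (Sum.inl.inj hab))
      · obtain ⟨l, rfl⟩ := ha
        rw [jtwo_mem M N i₁ i₂ hi₂.2, jtwo_not M N i₁ i₂ hb] at hab
        exact absurd hab (by simp)
      · obtain ⟨l', rfl⟩ := hb
        rw [jtwo_not M N i₁ i₂ ha, jtwo_mem M N i₁ i₂ hi₂.2] at hab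
        exact absurd hab (by simp)
      · rw [jtwo_not M N i₁ i₂ ha, jtwo_not M N i₁ i₂ hb] at hab
        exact congrArg Subtype.val (Sum.inr.inj hab)
    exact ⟨⟨fun a b => sel_hom hN.1 hN.2 qanti hg2 a b, hone2,
      fun a b hab => gle_hom hN.1 hN.2 hg2 hpos2 a b hab⟩, hinj2⟩
  · -- compatibility
    funext l
    exact (jtwo_mem M N i₁ i₂ hi₂.2 l).symm
  · -- strong amalgamation
    ext x
    simp only [Set.mem_inter_iff, Set.mem_range, Function.comp_apply]
    constructor
    · rintro ⟨⟨m, rfl⟩, ⟨n, hn⟩⟩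
      by_cases h : ∃ l, i₂ l = n
      · obtain ⟨l, rfl⟩ := h
        rw [jtwo_mem M N i₁ i₂ hi₂.2] at hn
        exact ⟨l, hn⟩
      · rw [jtwo_not M N i₁ i₂ h] at hn
        exact absurd hn (by simp)
    · rintro ⟨l, rfl⟩
      exact ⟨⟨i₁ l, rfl⟩, ⟨i₂ l, jtwo_mem M N i₁ i₂ hi₂.2 l⟩⟩
end

section
/- The class of idempotent linearly ordered monoids has the joint embedding property: for any two idempotent linearly ordered monoids L and M, there exist an idempotent linearly ordered monoid N and embeddings L → N and M → N. -/
universe u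

namespace JEP16

/-- In an idempotent LOM, a product is the identity only if both factors are. -/
theorem mul_eq_one {M : LOM.{u}} (hM : M.Idem) {x y : M.carrier}
    (h : M.mul x y = M.one) : x = M.one ∧ y = M.one := by
  have hy : y = M.one := by
    have h1 : M.mul (M.mul x y) y = M.mul M.one y := by rw [h]
    rw [M.mul_assoc, hM y, h, M.one_mul] at h1
    exact h1.symm
  rw [hy] at h
  exact ⟨(M.mul_one x).symm.trans h, hy⟩

theorem monoL (A : LOM.{u}) {a b : A.carrier} (h : A.le a b) (c : A.carrier) :
    A.le (A.mul c a) (A.mul c b) := by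
  have := A.mono a b c A.one h
  rwa [A.mul_one, A.mul_one] at this

theorem monoR (A : LOM.{u}) {a b : A.carrier} (h : A.le a b) (d : A.carrier) :
    A.le (A.mul a d) (A.mul b d) := by
  have := A.mono a b A.one d h
  rwa [A.one_mul, A.one_mul] at this

variable (L M : LOM.{u})

/-- Carrier of the amalgam: `L` together with the non-identity part of `M`. -/
abbrev Car : Type u := L.carrier ⊕ {x : M.carrier // x ≠ M.one}

open Classical in
/-- Multiplication on the amalgam: `M∖{e}` sits at the identity of `L` and is
absorbed by every non-identity element of `L`. -/
noncomputable def nmul (hM : M.Idem) : Car L M → Car L M → Car L M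
  | .inl a, .inl b => .inl (L.mul a b)
  | .inl a, .inr x => if a = L.one then .inr x else .inl a
  | .inr x, .inl a => if a = L.one then .inr x else .inl a
  | .inr x, .inr y => .inr ⟨M.mul x.1 y.1, fun h => x.2 (mul_eq_one hM h).1⟩

/-- Order on the amalgam: `M∖{e}` is inserted at the identity of `L`. -/
def nle : Car L M → Car L M → Prop
  | .inl a, .inl b => L.le a b
  | .inl a, .inr x => L.le a L.one ∧ (a = L.one → M.le M.one x.1)
  | .inr x, .inl a => L.le L.one a ∧ (a = L.one → M.le x.1 M.one)
  | .inr x, .inr y => M.le x.1 y.1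


variable {L M : LOM.{u}}

theorem nmul_assoc (hL : L.Idem) (hM : M.Idem) (u v w : Car L M) :
    nmul L M hM (nmul L M hM u v) w = nmul L M hM u (nmul L M hM v w) := by
  classical
  have key : ∀ a b : L.carrier, b ≠ L.one → L.mul a b ≠ L.one :=
    fun a b hb h => hb (mul_eq_one hL h).2
  have key' : ∀ a b : L.carrier, a ≠ L.one → L.mul a b ≠ L.one :=
    fun a b ha h => ha (mul_eq_one hL h).1
  rcases u with a | x <;> rcases v with b | y <;> rcases w with c | z
  · simp [nmul, L.mul_assoc]
  · by_cases hb : b = L.one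
    · subst hb; simp [nmul, L.mul_one]
    · simp [nmul, hb, key a b hb]
  · by_cases ha : a = L.one
    · subst ha; by_cases hc : c = L.one <;> simp [nmul, hc, L.one_mul]
    · by_cases hc : c = L.one
      · subst hc; simp [nmul, ha, L.mul_one]
      · simp [nmul, ha, hc]
  · by_cases ha : a = L.one
    · subst ha; simp [nmul]
    · simp [nmul, ha]
  · by_cases hb : b = L.one
    · subst hb; simp [nmul, L.one_mul]
    · by_cases hc : c = L.one
      · subst hc; simp [nmul, hb, L.mul_one]
      · simp [nmul, hb, hc, key' b c hb]
  · by_cases hb : b = L.one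
    · subst hb; simp [nmul]
    · simp [nmul, hb]
  · by_cases hc : c = L.one
    · subst hc; simp [nmul]
    · simp [nmul, hc]
  · simp [nmul, M.mul_assoc]


theorem nle_refl (u : Car L M) : nle L M u u := by
  rcases u with a | x
  · exact L.le_refl a
  · exact M.le_refl x.1

theorem nle_trans (u v w : Car L M) (h1 : nle L M u v) (h2 : nle L M v w) :
    nle L M u w := by
  rcases u with a | x <;> rcases v with b | y <;> rcases w with c | z <;>
    simp only [nle] at *
  · exact L.le_trans _ _ _ h1 h2
  · exact ⟨L.le_trans _ _ _ h1 h2.1,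
      fun ha => h2.2 (L.le_antisymm _ _ h2.1 (ha ▸ h1))⟩
  · exact L.le_trans _ _ _ h1.1 h2.1
  · exact ⟨h1.1, fun ha => M.le_trans _ _ _ (h1.2 ha) h2⟩
  · exact ⟨L.le_trans _ _ _ h1.1 h2,
      fun hc => h1.2 (L.le_antisymm _ _ (hc ▸ h2) h1.1)⟩
  · have hb : b = L.one := L.le_antisymm _ _ h2.1 h1.1
    exact M.le_trans _ _ _ (h1.2 hb) (h2.2 hb)
  · exact ⟨h2.1, fun hc => M.le_trans _ _ _ h1 (h2.2 hc)⟩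
  · exact M.le_trans _ _ _ h1 h2

theorem nle_antisymm (u v : Car L M) (h1 : nle L M u v) (h2 : nle L M v u) :
    u = v := by
  rcases u with a | x <;> rcases v with b | y <;> simp only [nle] at *
  · exact congrArg _ (L.le_antisymm _ _ h1 h2)
  · have ha : a = L.one := L.le_antisymm _ _ h1.1 h2.1
    exact absurd (M.le_antisymm _ _ (h2.2 ha) (h1.2 ha)) y.2
  · have hb : b = L.one := L.le_antisymm _ _ h2.1 h1.1
    exact absurd (M.le_antisymm _ _ (h2.2 hb) (h1.2 hb)).symm x.2
  · exact congrArg _ (Subtype.ext (M.le_antisymm _ _ h1 h2))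

theorem nle_total (u v : Car L M) : nle L M u v ∨ nle L M v u := by
  rcases u with a | x <;> rcases v with b | y <;> simp only [nle]
  · exact L.le_total a b
  · by_cases ha : a = L.one
    · subst ha
      rcases M.le_total M.one y.1 with h | h
      · exact Or.inl ⟨L.le_refl _, fun _ => h⟩
      · exact Or.inr ⟨L.le_refl _, fun _ => h⟩
    · rcases L.le_total a L.one with h | h
      · exact Or.inl ⟨h, fun h' => absurd h' ha⟩
      · exact Or.inr ⟨h, fun h' => absurd h' ha⟩
  · by_cases hb : b = L.one
    · subst hb
      rcases M.le_total x.1 M.one with h | h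
      · exact Or.inl ⟨L.le_refl _, fun _ => h⟩
      · exact Or.inr ⟨L.le_refl _, fun _ => h⟩
    · rcases L.le_total L.one b with h | h
      · exact Or.inl ⟨h, fun h' => absurd h' hb⟩
      · exact Or.inr ⟨h, fun h' => absurd h' hb⟩
  · exact M.le_total x.1 y.1

theorem nle_mul_left (hM : M.Idem) (C : Car L M) {A B : Car L M}
    (h : nle L M A B) : nle L M (nmul L M hM C A) (nmul L M hM C B) := by
  classical
  rcases C with c | z
  · by_cases hc : c = L.one
    · subst hc
      rcases A with a | x <;> rcases B with b | y <;>
        simpa [nmul, nle, L.one_mul] using h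
    · rcases A with a | x <;> rcases B with b | y <;>
        simp only [nmul, nle, if_neg hc] at *
      · exact monoL L h c
      · have := monoL L h.1 c; rwa [L.mul_one] at this
      · have := monoL L h.1 c; rwa [L.mul_one] at this
      · exact L.le_refl c
  · rcases A with a | x <;> rcases B with b | y
    · simp only [nle] at h
      by_cases ha : a = L.one
      · subst ha
        by_cases hb : b = L.one
        · subst hb; simp only [nmul, if_pos rfl]; exact M.le_refl z.1
        · simp only [nmul, if_pos rfl, if_neg hb, nle]
          exact ⟨h, fun h' => absurd h' hb⟩
      · by_cases hb : b = L.one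
        · subst hb
          simp only [nmul, if_pos rfl, if_neg ha, nle]
          exact ⟨h, fun h' => absurd h' ha⟩
        · simp only [nmul, if_neg ha, if_neg hb, nle]
          exact h
    · simp only [nle] at h
      by_cases ha : a = L.one
      · simp only [nmul, nle, ha, if_pos]
        have := monoL M (h.2 ha) z.1
        rwa [M.mul_one] at this
      · simp only [nmul, nle, if_neg ha]
        exact ⟨h.1, fun h' => absurd h' ha⟩
    · simp only [nle] at h
      by_cases hb : b = L.one
      · simp only [nmul, nle, hb, if_pos]
        have := monoL M (h.2 hb) z.1
        rwa [M.mul_one] at this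
      · simp only [nmul, nle, if_neg hb]
        exact ⟨h.1, fun h' => absurd h' hb⟩
    · simp only [nmul, nle] at *
      exact monoL M h z.1

theorem nle_mul_right (hM : M.Idem) (D : Car L M) {A B : Car L M}
    (h : nle L M A B) : nle L M (nmul L M hM A D) (nmul L M hM B D) := by
  classical
  rcases D with d | w
  · by_cases hd : d = L.one
    · subst hd
      rcases A with a | x <;> rcases B with b | y <;>
        simpa [nmul, nle, L.mul_one] using h
    · rcases A with a | x <;> rcases B with b | y <;>
        simp only [nmul, nle, if_neg hd] at *
      · exact monoR L h d
      · have := monoR L h.1 d; rwa [L.one_mul] at this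
      · have := monoR L h.1 d; rwa [L.one_mul] at this
      · exact L.le_refl d
  · rcases A with a | x <;> rcases B with b | y
    · simp only [nle] at h
      by_cases ha : a = L.one
      · subst ha
        by_cases hb : b = L.one
        · subst hb; simp only [nmul, if_pos rfl]; exact M.le_refl w.1
        · simp only [nmul, if_pos rfl, if_neg hb, nle]
          exact ⟨h, fun h' => absurd h' hb⟩
      · by_cases hb : b = L.one
        · subst hb
          simp only [nmul, if_pos rfl, if_neg ha, nle]
          exact ⟨h, fun h' => absurd h' ha⟩
        · simp only [nmul, if_neg ha, if_neg hb, nle]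
          exact h
    · simp only [nle] at h
      by_cases ha : a = L.one
      · simp only [nmul, nle, ha, if_pos]
        have := monoR M (h.2 ha) w.1
        rwa [M.one_mul] at this
      · simp only [nmul, nle, if_neg ha]
        exact ⟨h.1, fun h' => absurd h' ha⟩
    · simp only [nle] at h
      by_cases hb : b = L.one
      · simp only [nmul, nle, hb, if_pos]
        have := monoR M (h.2 hb) w.1
        rwa [M.one_mul] at this
      · simp only [nmul, nle, if_neg hb]
        exact ⟨h.1, fun h' => absurd h' hb⟩
    · simp only [nmul, nle] at *
      exact monoR M h w.1

end JEP16

/-- The class of idempotent linearly ordered monoids has the joint embedding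
property. -/
theorem stmt_16 (L M : LOM.{u}) (hL : L.Idem) (hM : M.Idem) :
    ∃ (N : LOM.{u}) (f : L.carrier → N.carrier) (g : M.carrier → N.carrier),
      N.Idem ∧ LOM.IsEmb L N f ∧ LOM.IsEmb M N g := by
  classical
  have none_mul : ∀ u : JEP16.Car L M, JEP16.nmul L M hM (.inl L.one) u = u := by
    rintro (a | x)
    · simp [JEP16.nmul, L.one_mul]
    · simp [JEP16.nmul]
  have nmul_one : ∀ u : JEP16.Car L M, JEP16.nmul L M hM u (.inl L.one) = u := by
    rintro (a | x)
    · simp [JEP16.nmul, L.mul_one]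
    · simp [JEP16.nmul]
  refine ⟨{ carrier := JEP16.Car L M, mul := JEP16.nmul L M hM, one := .inl L.one,
            le := JEP16.nle L M,
            mul_assoc := JEP16.nmul_assoc hL hM,
            one_mul := none_mul, mul_one := nmul_one,
            le_refl := JEP16.nle_refl,
            le_trans := JEP16.nle_trans,
            le_antisymm := JEP16.nle_antisymm,
            le_total := JEP16.nle_total,
            mono := fun A B C D h =>
              JEP16.nle_mul_right hM D (JEP16.nle_mul_left hM C h) },
          Sum.inl,
          (fun x => if hx : x = M.one then .inl L.one else .inr ⟨x, hx⟩),
          ?_, ?_, ?_⟩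
  · rintro (a | x)
    · exact congrArg Sum.inl (hL a)
    · exact congrArg Sum.inr (Subtype.ext (hM x.1))
  · exact ⟨⟨fun a b => rfl, rfl, fun a b h => h⟩, fun a b h => Sum.inl.inj h⟩
  · refine ⟨⟨?_, dif_pos rfl, ?_⟩, ?_⟩
    · intro x y
      dsimp only
      by_cases hx : x = M.one
      · subst hx
        rw [M.one_mul, dif_pos rfl, none_mul]
      · by_cases hy : y = M.one
        · subst hy
          rw [M.mul_one, dif_pos rfl, nmul_one]
        · have hxy : M.mul x y ≠ M.one := fun h => hx (JEP16.mul_eq_one hM h).1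
          rw [dif_neg hx, dif_neg hy, dif_neg hxy]
          rfl
    · intro x y h
      dsimp only
      by_cases hx : x = M.one <;> by_cases hy : y = M.one
      · subst hx hy; rw [dif_pos rfl]; exact L.le_refl _
      · subst hx
        rw [dif_pos rfl, dif_neg hy]
        exact ⟨L.le_refl _, fun _ => h⟩
      · subst hy
        rw [dif_pos rfl, dif_neg hx]
        exact ⟨L.le_refl _, fun _ => h⟩
      · rw [dif_neg hx, dif_neg hy]; exact h
    · intro x y h
      dsimp only at h
      by_cases hx : x = M.one <;> by_cases hy : y = M.one
      · rw [hx, hy]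
      · rw [dif_pos hx, dif_neg hy] at h; exact absurd h (by simp)
      · rw [dif_neg hx, dif_pos hy] at h; exact absurd h (by simp)
      · rw [dif_neg hx, dif_neg hy] at h
        exact congrArg Subtype.val (Sum.inr.inj h)
end
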